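/- arXiv:1806.03728 — 6 statements merged into one kernel-verified Lean document; each statement's English description precedes it below -/
import Mathlib

section
/- Let $p>1$, $b>0$, and $f:[b,\infty)\to[0,\infty)$ measurable. Then $\int_b^\infty \left(\frac{1}{x}\int_b^x f(t)\,dt\right)^p dx \le \left(\frac{p}{p-1}\right)^p \int_b^\infty f(x)^p\,dx$. -/
open MeasureTheory Set
open scoped ENNReal

lemma hardyAux_lint_Ioc_rpow {c d e : ℝ} (hc : 0 < c) (hcd : c ≤ d) (he : -1 < e) :
    ∫⁻ t in Ioc c d, ENNReal.ofReal (t ^ e)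
      = ENNReal.ofReal ((d ^ (e + 1) - c ^ (e + 1)) / (e + 1)) := by
  have hint : IntegrableOn (fun t : ℝ => t ^ e) (Ioc c d) :=
    (intervalIntegrable_iff_integrableOn_Ioc_of_le hcd).mp
      (intervalIntegral.intervalIntegrable_rpow' he)
  have hnn : 0 ≤ᵐ[volume.restrict (Ioc c d)] fun t : ℝ => t ^ e := by
    filter_upwards [ae_restrict_mem measurableSet_Ioc] with t ht
    exact Real.rpow_nonneg (hc.trans ht.1).le e
  rw [← MeasureTheory.ofReal_integral_eq_lintegral_ofReal hint hnn]
  congr 1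
  rw [← intervalIntegral.integral_of_le hcd, integral_rpow (Or.inl he)]

lemma hardyAux_lint_Ioi_rpow {c e : ℝ} (hc : 0 < c) (he : e < -1) :
    ∫⁻ x in Ioi c, ENNReal.ofReal (x ^ e)
      = ENNReal.ofReal (c ^ (e + 1) / (-(e + 1))) := by
  have hint : IntegrableOn (fun x : ℝ => x ^ e) (Ioi c) :=
    integrableOn_Ioi_rpow_of_lt he hc
  have hnn : 0 ≤ᵐ[volume.restrict (Ioi c)] fun x : ℝ => x ^ e := by
    filter_upwards [ae_restrict_mem measurableSet_Ioi] with x hx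
    exact Real.rpow_nonneg (hc.trans hx).le e
  rw [← MeasureTheory.ofReal_integral_eq_lintegral_ofReal hint hnn]
  congr 1
  rw [integral_Ioi_rpow_of_lt he hc]
  rw [neg_div, div_neg]

lemma hardyAux_swap_lemma (b : ℝ) (φ ψ : ℝ → ℝ≥0∞) (hφ : Measurable φ) (hψ : Measurable ψ) :
    ∫⁻ x in Ioi b, φ x * ∫⁻ t in Ioc b x, ψ t
      = ∫⁻ t in Ioi b, ψ t * ∫⁻ x in Ici t, φ x := by
  set S : Set (ℝ × ℝ) := {z | z.2 ∈ Ioc b z.1} with hSdef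
  have hS : MeasurableSet S :=
    (measurableSet_lt measurable_const measurable_snd).inter
      (measurableSet_le measurable_snd measurable_fst)
  set F : ℝ × ℝ → ℝ≥0∞ := S.indicator (fun z => φ z.1 * ψ z.2) with hFdef
  have hF : Measurable F :=
    ((hφ.comp measurable_fst).mul (hψ.comp measurable_snd)).indicator hS
  have step1 : ∀ x : ℝ, φ x * ∫⁻ t in Ioc b x, ψ t = ∫⁻ t, F (x, t) := by
    intro x
    have h0 : ∀ t : ℝ, F (x, t) = (Ioc b x).indicator (fun t => φ x * ψ t) t := by
      intro t
      simp only [hFdef, hSdef, Set.indicator_apply, mem_setOf_eq]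
    simp_rw [h0]
    rw [lintegral_indicator measurableSet_Ioc, lintegral_const_mul _ hψ]
  have step3 : ∀ t : ℝ,
      (∫⁻ x in Ioi b, F (x, t))
        = (Ioi b).indicator (fun t => ψ t * ∫⁻ x in Ici t, φ x) t := by
    intro t
    by_cases ht : b < t
    · have h1 : ∀ x : ℝ, F (x, t) = (Ici t).indicator (fun x => φ x * ψ t) x := by
        intro x
        simp only [hFdef, hSdef, Set.indicator_apply, mem_setOf_eq, mem_Ioc, mem_Ici, ht,
          true_and]
      have hsub : Ici t ∩ Ioi b = Ici t :=
        inter_eq_left.mpr fun x hx => lt_of_lt_of_le ht hx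
      rw [Set.indicator_of_mem (show t ∈ Ioi b from ht)]
      simp_rw [h1]
      rw [lintegral_indicator measurableSet_Ici, Measure.restrict_restrict measurableSet_Ici,
        hsub, lintegral_mul_const _ hφ, mul_comm]
    · have h1 : ∀ x : ℝ, F (x, t) = 0 := fun x =>
        Set.indicator_of_notMem (show (x, t) ∉ S from fun h => ht h.1) _
      simp_rw [h1]
      rw [lintegral_zero, Set.indicator_of_notMem (show t ∉ Ioi b from ht)]
  calc ∫⁻ x in Ioi b, φ x * ∫⁻ t in Ioc b x, ψ t
      = ∫⁻ x in Ioi b, ∫⁻ t, F (x, t) := by simp_rw [step1]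
    _ = ∫⁻ t, ∫⁻ x in Ioi b, F (x, t) :=
        lintegral_lintegral_swap (hF.aemeasurable)
    _ = ∫⁻ t, (Ioi b).indicator (fun t => ψ t * ∫⁻ x in Ici t, φ x) t := by simp_rw [step3]
    _ = ∫⁻ t in Ioi b, ψ t * ∫⁻ x in Ici t, φ x :=
        lintegral_indicator measurableSet_Ioi _

theorem hardy_classical (p b : ℝ) (hp : 1 < p) (hb : 0 < b)
    (f : ℝ → ℝ) (hf : Measurable f) (hfnn : ∀ x, 0 ≤ f x) :
    ∫⁻ x in Ioi b, ((∫⁻ t in Ioc b x, ENNReal.ofReal (f t)) / ENNReal.ofReal x) ^ p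
      ≤ ENNReal.ofReal ((p / (p - 1)) ^ p) *
        ∫⁻ x in Ioi b, (ENNReal.ofReal (f x)) ^ p := by
  have hp0 : 0 < p := lt_trans one_pos hp
  have hp0' : (0:ℝ) ≤ p := hp0.le
  have hp1 : 0 < p - 1 := sub_pos.mpr hp
  set a : ℝ := (p - 1) / p with ha_def
  have ha : 0 < a := div_pos hp1 hp0
  have hap : a * p = p - 1 := div_mul_cancel₀ _ hp0.ne'
  set q : ℝ := p / (p - 1) with hq_def
  have hq : 0 < q := div_pos hp0 hp1
  have hpq : p.HolderConjugate q := Real.HolderConjugate.conjExponent hp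
  have hqa : 1 / q = a := by rw [hq_def, ha_def, one_div_div]
  have haq : a⁻¹ = q := by rw [ha_def, hq_def, inv_div]
  set r : ℝ := a / p with hr_def
  have hrp : r * p = a := div_mul_cancel₀ _ hp0.ne'
  have hrq : r * q = 1 / p := by
    rw [hr_def, ha_def, hq_def]
    field_simp
  set g : ℝ → ℝ≥0∞ := fun t => ENNReal.ofReal (f t) with hg_def
  have hg : Measurable g := hf.ennreal_ofReal
  set G : ℝ → ℝ≥0∞ := fun x => ∫⁻ t in Ioc b x, g t ^ p * ENNReal.ofReal (t ^ a) with hG_def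
  have hφ : Measurable fun x : ℝ => ENNReal.ofReal (x ^ (-1 - a)) :=
    (measurable_id.pow measurable_const).ennreal_ofReal
  have hψ : Measurable fun t : ℝ => g t ^ p * ENNReal.ofReal (t ^ a) :=
    (hg.pow measurable_const).mul (measurable_id.pow measurable_const).ennreal_ofReal
  -- pointwise bound
  have key : ∀ x ∈ Ioi b,
      ((∫⁻ t in Ioc b x, g t) / ENNReal.ofReal x) ^ p
        ≤ ENNReal.ofReal (a ^ (1 - p)) * (ENNReal.ofReal (x ^ (-1 - a)) * G x) := by
    intro x hx
    have hbx : b < x := hx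
    have hx0 : 0 < x := hb.trans hbx
    set u : ℝ → ℝ≥0∞ := fun t => g t * ENNReal.ofReal (t ^ r) with hu_def
    set v : ℝ → ℝ≥0∞ := fun t => ENNReal.ofReal (t ^ (-r)) with hv_def
    have hu : Measurable u := hg.mul (measurable_id.pow measurable_const).ennreal_ofReal
    have hv : Measurable v := (measurable_id.pow measurable_const).ennreal_ofReal
    have holder : (∫⁻ t in Ioc b x, g t)
        ≤ G x ^ (1/p) * (ENNReal.ofReal (x ^ a / a)) ^ (1/q) := by
      have e1 : ∫⁻ t in Ioc b x, g t = ∫⁻ t in Ioc b x, (u * v) t := by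
        refine setLIntegral_congr_fun measurableSet_Ioc (fun t ht => ?_)
        have ht0 : 0 < t := hb.trans ht.1
        show g t = u t * v t
        rw [hu_def, hv_def, mul_assoc, ← ENNReal.ofReal_mul (Real.rpow_nonneg ht0.le r),
          ← Real.rpow_add ht0, add_neg_cancel, Real.rpow_zero, ENNReal.ofReal_one, mul_one]
      have e2 : ∫⁻ t in Ioc b x, u t ^ p = G x := by
        refine setLIntegral_congr_fun measurableSet_Ioc (fun t ht => ?_)
        have ht0 : 0 < t := hb.trans ht.1
        rw [hu_def, ENNReal.mul_rpow_of_nonneg _ _ hp0',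
          ENNReal.ofReal_rpow_of_pos (Real.rpow_pos_of_pos ht0 r),
          ← Real.rpow_mul ht0.le, hrp]
      have e3 : ∫⁻ t in Ioc b x, v t ^ q ≤ ENNReal.ofReal (x ^ a / a) := by
        have e3' : ∫⁻ t in Ioc b x, v t ^ q = ∫⁻ t in Ioc b x, ENNReal.ofReal (t ^ (-(1/p))) := by
          refine setLIntegral_congr_fun measurableSet_Ioc (fun t ht => ?_)
          have ht0 : 0 < t := hb.trans ht.1
          rw [hv_def, ENNReal.ofReal_rpow_of_pos (Real.rpow_pos_of_pos ht0 _),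
            ← Real.rpow_mul ht0.le, neg_mul, hrq]
        have he : (-1 : ℝ) < -(1/p) := by
          have : 1/p < 1 := by
            rw [div_lt_one hp0]; exact hp
          linarith
        have hea : -(1/p) + 1 = a := by
          rw [ha_def]; field_simp; ring
        rw [e3', hardyAux_lint_Ioc_rpow hb hbx.le he, hea]
        refine ENNReal.ofReal_le_ofReal ?_
        refine div_le_div_of_nonneg_right ?_ ha.le
        exact sub_le_self _ (Real.rpow_nonneg hb.le a)
      calc (∫⁻ t in Ioc b x, g t) = ∫⁻ t in Ioc b x, (u * v) t := e1
        _ ≤ (∫⁻ t in Ioc b x, u t ^ p) ^ (1/p) * (∫⁻ t in Ioc b x, v t ^ q) ^ (1/q) :=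
            ENNReal.lintegral_mul_le_Lp_mul_Lq _ hpq hu.aemeasurable hv.aemeasurable
        _ ≤ G x ^ (1/p) * (ENNReal.ofReal (x ^ a / a)) ^ (1/q) := by
            rw [e2]
            exact mul_le_mul_right (ENNReal.rpow_le_rpow e3 (by positivity)) _
    have hCpos : 0 < x ^ a / a := div_pos (Real.rpow_pos_of_pos hx0 a) ha
    have hexp : a * (p - 1) + -p = -1 - a := by linear_combination hap
    have hreal : (x ^ a / a) ^ (p-1) * (x ^ p)⁻¹ = a ^ (1-p) * x ^ (-1 - a) := by
      rw [Real.div_rpow (Real.rpow_nonneg hx0.le a) ha.le, ← Real.rpow_mul hx0.le,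
        ← Real.rpow_neg hx0.le, show (1:ℝ) - p = -(p-1) by ring, Real.rpow_neg ha.le,
        div_mul_eq_mul_div, ← Real.rpow_add hx0, hexp, div_eq_mul_inv, mul_comm]
    calc ((∫⁻ t in Ioc b x, g t) / ENNReal.ofReal x) ^ p
        ≤ ((G x ^ (1/p) * ENNReal.ofReal (x ^ a / a) ^ (1/q)) / ENNReal.ofReal x) ^ p :=
          ENNReal.rpow_le_rpow (ENNReal.div_le_div_right holder _) hp0'
      _ = ENNReal.ofReal (a ^ (1-p)) * (ENNReal.ofReal (x ^ (-1 - a)) * G x) := by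
          rw [ENNReal.div_rpow_of_nonneg _ _ hp0', ENNReal.mul_rpow_of_nonneg _ _ hp0',
            ← ENNReal.rpow_mul (G x), ← ENNReal.rpow_mul,
            one_div_mul_cancel hp0.ne', ENNReal.rpow_one,
            show 1 / q * p = p - 1 by rw [hqa]; exact hap,
            ENNReal.ofReal_rpow_of_pos hCpos, ENNReal.ofReal_rpow_of_pos hx0,
            div_eq_mul_inv, ← ENNReal.ofReal_inv_of_pos (Real.rpow_pos_of_pos hx0 p),
            mul_assoc, ← ENNReal.ofReal_mul (Real.rpow_nonneg hCpos.le _), hreal,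
            ENNReal.ofReal_mul (Real.rpow_nonneg ha.le _)]
          ring
  calc ∫⁻ x in Ioi b, ((∫⁻ t in Ioc b x, g t) / ENNReal.ofReal x) ^ p
      ≤ ∫⁻ x in Ioi b, ENNReal.ofReal (a ^ (1-p)) * (ENNReal.ofReal (x ^ (-1 - a)) * G x) := by
        refine lintegral_mono_ae ?_
        filter_upwards [ae_restrict_mem measurableSet_Ioi] with x hx
        exact key x hx
    _ = ENNReal.ofReal (a ^ (1-p)) * ∫⁻ x in Ioi b, ENNReal.ofReal (x ^ (-1 - a)) * G x :=
        lintegral_const_mul' _ _ ENNReal.ofReal_ne_top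
    _ = ENNReal.ofReal (a ^ (1-p)) * ∫⁻ t in Ioi b,
          (g t ^ p * ENNReal.ofReal (t ^ a)) * ∫⁻ x in Ici t, ENNReal.ofReal (x ^ (-1 - a)) := by
        congr 1
        exact hardyAux_swap_lemma b _ _ hφ hψ
    _ = ENNReal.ofReal (a ^ (1-p)) * ∫⁻ t in Ioi b, ENNReal.ofReal a⁻¹ * g t ^ p := by
        congr 1
        refine setLIntegral_congr_fun measurableSet_Ioi (fun t ht => ?_)
        have ht0 : 0 < t := hb.trans ht
        have tail : ∫⁻ x in Ici t, ENNReal.ofReal (x ^ (-1 - a)) = ENNReal.ofReal (t ^ (-a) / a) := by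
          rw [← setLIntegral_congr (Ioi_ae_eq_Ici (a := t) (μ := volume)),
            hardyAux_lint_Ioi_rpow ht0 (by linarith : -1 - a < -1),
            show (-1 - a) + 1 = -a by ring, neg_neg]
        rw [tail, mul_assoc, ← ENNReal.ofReal_mul (Real.rpow_nonneg ht0.le a),
          ← mul_div_assoc, ← Real.rpow_add ht0, add_neg_cancel, Real.rpow_zero, one_div, mul_comm]
    _ = ENNReal.ofReal (a ^ (1-p)) * (ENNReal.ofReal a⁻¹ * ∫⁻ t in Ioi b, g t ^ p) := by
        congr 1
        exact lintegral_const_mul' _ _ ENNReal.ofReal_ne_top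
    _ = ENNReal.ofReal ((p / (p - 1)) ^ p) * ∫⁻ x in Ioi b, g x ^ p := by
        rw [← mul_assoc, ← ENNReal.ofReal_mul (Real.rpow_nonneg ha.le _)]
        congr 2
        rw [show a⁻¹ = a ^ (-1 : ℝ) by rw [Real.rpow_neg_one],
          ← Real.rpow_add ha, show (1 - p) + (-1) = -p by ring,
          Real.rpow_neg ha.le, ← Real.inv_rpow ha.le, haq]
end

section
/- Let $1<p\le q<\infty$, and let $u,v:(0,\infty)\to(0,\infty)$ be measurable with $u\in L^1((r,\infty))$ for all $r>0$ and $v^{1-p'}\in L^1_{loc}$, where $p'=p/(p-1)$. Define $U(r)=\int_r^\infty u$ and $V(r)=\int_0^r v^{1-p'}$. If $\sup_{r>0} U(r)^{1/q}V(r)^{1/p'} =: D_1 <\infty$, then for all nonnegative measurable $f$, $\left(\int_0^\infty \left(\int_0^x f(t)\,dt\right)^q u(x)\,dx\right)^{1/q} \le D_1 (p')^{1/p'} p^{1/q} \left(\int_0^\infty f(x)^p v(x)\,dx\right)^{1/p}$. -/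
open MeasureTheory Set
open scoped ENNReal

lemma lint_Ioi {c s : ℝ} (hc : 0 < c) (hs : s < -1) :
    ∫⁻ r in Ioi c, ENNReal.ofReal (r ^ s) = ENNReal.ofReal (c ^ (s+1) / (-(s+1))) := by
  rw [← ofReal_integral_eq_lintegral_ofReal (integrableOn_Ioi_rpow_of_lt hs hc)
    (ae_restrict_of_forall_mem measurableSet_Ioi fun x hx =>
      Real.rpow_nonneg (le_of_lt (hc.trans hx)) s)]
  rw [integral_Ioi_rpow_of_lt hs hc, div_neg, neg_div]

lemma lint_Ioc {c s : ℝ} (hc : 0 < c) (hs : -1 < s) :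
    ∫⁻ r in Ioc 0 c, ENNReal.ofReal (r ^ s) = ENNReal.ofReal (c ^ (s+1) / (s+1)) := by
  have hint : IntervalIntegrable (fun r : ℝ => r ^ s) volume 0 c :=
    intervalIntegral.intervalIntegrable_rpow' hs
  have : ∫ r in (0:ℝ)..c, r ^ s = c ^ (s+1) / (s+1) := by
    rw [integral_rpow (Or.inl hs)]
    rw [Real.zero_rpow (by linarith)]
    ring
  rw [← ofReal_integral_eq_lintegral_ofReal ((intervalIntegrable_iff_integrableOn_Ioc_of_le hc.le).mp hint)
    (ae_restrict_of_forall_mem measurableSet_Ioc fun x hx => Real.rpow_nonneg hx.1.le s)]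
  rw [← intervalIntegral.integral_of_le hc.le, this]

lemma rpow_repr {b : ℝ≥0∞} (hb : b ≠ 0) {α : ℝ} (hα0 : 0 < α) :
    b ^ (-α) = ∫⁻ r in Ioi (0:ℝ),
      (if b ≤ ENNReal.ofReal r then ENNReal.ofReal (α * r ^ (-α-1)) else 0) := by
  have hind : (fun r : ℝ => if b ≤ ENNReal.ofReal r then ENNReal.ofReal (α * r ^ (-α-1)) else 0)
      = {r : ℝ | b ≤ ENNReal.ofReal r}.indicator (fun r => ENNReal.ofReal (α * r ^ (-α-1))) := by
    funext r; simp [Set.indicator_apply]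
  rcases eq_or_ne b ⊤ with hbt | hbt
  · subst hbt
    have : ∀ r : ℝ, ¬ ((⊤:ℝ≥0∞) ≤ ENNReal.ofReal r) := by
      intro r h
      exact (ENNReal.ofReal_lt_top).not_ge h
    simp only [this, if_false]
    rw [lintegral_zero, ENNReal.top_rpow_of_neg (by linarith)]
  · -- 0 < b < ⊤
    set c := b.toReal with hc
    have hc0 : 0 < c := ENNReal.toReal_pos hb hbt
    have hset : {r : ℝ | b ≤ ENNReal.ofReal r} ∩ Ioi 0 = Ici c := by
      ext r
      simp only [mem_inter_iff, mem_setOf_eq, mem_Ici, mem_Ioi]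
      constructor
      · rintro ⟨h1, h2⟩
        exact (ENNReal.le_ofReal_iff_toReal_le hbt h2.le).mp h1
      · intro h1
        have h2 : 0 < r := lt_of_lt_of_le hc0 h1
        exact ⟨(ENNReal.le_ofReal_iff_toReal_le hbt h2.le).mpr h1, h2⟩
    have hmeas : MeasurableSet {r : ℝ | b ≤ ENNReal.ofReal r} := by
      have : Measurable fun r : ℝ => ENNReal.ofReal r := ENNReal.measurable_ofReal.comp measurable_id
      exact measurableSet_le measurable_const this
    rw [hind, lintegral_indicator hmeas, Measure.restrict_restrict hmeas, hset,
      ← restrict_Ioi_eq_restrict_Ici]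
    have hrw : ∀ r ∈ Ioi c, ENNReal.ofReal (α * r ^ (-α-1))
        = ENNReal.ofReal α * ENNReal.ofReal (r ^ (-α-1)) := by
      intro r _; exact ENNReal.ofReal_mul hα0.le
    rw [setLIntegral_congr_fun measurableSet_Ioi hrw,
      lintegral_const_mul _ (by fun_prop : Measurable fun r : ℝ => ENNReal.ofReal (r ^ (-α-1)))]
    rw [lint_Ioi hc0 (by linarith)]
    rw [← ENNReal.ofReal_mul hα0.le]
    have : α * (c ^ (-α - 1 + 1) / -(-α - 1 + 1)) = c ^ (-α) := by
      have : -α - 1 + 1 = -α := by ring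
      rw [this]
      field_simp
    rw [this, ← ENNReal.ofReal_rpow_of_pos hc0, ENNReal.ofReal_toReal hbt]

lemma lemD {μ : Measure ℝ} [SFinite μ] {G : ℝ → ℝ≥0∞} (hG : Measurable G)
    {M : ℝ≥0∞} {α : ℝ} (hα0 : 0 < α) (hα1 : α < 1)
    (hle : ∀ r : ℝ, 0 < r → μ {y | G y ≤ ENNReal.ofReal r} ≤ min (ENNReal.ofReal r) M) :
    ∫⁻ y, G y ^ (-α) ∂μ ≤ M ^ (1-α) * ENNReal.ofReal (1/(1-α)) := by
  rcases eq_or_ne M ⊤ with hMt | hMt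
  · subst hMt
    have hne : ENNReal.ofReal (1/(1-α)) ≠ 0 := by
      simp only [Ne, ENNReal.ofReal_eq_zero, not_le]
      have h : (0:ℝ) < 1-α := by linarith
      exact one_div_pos.mpr h
    rw [ENNReal.top_rpow_of_pos (by linarith), ENNReal.top_mul hne]
    exact le_top
  rcases eq_or_ne M 0 with hM0 | hM0
  · subst hM0
    have hae : ∀ᵐ y ∂μ, G y = ⊤ := by
      rw [ae_iff]
      refine measure_mono_null (fun y hy => ?_) (measure_iUnion_null (s := fun n : ℕ =>
        {y : ℝ | G y ≤ ENNReal.ofReal (n+1)}) (fun n => ?_))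
      · simp only [mem_setOf_eq] at hy
        simp only [mem_iUnion, mem_setOf_eq]
        refine ⟨⌈(G y).toReal⌉₊, ?_⟩
        calc G y = ENNReal.ofReal (G y).toReal := (ENNReal.ofReal_toReal hy).symm
          _ ≤ _ := ENNReal.ofReal_le_ofReal ((Nat.le_ceil _).trans (by linarith))
      · exact le_antisymm ((hle ((n:ℝ)+1) (by positivity)).trans
          ((min_le_right _ _).trans le_rfl)) zero_le
    calc ∫⁻ y, G y ^ (-α) ∂μ = ∫⁻ _, 0 ∂μ := by
          apply lintegral_congr_ae
          filter_upwards [hae] with y hy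
          rw [hy, ENNReal.top_rpow_of_neg (by linarith)]
      _ = 0 := lintegral_zero
      _ ≤ _ := zero_le
  · -- main case
    have hc0 : 0 < M.toReal := ENNReal.toReal_pos hM0 hMt
    set c := M.toReal with hcdef
    have hMc : M = ENNReal.ofReal c := (ENNReal.ofReal_toReal hMt).symm
    have h0 : μ {y | G y = 0} = 0 := by
      refine le_antisymm ?_ zero_le
      have h1 : Filter.Tendsto (fun n : ℕ => ENNReal.ofReal (1/(n+1))) Filter.atTop (nhds 0) := by
        rw [← ENNReal.ofReal_zero]
        exact ENNReal.tendsto_ofReal tendsto_one_div_add_atTop_nhds_zero_nat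
      refine ge_of_tendsto' h1 (fun n => ?_)
      refine le_trans (measure_mono (fun y hy => ?_)) ((hle _ (by positivity)).trans
        (min_le_left _ _))
      simp only [mem_setOf_eq] at hy ⊢
      rw [hy]; exact zero_le
    have hrepr : ∀ᵐ y ∂μ, G y ^ (-α) = ∫⁻ r in Ioi (0:ℝ),
        (if G y ≤ ENNReal.ofReal r then ENNReal.ofReal (α * r ^ (-α-1)) else 0) := by
      have : ∀ᵐ y ∂μ, G y ≠ 0 := by
        rw [ae_iff]; simpa using h0
      filter_upwards [this] with y hy using rpow_repr hy hα0
    rw [lintegral_congr_ae hrepr]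
    have hgm : Measurable (Function.uncurry (fun y r => if G y ≤ ENNReal.ofReal r
        then ENNReal.ofReal (α * r ^ (-α-1)) else 0 : ℝ → ℝ → ℝ≥0∞)) := by
      apply Measurable.ite
      · exact measurableSet_le (hG.comp measurable_fst)
          (ENNReal.measurable_ofReal.comp measurable_snd)
      · fun_prop
      · exact measurable_const
    rw [lintegral_lintegral_swap hgm.aemeasurable]
    have hinner : ∀ r ∈ Ioi (0:ℝ), (∫⁻ y, (if G y ≤ ENNReal.ofReal r
        then ENNReal.ofReal (α * r ^ (-α-1)) else 0) ∂μ)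
        ≤ ENNReal.ofReal (α * r ^ (-α-1)) * min (ENNReal.ofReal r) M := by
      intro r hr
      have : (fun y => if G y ≤ ENNReal.ofReal r then ENNReal.ofReal (α * r ^ (-α-1)) else 0)
          = {y : ℝ | G y ≤ ENNReal.ofReal r}.indicator
            (fun _ => ENNReal.ofReal (α * r ^ (-α-1))) := by
        funext y; simp [Set.indicator_apply]
      rw [this, lintegral_indicator_const (measurableSet_le hG measurable_const)]
      exact mul_le_mul_right (hle r hr) _
    refine le_trans (setLIntegral_mono_ae (by fun_prop) (Filter.Eventually.of_forall hinner)) ?_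
    rw [← Ioc_union_Ioi_eq_Ioi hc0.le,
      lintegral_union measurableSet_Ioi (Ioc_disjoint_Ioi le_rfl)]
    have hIoc : (∫⁻ r in Ioc 0 c, ENNReal.ofReal (α * r ^ (-α-1)) * min (ENNReal.ofReal r) M)
        = ENNReal.ofReal α * ENNReal.ofReal (c ^ (1-α) / (1-α)) := by
      have he : ∀ r ∈ Ioc (0:ℝ) c, ENNReal.ofReal (α * r ^ (-α-1)) * min (ENNReal.ofReal r) M
          = ENNReal.ofReal α * ENNReal.ofReal (r ^ (-α)) := by
        intro r hr
        have hrpos : 0 < r := hr.1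
        have hmin : min (ENNReal.ofReal r) M = ENNReal.ofReal r := by
          rw [min_eq_left]; rw [hMc]; exact ENNReal.ofReal_le_ofReal hr.2
        rw [hmin, ← ENNReal.ofReal_mul (by positivity), ← ENNReal.ofReal_mul hα0.le]
        congr 1
        rw [mul_assoc]
        congr 1
        rw [← Real.rpow_add_one hrpos.ne' (-α-1)]
        norm_num
      rw [setLIntegral_congr_fun measurableSet_Ioc he,
        lintegral_const_mul _ (by fun_prop)]
      congr 1
      have := lint_Ioc hc0 (show (-1:ℝ) < -α by linarith)
      rw [this, show -α + 1 = 1 - α from by ring]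
    have hIoi : (∫⁻ r in Ioi c, ENNReal.ofReal (α * r ^ (-α-1)) * min (ENNReal.ofReal r) M)
        = ENNReal.ofReal (α * c) * ENNReal.ofReal (c ^ (-α) / α) := by
      have he : ∀ r ∈ Ioi c, ENNReal.ofReal (α * r ^ (-α-1)) * min (ENNReal.ofReal r) M
          = ENNReal.ofReal (α * c) * ENNReal.ofReal (r ^ (-α-1)) := by
        intro r hr
        have hrpos : 0 < r := hc0.trans hr
        have hmin : min (ENNReal.ofReal r) M = ENNReal.ofReal c := by
          rw [hMc, min_eq_right]; exact ENNReal.ofReal_le_ofReal (le_of_lt hr)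
        rw [hmin, ← ENNReal.ofReal_mul (by positivity), ← ENNReal.ofReal_mul (by positivity)]
        congr 1; ring
      rw [setLIntegral_congr_fun measurableSet_Ioi he,
        lintegral_const_mul _ (by fun_prop)]
      congr 1
      have := lint_Ioi hc0 (show -α - 1 < (-1:ℝ) by linarith)
      rw [this, show -α - 1 + 1 = -α from by ring, neg_neg]
    have h1α : (0:ℝ) < 1 - α := by linarith
    rw [hIoc, hIoi, hMc, ENNReal.ofReal_rpow_of_pos hc0,
      ← ENNReal.ofReal_mul (by positivity), ← ENNReal.ofReal_mul (by positivity),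
      ← ENNReal.ofReal_mul (by positivity),
      ← ENNReal.ofReal_add (by positivity) (by positivity)]
    apply ENNReal.ofReal_le_ofReal
    have hX : c ^ (-α) * c = c ^ (1 - α) := by
      rw [← Real.rpow_add_one hc0.ne' (-α), show -α + 1 = 1 - α from by ring]
    rw [show α * c * (c ^ (-α) / α) = c ^ (-α) * c from by field_simp, hX]
    exact le_of_eq (by field_simp; ring)

lemma keyV (w : ℝ → ℝ≥0∞) (hw : Measurable w) {α : ℝ} (hα0 : 0 < α) (hα1 : α < 1) (x : ℝ) :
    ∫⁻ t in Ioc 0 x, w t * (∫⁻ s in Ioc 0 t, w s) ^ (-α)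
      ≤ (∫⁻ s in Ioc 0 x, w s) ^ (1-α) * ENNReal.ofReal (1/(1-α)) := by
  set V : ℝ → ℝ≥0∞ := fun t => ∫⁻ s in Ioc 0 t, w s with hV
  have hVmono : Monotone V := fun a b hab => lintegral_mono_set (Ioc_subset_Ioc_right hab)
  have hVmeas : Measurable V := hVmono.measurable
  set μ : Measure ℝ := (volume.restrict (Ioc 0 x)).withDensity w with hμ
  have hμS : ∀ S : Set ℝ, MeasurableSet S → μ S = ∫⁻ t in S ∩ Ioc 0 x, w t := by
    intro S hS
    rw [hμ, withDensity_apply w hS, Measure.restrict_restrict hS]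
  have hlhs : ∫⁻ t in Ioc 0 x, w t * V t ^ (-α) = ∫⁻ t, V t ^ (-α) ∂μ := by
    rw [hμ, lintegral_withDensity_eq_lintegral_mul _ hw (by fun_prop)]
    rfl
  rw [hlhs]
  refine lemD hVmeas hα0 hα1 ?_
  intro r hr
  rw [hμS _ (measurableSet_le hVmeas measurable_const)]
  refine le_min ?_ (lintegral_mono_set inter_subset_right)
  set A := {t : ℝ | V t ≤ ENNReal.ofReal r} ∩ Ioc 0 x with hA
  rcases A.eq_empty_or_nonempty with hAe | ⟨a0, ha0⟩
  · rw [hAe]; simp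
  have hbdd : BddAbove A := bddAbove_Ioc.mono inter_subset_right
  set c₀ := sSup A with hc₀
  have hAc : A ⊆ Ioc 0 c₀ := fun t ht => ⟨ht.2.1, le_csSup hbdd ht⟩
  refine (lintegral_mono_set hAc).trans ?_
  by_cases hc : c₀ ∈ A
  · exact hc.1
  · have hIoo : (∫⁻ t in Ioc 0 c₀, w t) = ∫⁻ t in Ioo 0 c₀, w t :=
      (setLIntegral_congr Ioo_ae_eq_Ioc).symm
    have hseq : Ioo 0 c₀ = ⋃ n : ℕ, Ioc 0 (c₀ - 1/(n+1)) := by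
      ext t
      simp only [mem_Ioo, mem_iUnion, mem_Ioc]
      constructor
      · rintro ⟨ht0, htc⟩
        obtain ⟨n, hn⟩ := exists_nat_one_div_lt (show 0 < c₀ - t by linarith)
        exact ⟨n, ht0, by linarith⟩
      · rintro ⟨n, ht0, htn⟩
        have : 0 < 1/((n:ℝ)+1) := by positivity
        exact ⟨ht0, by linarith⟩
    have hmono : Monotone (fun n : ℕ => Ioc (0:ℝ) (c₀ - 1/(n+1))) := by
      intro n m hnm
      apply Ioc_subset_Ioc_right
      have h1 : (0:ℝ) < n+1 := by positivity
      have h2 : (n:ℝ)+1 ≤ (m:ℝ)+1 := by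
        have := (Nat.cast_le (α := ℝ)).mpr hnm
        linarith
      have := one_div_le_one_div_of_le h1 h2
      linarith
    have hwd : ∀ S : Set ℝ, MeasurableSet S → (volume.withDensity w) S = ∫⁻ t in S, w t :=
      fun S hS => withDensity_apply w hS
    calc (∫⁻ t in Ioc 0 c₀, w t) = ∫⁻ t in Ioo 0 c₀, w t := hIoo
      _ = (volume.withDensity w) (Ioo 0 c₀) := (hwd _ measurableSet_Ioo).symm
      _ = ⨆ n : ℕ, (volume.withDensity w) (Ioc 0 (c₀ - 1/(n+1))) := by
          rw [hseq, hmono.measure_iUnion]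
      _ ≤ ENNReal.ofReal r := by
          refine iSup_le fun n => ?_
          rw [hwd _ measurableSet_Ioc]
          have hlt : c₀ - 1/(n+1) < c₀ := by
            have : 0 < 1/((n:ℝ)+1) := by positivity
            linarith
          obtain ⟨a, haA, hca⟩ := exists_lt_of_lt_csSup ⟨a0, ha0⟩ hlt
          exact le_trans (hVmono hca.le) haA.1

lemma keyU (w : ℝ → ℝ≥0∞) (hw : Measurable w) {α : ℝ} (hα0 : 0 < α) (hα1 : α < 1) (t₀ : ℝ) :
    ∫⁻ y in Ioi t₀, w y * (∫⁻ s in Ioi y, w s) ^ (-α)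
      ≤ (∫⁻ s in Ioi t₀, w s) ^ (1-α) * ENNReal.ofReal (1/(1-α)) := by
  set U : ℝ → ℝ≥0∞ := fun t => ∫⁻ s in Ioi t, w s with hU
  have hUanti : Antitone U := fun a b hab => lintegral_mono_set (Ioi_subset_Ioi hab)
  have hUmeas : Measurable U := hUanti.measurable
  set μ : Measure ℝ := (volume.restrict (Ioi t₀)).withDensity w with hμ
  have hμS : ∀ S : Set ℝ, MeasurableSet S → μ S = ∫⁻ t in S ∩ Ioi t₀, w t := by
    intro S hS
    rw [hμ, withDensity_apply w hS, Measure.restrict_restrict hS]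
  have hlhs : ∫⁻ t in Ioi t₀, w t * U t ^ (-α) = ∫⁻ t, U t ^ (-α) ∂μ := by
    rw [hμ, lintegral_withDensity_eq_lintegral_mul _ hw (by fun_prop)]
    rfl
  rw [hlhs]
  refine lemD hUmeas hα0 hα1 ?_
  intro r hr
  rw [hμS _ (measurableSet_le hUmeas measurable_const)]
  refine le_min ?_ (lintegral_mono_set inter_subset_right)
  set A := {t : ℝ | U t ≤ ENNReal.ofReal r} ∩ Ioi t₀ with hA
  rcases A.eq_empty_or_nonempty with hAe | ⟨a0, ha0⟩
  · rw [hAe]; simp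
  have hbdd : BddBelow A := ⟨t₀, fun a ha => (ha.2 : t₀ < a).le⟩
  set c₀ := sInf A with hc₀
  have hAc : A ⊆ Ici c₀ := fun t ht => csInf_le hbdd ht
  refine (lintegral_mono_set hAc).trans ?_
  have hIci : (∫⁻ t in Ici c₀, w t) = U c₀ := by
    rw [← restrict_Ioi_eq_restrict_Ici]
  by_cases hc : c₀ ∈ A
  · exact hIci.le.trans hc.1
  · rw [hIci]
    have hseq : Ioi c₀ = ⋃ n : ℕ, Ioi (c₀ + 1/(n+1)) := by
      ext t
      simp only [mem_Ioi, mem_iUnion]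
      constructor
      · intro ht
        obtain ⟨n, hn⟩ := exists_nat_one_div_lt (show 0 < t - c₀ by linarith)
        exact ⟨n, by linarith⟩
      · rintro ⟨n, htn⟩
        have : 0 < 1/((n:ℝ)+1) := by positivity
        linarith
    have hmono : Monotone (fun n : ℕ => Ioi (c₀ + 1/(n+1))) := by
      intro n m hnm
      apply Ioi_subset_Ioi
      have h1 : (0:ℝ) < n+1 := by positivity
      have h2 : (n:ℝ)+1 ≤ (m:ℝ)+1 := by
        have := (Nat.cast_le (α := ℝ)).mpr hnm
        linarith
      have := one_div_le_one_div_of_le h1 h2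
      linarith
    have hwd : ∀ S : Set ℝ, MeasurableSet S → (volume.withDensity w) S = ∫⁻ t in S, w t :=
      fun S hS => withDensity_apply w hS
    calc U c₀ = (volume.withDensity w) (Ioi c₀) := (hwd _ measurableSet_Ioi).symm
      _ = ⨆ n : ℕ, (volume.withDensity w) (Ioi (c₀ + 1/(n+1))) := by
          rw [hseq, hmono.measure_iUnion]
      _ ≤ ENNReal.ofReal r := by
          refine iSup_le fun n => ?_
          rw [hwd _ measurableSet_Ioi]
          have hlt : c₀ < c₀ + 1/(n+1) := by
            have : 0 < 1/((n:ℝ)+1) := by positivity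
            linarith
          obtain ⟨a, haA, hca⟩ := exists_lt_of_csInf_lt ⟨a0, ha0⟩ hlt
          exact le_trans (hUanti hca.le) haA.1

lemma minkowski_lint {X Y : Type*} [MeasurableSpace X] [MeasurableSpace Y]
    (μ : Measure X) (ν : Measure Y) [SigmaFinite μ] [SFinite ν]
    {r : ℝ} (hr : 1 ≤ r) {g : Y → X → ℝ≥0∞}
    (hg : Measurable (Function.uncurry g)) :
    ∫⁻ x, (∫⁻ t, g t x ∂ν) ^ r ∂μ ≤ (∫⁻ t, (∫⁻ x, g t x ^ r ∂μ) ^ (1/r) ∂ν) ^ r := by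
  have hΦm : Measurable (fun x => ∫⁻ t, g t x ∂ν) := hg.lintegral_prod_left
  rcases eq_or_lt_of_le hr with hr1 | hr1
  · subst hr1
    simp only [ENNReal.rpow_one, one_div_one]
    exact le_of_eq (lintegral_lintegral_swap (μ := μ) (ν := ν) (f := fun x t => g t x)
      (hg.comp measurable_swap).aemeasurable)
  · set Φ : X → ℝ≥0∞ := fun x => ∫⁻ t, g t x ∂ν with hΦ
    have hr0 : (0:ℝ) < r := by linarith
    have hconj : r.HolderConjugate (r/(r-1)) := Real.HolderConjugate.conjExponent hr1
    set r' := r / (r-1) with hr'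
    have hrr' : (r-1) * r' = r := by
      rw [hr', mul_comm, div_mul_cancel₀ _ (by linarith : r - 1 ≠ 0)]
    have hinv : 1/r' + 1/r = 1 := by
      have := hconj.inv_add_inv_eq_one
      rw [one_div, one_div]; linarith [this]
    have hr'0 : (0:ℝ) < r' := hconj.symm.pos
    set A : ℕ → Set X := spanningSets μ with hA
    set Φn : ℕ → X → ℝ≥0∞ := fun n x => min (Φ x) n with hΦn
    have hΦnm : ∀ n, Measurable (Φn n) := fun n => hΦm.min measurable_const
    set I : ℕ → ℝ≥0∞ := fun n => ∫⁻ x in A n, Φn n x ^ r ∂μ with hI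
    set R : ℝ≥0∞ := ∫⁻ t, (∫⁻ x, g t x ^ r ∂μ) ^ (1/r) ∂ν with hR
    have hIfin : ∀ n, I n ≠ ⊤ := by
      intro n
      have : I n ≤ (n:ℝ≥0∞) ^ r * μ (A n) := by
        rw [hI, ← setLIntegral_const]
        exact setLIntegral_mono (by fun_prop) fun x _ =>
          ENNReal.rpow_le_rpow (min_le_right _ _) hr0.le
      refine ne_top_of_le_ne_top ?_ this
      exact ENNReal.mul_ne_top (ENNReal.rpow_ne_top_of_nonneg hr0.le (ENNReal.natCast_ne_top n))
        (measure_spanningSets_lt_top μ n).ne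
    have hkey : ∀ n, I n ≤ I n ^ (1/r') * R := by
      intro n
      have step1 : I n ≤ ∫⁻ x in A n, Φn n x ^ (r-1) * Φ x ∂μ := by
        rw [hI]
        refine setLIntegral_mono (by fun_prop) fun x _ => ?_
        have hnt : Φn n x ≠ ⊤ :=
          ne_top_of_le_ne_top (ENNReal.natCast_ne_top n) (min_le_right _ _)
        rcases eq_or_ne (Φn n x) 0 with h0 | h0
        · rw [h0, ENNReal.zero_rpow_of_pos hr0, ENNReal.zero_rpow_of_pos (by linarith), zero_mul]
        · have : Φn n x ^ r = Φn n x ^ (r-1) * Φn n x := by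
            nth_rewrite 3 [← ENNReal.rpow_one (Φn n x)]
            rw [← ENNReal.rpow_add _ _ h0 hnt]
            norm_num
          rw [this]
          exact mul_le_mul_right (min_le_left _ _) _
      have step2 : (∫⁻ x in A n, Φn n x ^ (r-1) * Φ x ∂μ)
          = ∫⁻ t, ∫⁻ x in A n, Φn n x ^ (r-1) * g t x ∂μ ∂ν := by
        have hrw : ∀ x, Φn n x ^ (r-1) * Φ x = ∫⁻ t, Φn n x ^ (r-1) * g t x ∂ν := by
          intro x
          rw [hΦ]
          exact (lintegral_const_mul' _ _ (ENNReal.rpow_ne_top_of_nonneg (by linarith)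
            (ne_top_of_le_ne_top (ENNReal.natCast_ne_top n) (min_le_right _ _)))).symm
        rw [lintegral_congr hrw]
        exact lintegral_lintegral_swap
          (((((hΦnm n).comp measurable_fst).pow_const _).mul
            (hg.comp measurable_swap)).aemeasurable)
      have step3 : ∀ t, (∫⁻ x in A n, Φn n x ^ (r-1) * g t x ∂μ)
          ≤ I n ^ (1/r') * (∫⁻ x, g t x ^ r ∂μ) ^ (1/r) := by
        intro t
        have hgt : Measurable (fun x => g t x) := hg.comp (measurable_prodMk_left)
        have hold := ENNReal.lintegral_mul_le_Lp_mul_Lq (μ.restrict (A n)) hconj.symm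
          (f := fun x => Φn n x ^ (r-1)) (g := fun x => g t x)
          (((hΦnm n).pow_const _).aemeasurable) hgt.aemeasurable
        refine hold.trans ?_
        apply mul_le_mul'
        · apply le_of_eq
          congr 1
          rw [hI]
          refine setLIntegral_congr_fun (measurableSet_spanningSets μ n)
            (fun x _ => ?_)
          rw [← ENNReal.rpow_mul, hrr']
        · refine ENNReal.rpow_le_rpow ?_ (by positivity)
          exact (lintegral_mono_set (subset_univ _)).trans (le_of_eq (by rw [Measure.restrict_univ]))
      calc I n ≤ ∫⁻ t, ∫⁻ x in A n, Φn n x ^ (r-1) * g t x ∂μ ∂ν := step2 ▸ step1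
        _ ≤ ∫⁻ t, I n ^ (1/r') * (∫⁻ x, g t x ^ r ∂μ) ^ (1/r) ∂ν :=
            lintegral_mono step3
        _ = I n ^ (1/r') * R := by
            rw [hR]
            exact lintegral_const_mul' _ _
              (ENNReal.rpow_ne_top_of_nonneg (by positivity) (hIfin n))
    have hIR : ∀ n, I n ≤ R ^ r := by
      intro n
      rcases eq_or_ne (I n) 0 with h0 | h0
      · rw [h0]; exact zero_le
      have h1 : I n ^ (1/r') * I n ^ (1/r) ≤ I n ^ (1/r') * R := by
        rw [← ENNReal.rpow_add _ _ h0 (hIfin n), hinv, ENNReal.rpow_one]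
        exact hkey n
      have h2 : I n ^ (1/r) ≤ R := by
        rw [ENNReal.mul_le_mul_iff_right (by
            simp only [Ne, ENNReal.rpow_eq_zero_iff, not_or, not_and_or]
            constructor
            · exact Or.inl h0
            · exact Or.inl (hIfin n))
          (ENNReal.rpow_ne_top_of_nonneg (by positivity) (hIfin n))] at h1
        exact h1
      calc I n = (I n ^ (1/r)) ^ r := by
            rw [← ENNReal.rpow_mul, one_div, inv_mul_cancel₀ hr0.ne', ENNReal.rpow_one]
        _ ≤ R ^ r := ENNReal.rpow_le_rpow h2 hr0.le
    -- monotone convergence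
    have hmc : ∫⁻ x, Φ x ^ r ∂μ = ⨆ n, I n := by
      have hIind : ∀ n, I n = ∫⁻ x, (A n).indicator (fun x => Φn n x ^ r) x ∂μ := by
        intro n
        rw [hI, lintegral_indicator (measurableSet_spanningSets μ n)]
      have hmono : Monotone (fun n => fun x => (A n).indicator (fun x => Φn n x ^ r) x) := by
        intro m n hmn x
        simp only
        by_cases hx : x ∈ A m
        · rw [Set.indicator_of_mem hx, Set.indicator_of_mem (monotone_spanningSets μ hmn hx)]
          exact ENNReal.rpow_le_rpow (min_le_min le_rfl (by exact_mod_cast Nat.cast_le.mpr hmn))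
            hr0.le
        · rw [Set.indicator_of_notMem hx]
          exact zero_le
      have hsup : ∀ x, ⨆ n, (A n).indicator (fun x => Φn n x ^ r) x = Φ x ^ r := by
        intro x
        obtain ⟨N, hN⟩ : ∃ N, x ∈ A N := by
          have := iUnion_spanningSets μ
          have hx : x ∈ ⋃ n, A n := by rw [hA, this]; trivial
          exact mem_iUnion.mp hx
        apply le_antisymm
        · refine iSup_le fun n => ?_
          by_cases hx : x ∈ A n
          · rw [Set.indicator_of_mem hx]
            exact ENNReal.rpow_le_rpow (min_le_left _ _) hr0.le
          · rw [Set.indicator_of_notMem hx]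
            exact zero_le
        · rcases eq_or_ne (Φ x) ⊤ with ht | ht
          · have hub : ∀ n : ℕ, (n:ℝ≥0∞) ≤ ⨆ m, (A m).indicator (fun x => Φn m x ^ r) x := by
              intro n
              set m := max (max N n) 1 with hm
              refine le_trans ?_ (le_iSup _ m)
              rw [Set.indicator_of_mem (monotone_spanningSets μ
                ((le_max_left N n).trans (le_max_left _ 1)) hN), hΦn]
              simp only
              rw [ht, min_eq_right le_top]
              calc (n:ℝ≥0∞) ≤ (m:ℝ≥0∞) := by
                    exact_mod_cast Nat.cast_le.mpr ((le_max_right N n).trans (le_max_left _ 1))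
                _ = (m:ℝ≥0∞) ^ (1:ℝ) := (ENNReal.rpow_one _).symm
                _ ≤ (m:ℝ≥0∞) ^ r := ENNReal.rpow_le_rpow_of_exponent_le
                    (by exact_mod_cast Nat.one_le_cast.mpr (le_max_right (max N n) 1)) hr
            rw [ht, ENNReal.top_rpow_of_pos hr0, ← ENNReal.iSup_natCast]
            exact iSup_le hub
          · obtain ⟨M, hM⟩ : ∃ M : ℕ, Φ x ≤ M := by
              refine ⟨⌈(Φ x).toReal⌉₊, ?_⟩
              rw [← ENNReal.ofReal_toReal ht]
              calc ENNReal.ofReal (Φ x).toReal ≤ ENNReal.ofReal ⌈(Φ x).toReal⌉₊ :=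
                    ENNReal.ofReal_le_ofReal (Nat.le_ceil _)
                _ ≤ _ := by simp [ENNReal.ofReal_natCast]
            refine le_trans (le_of_eq ?_) (le_iSup _ (max N M))
            rw [Set.indicator_of_mem (monotone_spanningSets μ (le_max_left N M) hN)]
            rw [hΦn]
            simp only
            rw [min_eq_left]
            exact hM.trans (by exact_mod_cast Nat.cast_le.mpr (le_max_right N M))
      calc ∫⁻ x, Φ x ^ r ∂μ
          = ∫⁻ x, ⨆ n, (A n).indicator (fun x => Φn n x ^ r) x ∂μ :=
            lintegral_congr fun x => (hsup x).symm
        _ = ⨆ n, ∫⁻ x, (A n).indicator (fun x => Φn n x ^ r) x ∂μ :=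
            lintegral_iSup (fun n => ((hΦnm n).pow_const _).indicator
              (measurableSet_spanningSets μ n)) hmono
        _ = ⨆ n, I n := by
            exact iSup_congr fun n => (hIind n).symm
    rw [hmc]
    exact iSup_le hIR

theorem hardy_sufficiency (p q p' : ℝ) (hp : 1 < p) (hpq : p ≤ q)
    (hp' : p' = p / (p - 1))
    (u v : ℝ → ℝ) (hu : Measurable u) (hv : Measurable v)
    (hupos : ∀ x ∈ Ioi (0:ℝ), 0 < u x) (hvpos : ∀ x ∈ Ioi (0:ℝ), 0 < v x)
    (huL1 : ∀ r > (0:ℝ), (∫⁻ x in Ioi r, ENNReal.ofReal (u x)) < ⊤)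
    (hvL1 : ∀ r > (0:ℝ), (∫⁻ x in Ioc 0 r, ENNReal.ofReal (v x ^ (1 - p'))) < ⊤)
    (D1 : ℝ≥0∞)
    (hD1 : D1 = ⨆ r ∈ Ioi (0:ℝ),
        (∫⁻ x in Ioi r, ENNReal.ofReal (u x)) ^ (1/q) *
        (∫⁻ x in Ioc 0 r, ENNReal.ofReal (v x ^ (1 - p'))) ^ (1/p'))
    (hD1fin : D1 < ⊤)
    (f : ℝ → ℝ) (hf : Measurable f) (hfnn : ∀ x, 0 ≤ f x) :
    (∫⁻ x in Ioi (0:ℝ),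
        (∫⁻ t in Ioc 0 x, ENNReal.ofReal (f t)) ^ q * ENNReal.ofReal (u x)) ^ (1/q)
      ≤ D1 * ENNReal.ofReal (p' ^ (1/p')) * ENNReal.ofReal (p ^ (1/q)) *
        (∫⁻ x in Ioi (0:ℝ), ENNReal.ofReal (f x ^ p * v x)) ^ (1/p) := by
  -- basic real facts
  have hp0 : (0:ℝ) < p := by linarith
  have hq0 : (0:ℝ) < q := by linarith
  have hp'1 : 1 < p' := by
    rw [hp', lt_div_iff₀ (by linarith)]
    linarith
  have hp'0 : (0:ℝ) < p' := by linarith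
  have hconj : p.HolderConjugate p' := by
    rw [hp']; exact Real.HolderConjugate.conjExponent hp
  have hinv := hconj.inv_add_inv_eq_one
  have h1p : 1 - 1/p = 1/p' := by rw [one_div, one_div]; linarith
  have h1p' : 1 - 1/p' = 1/p := by rw [one_div, one_div]; linarith
  have hip : 1/(1-(1/p)) = p' := by rw [h1p, one_div_one_div]
  have hip' : 1/(1-(1/p')) = p := by rw [h1p', one_div_one_div]
  have hpp' : p/p' = p - 1 := by
    rw [div_eq_mul_one_div, ← h1p, mul_sub, mul_one, mul_one_div, div_self hp0.ne']
  have hp'p : p'/p = p' - 1 := by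
    rw [div_eq_mul_one_div, ← h1p', mul_sub, mul_one, mul_one_div, div_self hp'0.ne']
  have hr1 : 1 ≤ q/p := (one_le_div hp0).mpr hpq
  have eA : (1/p) * p = 1 := one_div_mul_cancel hp0.ne'
  have eB : (1/p * (1/p')) * p = 1/p' := by
    rw [mul_comm (1/p) (1/p'), mul_assoc, one_div_mul_cancel hp0.ne', mul_one]
  have eC : (-(1/p)) * p' = 1 - p' := by
    rw [neg_mul, div_mul_eq_mul_div, one_mul, hp'p]; ring
  have eD : (-(1/p * (1/p'))) * p' = -(1/p) := by
    rw [neg_mul, mul_assoc, one_div_mul_cancel hp'0.ne', mul_one]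
  have eE : (1/p') * q = q/p' := by rw [div_mul_eq_mul_div, one_mul]
  have eF : (1/p) * q = q/p := by rw [div_mul_eq_mul_div, one_mul]
  have eG : (1/p') * (q/p') = (1/p') * (1/p') * q := by
    field_simp
    try ring
  have eH : (-(1/q)) * (q/p') = -(1/p') := by
    field_simp
    try ring
  have eI : (q/p) * (p/q) = 1 := by
    field_simp
    try ring
  have eJ : (q/p') * (p/q) = p/p' := by
    field_simp
    try ring
  have eK : (1/p) * (p/q) = 1/q := by
    field_simp
    try ring
  have eL : (q/p') * (1/q) = 1/p' := by
    field_simp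
    try ring
  have eM : (q/p) * (1/q) = 1/p := by
    field_simp
    try ring
  have eN : p * (1/p) = 1 := by
    field_simp
  have eO : (p/q) * (1/p) = 1/q := by
    field_simp
    try ring
  have eP : 1/(q/p) = p/q := one_div_div q p
  have h1ppos : (0:ℝ) < 1/p := by positivity
  have h1p'pos : (0:ℝ) < 1/p' := by positivity
  have h1plt : 1/p < 1 := by rw [div_lt_one hp0]; exact hp
  have h1p'lt : 1/p' < 1 := by rw [div_lt_one hp'0]; exact hp'1
  -- notation
  set w : ℝ → ℝ≥0∞ := fun t => ENNReal.ofReal (v t ^ (1 - p')) with hw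
  have hwm : Measurable w := by fun_prop
  set V : ℝ → ℝ≥0∞ := fun t => ∫⁻ s in Ioc 0 t, w s with hV
  have hVmono : Monotone V := fun a b hab => lintegral_mono_set (Ioc_subset_Ioc_right hab)
  have hVm : Measurable V := hVmono.measurable
  set ub : ℝ → ℝ≥0∞ := fun x => ENNReal.ofReal (u x) with hub
  have hubm : Measurable ub := by fun_prop
  set U : ℝ → ℝ≥0∞ := fun t => ∫⁻ s in Ioi t, ub s with hU
  have hUanti : Antitone U := fun a b hab => lintegral_mono_set (Ioi_subset_Ioi hab)
  have hUm : Measurable U := hUanti.measurable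
  set F : ℝ → ℝ≥0∞ := fun x => ∫⁻ t in Ioc 0 x, ENNReal.ofReal (f t) with hF
  set h : ℝ → ℝ≥0∞ := fun t => ENNReal.ofReal (f t ^ p * v t) * V t ^ (1/p') with hh
  have hhm : Measurable h := by fun_prop
  set H : ℝ → ℝ≥0∞ := fun x => ∫⁻ t in Ioc 0 x, h t with hH
  have hHmono : Monotone H := fun a b hab => lintegral_mono_set (Ioc_subset_Ioc_right hab)
  have hHm : Measurable H := hHmono.measurable
  set Iv : ℝ≥0∞ := ∫⁻ x in Ioi (0:ℝ), ENNReal.ofReal (f x ^ p * v x) with hIv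
  -- positivity and finiteness of V, U
  have hVfin : ∀ x : ℝ, 0 < x → V x ≠ ⊤ := fun x hx => (hvL1 x hx).ne
  have hUfin : ∀ x : ℝ, 0 < x → U x ≠ ⊤ := fun x hx => (huL1 x hx).ne
  have hVpos : ∀ x : ℝ, 0 < x → 0 < V x := by
    intro x hx
    rw [hV, lintegral_pos_iff_support hwm]
    have hsub : Ioc 0 x ⊆ Function.support w := by
      intro t ht
      have hv0 : 0 < v t := hvpos t ht.1
      simp only [Function.mem_support, hw, Ne, ENNReal.ofReal_eq_zero, not_le]
      positivity
    rw [Measure.restrict_apply' measurableSet_Ioc]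
    have hss : Ioc 0 x ⊆ Function.support w ∩ Ioc 0 x := fun t ht => ⟨hsub ht, ht⟩
    calc (0:ℝ≥0∞) < ENNReal.ofReal x := by simpa using hx
      _ = volume (Ioc (0:ℝ) x) := by rw [Real.volume_Ioc, sub_zero]
      _ ≤ _ := measure_mono hss
  have hUpos : ∀ x : ℝ, 0 < x → 0 < U x := by
    intro x hx
    rw [hU, lintegral_pos_iff_support hubm]
    have hsub : Ioi x ⊆ Function.support ub := by
      intro t ht
      have : 0 < u t := hupos t (hx.trans ht)
      simp only [Function.mem_support, hub, Ne, ENNReal.ofReal_eq_zero, not_le]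
      exact this
    rw [Measure.restrict_apply' measurableSet_Ioi]
    have hss : Ioi x ⊆ Function.support ub ∩ Ioi x := fun t ht => ⟨hsub ht, ht⟩
    calc (0:ℝ≥0∞) < ⊤ := ENNReal.zero_lt_top
      _ = volume (Ioi x) := Real.volume_Ioi.symm
      _ ≤ _ := measure_mono hss
  -- D1 bound
  have hD1b : ∀ r : ℝ, 0 < r → U r ^ (1/q) * V r ^ (1/p') ≤ D1 := by
    intro r hr
    rw [hD1]
    exact le_iSup₂ (f := fun r _ => (∫⁻ x in Ioi r, ENNReal.ofReal (u x)) ^ (1/q) *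
      (∫⁻ x in Ioc 0 r, ENNReal.ofReal (v x ^ (1 - p'))) ^ (1/p')) r hr
  have hD1pos : 0 < D1 := by
    refine lt_of_lt_of_le ?_ (hD1b 1 one_pos)
    exact ENNReal.mul_pos
      (ENNReal.rpow_pos_of_nonneg (hUpos 1 one_pos) (by positivity)).ne'
      (ENNReal.rpow_pos_of_nonneg (hVpos 1 one_pos) (by positivity)).ne'
  -- dual bounds from D1
  have hVD : ∀ x : ℝ, 0 < x → V x ^ (1/p') ≤ D1 * U x ^ (-(1/q)) := by
    intro x hx
    have h1 : V x ^ (1/p') = U x ^ (-(1/q)) * (U x ^ (1/q) * V x ^ (1/p')) := by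
      rw [← mul_assoc, ENNReal.rpow_neg,
        ENNReal.inv_mul_cancel
          (ENNReal.rpow_pos_of_nonneg (hUpos x hx) (by positivity)).ne'
          (ENNReal.rpow_ne_top_of_nonneg (by positivity) (hUfin x hx)),
        one_mul]
    rw [h1, mul_comm]
    exact mul_le_mul_left (hD1b x hx) _
  have hUD : ∀ x : ℝ, 0 < x → U x ^ (1/q) ≤ D1 * V x ^ (-(1/p')) := by
    intro x hx
    have h1 : U x ^ (1/q) = V x ^ (-(1/p')) * (U x ^ (1/q) * V x ^ (1/p')) := by
      rw [mul_comm (U x ^ (1/q)), ← mul_assoc, ENNReal.rpow_neg,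
        ENNReal.inv_mul_cancel
          (ENNReal.rpow_pos_of_nonneg (hVpos x hx) (by positivity)).ne'
          (ENNReal.rpow_ne_top_of_nonneg (by positivity) (hVfin x hx)),
        one_mul]
    rw [h1, mul_comm]
    exact mul_le_mul_left (hD1b x hx) _
  -- Step A+B : pointwise bound on F
  have hstep : ∀ x : ℝ, 0 < x →
      F x ≤ (ENNReal.ofReal p') ^ (1/p') * V x ^ ((1/p') * (1/p')) * H x ^ (1/p) := by
    intro x hx
    set φ : ℝ → ℝ≥0∞ := fun t =>
      ENNReal.ofReal (f t) * ENNReal.ofReal (v t) ^ (1/p) * V t ^ (1/p * (1/p')) with hφ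
    set ψ : ℝ → ℝ≥0∞ := fun t =>
      ENNReal.ofReal (v t) ^ (-(1/p)) * V t ^ (-(1/p * (1/p'))) with hψ
    have hφm : Measurable φ := by fun_prop
    have hψm : Measurable ψ := by fun_prop
    have hfactor : ∀ t ∈ Ioc (0:ℝ) x, ENNReal.ofReal (f t) = φ t * ψ t := by
      intro t ht
      have hv0 : 0 < v t := hvpos t ht.1
      have ha0 : ENNReal.ofReal (v t) ≠ 0 := by
        simp only [Ne, ENNReal.ofReal_eq_zero, not_le]; exact hv0
      have hat : ENNReal.ofReal (v t) ≠ ⊤ := ENNReal.ofReal_ne_top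
      have hb0 : V t ≠ 0 := (hVpos t ht.1).ne'
      have hbt : V t ≠ ⊤ := hVfin t ht.1
      have hre : φ t * ψ t = ENNReal.ofReal (f t) *
          (ENNReal.ofReal (v t) ^ (1/p) * ENNReal.ofReal (v t) ^ (-(1/p))) *
          (V t ^ (1/p * (1/p')) * V t ^ (-(1/p * (1/p')))) := by
        rw [hφ, hψ]; ring
      rw [hre, ← ENNReal.rpow_add _ _ ha0 hat, ← ENNReal.rpow_add _ _ hb0 hbt]
      simp
    have h1 : F x = ∫⁻ t in Ioc 0 x, φ t * ψ t :=
      setLIntegral_congr_fun measurableSet_Ioc hfactor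
    have hHolder := ENNReal.lintegral_mul_le_Lp_mul_Lq (volume.restrict (Ioc 0 x)) hconj
      hφm.aemeasurable hψm.aemeasurable
    have hφp : ∀ t ∈ Ioc (0:ℝ) x, φ t ^ p = h t := by
      intro t ht
      have hv0 : 0 < v t := hvpos t ht.1
      rw [hφ]
      simp only
      rw [ENNReal.mul_rpow_of_nonneg _ _ hp0.le, ENNReal.mul_rpow_of_nonneg _ _ hp0.le,
        ← ENNReal.rpow_mul, ← ENNReal.rpow_mul,
        eA, eB,
        ENNReal.rpow_one,
        ENNReal.ofReal_rpow_of_nonneg (hfnn t) hp0.le,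
        hh]
      simp only
      rw [← ENNReal.ofReal_mul (Real.rpow_nonneg (hfnn t) p)]
    have hψp' : ∀ t ∈ Ioc (0:ℝ) x, ψ t ^ p' = w t * V t ^ (-(1/p)) := by
      intro t ht
      have hv0 : 0 < v t := hvpos t ht.1
      rw [hψ]
      simp only
      rw [ENNReal.mul_rpow_of_nonneg _ _ hp'0.le, ← ENNReal.rpow_mul, ← ENNReal.rpow_mul,
        eC, eD,
        hw]
      simp only
      rw [ENNReal.ofReal_rpow_of_pos hv0]
    rw [h1]
    refine hHolder.trans ?_
    rw [setLIntegral_congr_fun measurableSet_Ioc hφp,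
      setLIntegral_congr_fun measurableSet_Ioc hψp']
    have hkey := keyV w hwm h1ppos h1plt x
    rw [hip, h1p] at hkey
    calc (∫⁻ t in Ioc 0 x, h t) ^ (1/p) * (∫⁻ t in Ioc 0 x, w t * V t ^ (-(1/p))) ^ (1/p')
        ≤ H x ^ (1/p) * (V x ^ (1/p') * ENNReal.ofReal (1/(1-(1/p)))) ^ (1/p') := by
          rw [hip]
          exact mul_le_mul_right (ENNReal.rpow_le_rpow hkey (by positivity)) _
      _ = (ENNReal.ofReal p') ^ (1/p') * V x ^ ((1/p') * (1/p')) * H x ^ (1/p) := by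
          rw [hip, ENNReal.mul_rpow_of_nonneg _ _ (by positivity), ← ENNReal.rpow_mul]
          ring
  -- weighted measure
  set d : ℝ → ℝ≥0∞ := fun x => ub x * V x ^ ((1/p') * (1/p') * q) with hd
  have hdm : Measurable d := by fun_prop
  set μU : Measure ℝ := (volume.restrict (Ioi 0)).withDensity d with hμU
  haveI hsf : SigmaFinite μU := by
    apply SigmaFinite.withDensity_of_ne_top
    filter_upwards [ae_restrict_mem measurableSet_Ioi] with x hx
    exact ENNReal.mul_ne_top ENNReal.ofReal_ne_top
      (ENNReal.rpow_ne_top_of_nonneg (by positivity) (hVfin x hx))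
  -- Step C
  have hC : (∫⁻ x in Ioi (0:ℝ), F x ^ q * ub x)
      ≤ (ENNReal.ofReal p') ^ (q/p') * ∫⁻ x, H x ^ (q/p) ∂μU := by
    have hpt : ∀ x ∈ Ioi (0:ℝ), F x ^ q * ub x
        ≤ (ENNReal.ofReal p') ^ (q/p') * (d x * H x ^ (q/p)) := by
      intro x hx
      have h1 := ENNReal.rpow_le_rpow (hstep x hx) hq0.le
      rw [ENNReal.mul_rpow_of_nonneg _ _ hq0.le, ENNReal.mul_rpow_of_nonneg _ _ hq0.le,
        ← ENNReal.rpow_mul, ← ENNReal.rpow_mul, ← ENNReal.rpow_mul,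
        eE, eF] at h1
      calc F x ^ q * ub x
          ≤ (ENNReal.ofReal p') ^ (q/p') * V x ^ ((1/p') * (1/p') * q) * H x ^ (q/p) * ub x :=
            mul_le_mul_left h1 _
        _ = (ENNReal.ofReal p') ^ (q/p') * (d x * H x ^ (q/p)) := by
            rw [hd]; ring
    calc (∫⁻ x in Ioi (0:ℝ), F x ^ q * ub x)
        ≤ ∫⁻ x in Ioi (0:ℝ), (ENNReal.ofReal p') ^ (q/p') * (d x * H x ^ (q/p)) :=
          setLIntegral_mono_ae (by fun_prop) (Filter.Eventually.of_forall hpt)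
      _ = (ENNReal.ofReal p') ^ (q/p') * ∫⁻ x in Ioi (0:ℝ), d x * H x ^ (q/p) :=
          lintegral_const_mul' _ _
            (ENNReal.rpow_ne_top_of_nonneg (by positivity) ENNReal.ofReal_ne_top)
      _ = (ENNReal.ofReal p') ^ (q/p') * ∫⁻ x, H x ^ (q/p) ∂μU := by
          rw [hμU, lintegral_withDensity_eq_lintegral_mul _ hdm (by fun_prop)]
          rfl
  -- Minkowski setup
  set g : ℝ → ℝ → ℝ≥0∞ := fun t x => if t ≤ x then h t else 0 with hg
  have hgm : Measurable (Function.uncurry g) := by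
    apply Measurable.ite
    · exact measurableSet_le measurable_fst measurable_snd
    · exact hhm.comp measurable_fst
    · exact measurable_const
  have hHg : ∀ x : ℝ, (∫⁻ t in Ioi (0:ℝ), g t x) = H x := by
    intro x
    have hge : (fun t => g t x) = (Iic x).indicator h := by
      funext t; simp only [hg, Set.indicator_apply, mem_Iic]
    rw [hge, lintegral_indicator measurableSet_Iic,
      Measure.restrict_restrict measurableSet_Iic, hH]
    congr 1
    rw [inter_comm, Ioi_inter_Iic]
  have hinner : ∀ t : ℝ, (∫⁻ x, g t x ^ (q/p) ∂μU) = h t ^ (q/p) * μU (Ici t) := by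
    intro t
    have hge : (fun x => g t x ^ (q/p)) = (Ici t).indicator (fun _ => h t ^ (q/p)) := by
      funext x
      simp only [hg, Set.indicator_apply, mem_Ici]
      split_ifs with h1
      · rfl
      · exact ENNReal.zero_rpow_of_pos (by positivity)
    rw [hge, lintegral_indicator_const measurableSet_Ici]
  have hE : ∀ t : ℝ, 0 < t → μU (Ici t) ≤ D1 ^ (q/p') * (U t ^ (1/p) * ENNReal.ofReal p) := by
    intro t ht
    have h1 : μU (Ici t) = ∫⁻ x in Ioi t, d x := by
      rw [hμU, withDensity_apply _ measurableSet_Ici,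
        Measure.restrict_restrict measurableSet_Ici,
        show Ici t ∩ Ioi 0 = Ici t from inter_eq_left.mpr (fun y hy => lt_of_lt_of_le ht hy),
        ← restrict_Ioi_eq_restrict_Ici]
    have h2 : ∀ x ∈ Ioi t, d x ≤ D1 ^ (q/p') * (ub x * U x ^ (-(1/p'))) := by
      intro x hx
      have hx0 : 0 < x := ht.trans hx
      have h3 : V x ^ ((1/p') * (1/p') * q) ≤ D1 ^ (q/p') * U x ^ (-(1/p')) := by
        have h4 := ENNReal.rpow_le_rpow (hVD x hx0) (show (0:ℝ) ≤ q/p' by positivity)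
        rw [ENNReal.mul_rpow_of_nonneg _ _ (by positivity), ← ENNReal.rpow_mul,
          ← ENNReal.rpow_mul, eG, eH] at h4
        exact h4
      calc d x = ub x * V x ^ ((1/p') * (1/p') * q) := by rw [hd]
        _ ≤ ub x * (D1 ^ (q/p') * U x ^ (-(1/p'))) := mul_le_mul_right h3 _
        _ = D1 ^ (q/p') * (ub x * U x ^ (-(1/p'))) := by ring
    calc μU (Ici t) = ∫⁻ x in Ioi t, d x := h1
      _ ≤ ∫⁻ x in Ioi t, D1 ^ (q/p') * (ub x * U x ^ (-(1/p'))) :=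
          setLIntegral_mono_ae (by fun_prop) (Filter.Eventually.of_forall h2)
      _ = D1 ^ (q/p') * ∫⁻ x in Ioi t, ub x * U x ^ (-(1/p')) :=
          lintegral_const_mul' _ _ (ENNReal.rpow_ne_top_of_nonneg (by positivity) hD1fin.ne)
      _ ≤ D1 ^ (q/p') * (U t ^ (1/p) * ENNReal.ofReal p) := by
          have hkey := keyU ub hubm h1p'pos h1p'lt t
          rw [hip', h1p'] at hkey
          exact mul_le_mul_right hkey _
  have hFpt : ∀ t : ℝ, 0 < t → (∫⁻ x, g t x ^ (q/p) ∂μU) ^ (p/q)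
      ≤ D1 ^ p * (ENNReal.ofReal p) ^ (p/q) * ENNReal.ofReal (f t ^ p * v t) := by
    intro t ht
    have hb0 : V t ≠ 0 := (hVpos t ht).ne'
    have hbt : V t ≠ ⊤ := hVfin t ht
    rw [hinner t]
    calc (h t ^ (q/p) * μU (Ici t)) ^ (p/q)
        ≤ (h t ^ (q/p) * (D1 ^ (q/p') * (U t ^ (1/p) * ENNReal.ofReal p))) ^ (p/q) :=
          ENNReal.rpow_le_rpow (mul_le_mul_right (hE t ht) _) (by positivity)
      _ = h t * (D1 ^ (p/p') * (U t ^ (1/q) * (ENNReal.ofReal p) ^ (p/q))) := by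
          simp only [ENNReal.mul_rpow_of_nonneg _ _ (show (0:ℝ) ≤ p/q by positivity),
            ← ENNReal.rpow_mul]
          rw [eI, eJ, eK, ENNReal.rpow_one]
      _ ≤ h t * (D1 ^ (p/p') * ((D1 * V t ^ (-(1/p'))) * (ENNReal.ofReal p) ^ (p/q))) :=
          mul_le_mul_right (mul_le_mul_right (mul_le_mul_left (hUD t ht) _) _) _
      _ = D1 ^ p * (ENNReal.ofReal p) ^ (p/q) * ENNReal.ofReal (f t ^ p * v t) := by
          rw [hh]
          simp only
          have hVc : V t ^ (1/p') * V t ^ (-(1/p')) = 1 := by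
            rw [← ENNReal.rpow_add _ _ hb0 hbt]; simp
          have hDc : D1 ^ (p/p') * D1 = D1 ^ p := by
            nth_rewrite 2 [← ENNReal.rpow_one D1]
            rw [← ENNReal.rpow_add _ _ hD1pos.ne' hD1fin.ne, hpp', sub_add_cancel]
          calc (ENNReal.ofReal (f t ^ p * v t) * V t ^ (1/p')) *
                (D1 ^ (p/p') * ((D1 * V t ^ (-(1/p'))) * (ENNReal.ofReal p) ^ (p/q)))
              = (D1 ^ (p/p') * D1) * (ENNReal.ofReal p) ^ (p/q) *
                ENNReal.ofReal (f t ^ p * v t) * (V t ^ (1/p') * V t ^ (-(1/p'))) := by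
                ring
            _ = _ := by rw [hVc, hDc, mul_one]
  -- Minkowski application and final assembly
  have hmink := minkowski_lint μU (volume.restrict (Ioi (0:ℝ))) hr1 hgm
  rw [eP] at hmink
  have hM1 : (∫⁻ x, H x ^ (q/p) ∂μU)
      ≤ (∫⁻ t in Ioi (0:ℝ), (∫⁻ x, g t x ^ (q/p) ∂μU) ^ (p/q)) ^ (q/p) := by
    refine le_trans (le_of_eq (lintegral_congr fun x => ?_)) hmink
    rw [hHg x]
  have hM2 : (∫⁻ t in Ioi (0:ℝ), (∫⁻ x, g t x ^ (q/p) ∂μU) ^ (p/q))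
      ≤ D1 ^ p * (ENNReal.ofReal p) ^ (p/q) * Iv := by
    calc (∫⁻ t in Ioi (0:ℝ), (∫⁻ x, g t x ^ (q/p) ∂μU) ^ (p/q))
        ≤ ∫⁻ t in Ioi (0:ℝ),
            D1 ^ p * (ENNReal.ofReal p) ^ (p/q) * ENNReal.ofReal (f t ^ p * v t) :=
          setLIntegral_mono_ae (by fun_prop) (Filter.Eventually.of_forall fun t ht => hFpt t ht)
      _ = D1 ^ p * (ENNReal.ofReal p) ^ (p/q) * Iv := by
          rw [hIv, lintegral_const_mul' _ _ (ENNReal.mul_ne_top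
            (ENNReal.rpow_ne_top_of_nonneg (by positivity) hD1fin.ne)
            (ENNReal.rpow_ne_top_of_nonneg (by positivity) ENNReal.ofReal_ne_top))]
  have htotal : (∫⁻ x in Ioi (0:ℝ), F x ^ q * ub x)
      ≤ (ENNReal.ofReal p') ^ (q/p') *
        (D1 ^ p * (ENNReal.ofReal p) ^ (p/q) * Iv) ^ (q/p) :=
    hC.trans (mul_le_mul_right
      (hM1.trans (ENNReal.rpow_le_rpow hM2 (by positivity))) _)
  show (∫⁻ x in Ioi (0:ℝ), F x ^ q * ub x) ^ (1/q)
      ≤ D1 * ENNReal.ofReal (p' ^ (1/p')) * ENNReal.ofReal (p ^ (1/q)) * Iv ^ (1/p)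
  refine le_trans (ENNReal.rpow_le_rpow htotal (by positivity : (0:ℝ) ≤ 1/q)) (le_of_eq ?_)
  rw [ENNReal.mul_rpow_of_nonneg _ _ (by positivity : (0:ℝ) ≤ 1/q),
    ← ENNReal.rpow_mul (ENNReal.ofReal p'), ← ENNReal.rpow_mul, eL, eM,
    ENNReal.mul_rpow_of_nonneg _ _ (by positivity : (0:ℝ) ≤ 1/p),
    ENNReal.mul_rpow_of_nonneg _ _ (by positivity : (0:ℝ) ≤ 1/p),
    ← ENNReal.rpow_mul D1, ← ENNReal.rpow_mul (ENNReal.ofReal p), eN, eO,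
    ENNReal.rpow_one,
    ENNReal.ofReal_rpow_of_pos hp'0, ENNReal.ofReal_rpow_of_pos hp0]
  ring
end

section
/- Let $1<p\le q<\infty$, $p'=p/(p-1)$, and let $u,v:(0,\infty)\to(0,\infty)$ be measurable with $v^{1-p'}\in L^1_{loc}$. Suppose there is $C>0$ such that for all nonnegative measurable $f$, $\left(\int_0^\infty \left(\int_0^x f(t)\,dt\right)^q u(x)\,dx\right)^{1/q} \le C \left(\int_0^\infty f(x)^p v(x)\,dx\right)^{1/p}$. Then $\sup_{t>0}\left(\int_t^\infty u(x)\,dx\right)^{1/q}\left(\int_0^t v^{1-p'}(x)\,dx\right)^{1/p'} \le C$. -/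
open MeasureTheory Set
open scoped ENNReal

theorem hardy_necessity (p q p' : ℝ) (hp : 1 < p) (hpq : p ≤ q)
    (hp' : p' = p / (p - 1))
    (u v : ℝ → ℝ) (hu : Measurable u) (hv : Measurable v)
    (hupos : ∀ x ∈ Ioi (0:ℝ), 0 < u x) (hvpos : ∀ x ∈ Ioi (0:ℝ), 0 < v x)
    (hvL1 : ∀ r > (0:ℝ), (∫⁻ x in Ioc 0 r, ENNReal.ofReal (v x ^ (1 - p'))) < ⊤)
    (C : ℝ) (hC : 0 < C)
    (hineq : ∀ f : ℝ → ℝ, Measurable f → (∀ x, 0 ≤ f x) →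
      (∫⁻ x in Ioi (0:ℝ),
          (∫⁻ t in Ioc 0 x, ENNReal.ofReal (f t)) ^ q * ENNReal.ofReal (u x)) ^ (1/q)
        ≤ ENNReal.ofReal C *
          (∫⁻ x in Ioi (0:ℝ), ENNReal.ofReal (f x ^ p * v x)) ^ (1/p)) :
    (⨆ t ∈ Ioi (0:ℝ),
        (∫⁻ x in Ioi t, ENNReal.ofReal (u x)) ^ (1/q) *
        (∫⁻ x in Ioc 0 t, ENNReal.ofReal (v x ^ (1 - p'))) ^ (1/p'))
      ≤ ENNReal.ofReal C := by
  have hp0 : (0:ℝ) < p := lt_trans one_pos hp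
  have hq0 : (0:ℝ) < q := lt_of_lt_of_le hp0 hpq
  have hp'0 : (0:ℝ) < p' := by
    rw [hp']; exact div_pos hp0 (by linarith)
  have hsum : 1/p + 1/p' = 1 := by
    rw [hp']; field_simp; ring
  have hexp : (1 - p') * p + 1 = 1 - p' := by
    have hne : p - 1 ≠ 0 := by linarith
    rw [hp']
    field_simp
    ring
  -- measurable version of v ^ (1 - p') (valid where v > 0)
  set g : ℝ → ℝ := fun x => Real.exp (Real.log (v x) * (1 - p')) with hg
  have hgmeas : Measurable g := ((hv.log).mul measurable_const).exp
  have hgnn : ∀ x, 0 ≤ g x := fun x => (Real.exp_pos _).le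
  have hgv : ∀ x, 0 < v x → g x = v x ^ (1 - p') := by
    intro x hx
    rw [hg, Real.rpow_def_of_pos hx]
  refine iSup₂_le fun t ht => ?_
  have ht0 : (0:ℝ) < t := ht
  set V : ℝ≥0∞ := ∫⁻ x in Ioc 0 t, ENNReal.ofReal (v x ^ (1 - p')) with hV
  set U : ℝ≥0∞ := ∫⁻ x in Ioi t, ENNReal.ofReal (u x) with hU
  have hVg : V = ∫⁻ x in Ioc 0 t, ENNReal.ofReal (g x) := by
    rw [hV]
    refine setLIntegral_congr_fun measurableSet_Ioc (fun x hx => ?_)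
    rw [hgv x (hvpos x (mem_Ioi.2 hx.1))]
  have hVlt : V < ⊤ := hvL1 t ht0
  have hVpos : 0 < V := by
    rw [hVg, lintegral_pos_iff_support hgmeas.ennreal_ofReal]
    have hsub : Ioc 0 t ⊆ Function.support fun x => ENNReal.ofReal (g x) := by
      intro x _
      simp only [Function.mem_support, ne_eq, ENNReal.ofReal_eq_zero, not_le]
      exact Real.exp_pos _
    calc (0:ℝ≥0∞) < ENNReal.ofReal t := by simpa using ht0
      _ = (volume.restrict (Ioc 0 t)) (Ioc 0 t) := by
          rw [Measure.restrict_apply measurableSet_Ioc, inter_self, Real.volume_Ioc]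
          simp
      _ ≤ _ := measure_mono hsub
  -- test function
  set f : ℝ → ℝ := fun x => if x ∈ Ioc 0 t then g x else 0 with hf
  have hfmeas : Measurable f :=
    Measurable.ite measurableSet_Ioc hgmeas measurable_const
  have hfnn : ∀ x, 0 ≤ f x := by
    intro x
    rw [hf]
    by_cases hx : x ∈ Ioc 0 t
    · simp only [hx, if_true]; exact hgnn x
    · simp [hx]
  have key := hineq f hfmeas hfnn
  -- RHS bound
  have hRHS : (∫⁻ x in Ioi (0:ℝ), ENNReal.ofReal (f x ^ p * v x)) ≤ V := by
    have hle : ∀ x, ENNReal.ofReal (f x ^ p * v x)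
        ≤ (Ioc (0:ℝ) t).indicator (fun x => ENNReal.ofReal (g x)) x := by
      intro x
      by_cases hx : x ∈ Ioc 0 t
      · have hvx : 0 < v x := hvpos x (mem_Ioi.2 hx.1)
        rw [indicator_of_mem hx]
        have : f x ^ p * v x = g x := by
          rw [hf]; simp only [hx, if_true]
          rw [hgv x hvx, ← Real.rpow_mul hvx.le]
          conv_rhs => rw [← hexp, Real.rpow_add hvx, Real.rpow_one]
        rw [this]
      · rw [indicator_of_notMem hx, hf]
        simp only [hx, if_false]
        rw [Real.zero_rpow hp0.ne', zero_mul, ENNReal.ofReal_zero]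
    have hinter : Ioc (0:ℝ) t ∩ Ioi 0 = Ioc 0 t := inter_eq_left.2 fun x hx => hx.1
    calc (∫⁻ x in Ioi (0:ℝ), ENNReal.ofReal (f x ^ p * v x))
        ≤ ∫⁻ x in Ioi (0:ℝ),
            (Ioc (0:ℝ) t).indicator (fun x => ENNReal.ofReal (g x)) x :=
          lintegral_mono hle
      _ = ∫⁻ x in Ioc 0 t, ENNReal.ofReal (g x) := by
          rw [lintegral_indicator measurableSet_Ioc,
            Measure.restrict_restrict measurableSet_Ioc, hinter]
      _ = V := hVg.symm
  -- LHS bound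
  have hLHS : V * U ^ (1/q)
      ≤ (∫⁻ x in Ioi (0:ℝ),
          (∫⁻ s in Ioc 0 x, ENNReal.ofReal (f s)) ^ q * ENNReal.ofReal (u x)) ^ (1/q) := by
    have hVin : ∀ x ∈ Ioi t, V ≤ ∫⁻ s in Ioc 0 x, ENNReal.ofReal (f s) := by
      intro x hx
      have h1 : V = ∫⁻ s in Ioc 0 t, ENNReal.ofReal (f s) := by
        rw [hVg]
        refine setLIntegral_congr_fun measurableSet_Ioc (fun s hs => ?_)
        rw [hf]; simp [hs]
      rw [h1]
      exact lintegral_mono_set (Ioc_subset_Ioc_right (le_of_lt hx))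
    have h2 : V ^ q * U ≤ ∫⁻ x in Ioi (0:ℝ),
        (∫⁻ s in Ioc 0 x, ENNReal.ofReal (f s)) ^ q * ENNReal.ofReal (u x) := by
      calc V ^ q * U = ∫⁻ x in Ioi t, V ^ q * ENNReal.ofReal (u x) := by
            rw [hU, lintegral_const_mul' _ _ (ENNReal.rpow_ne_top_of_nonneg hq0.le hVlt.ne)]
        _ ≤ ∫⁻ x in Ioi t,
            (∫⁻ s in Ioc 0 x, ENNReal.ofReal (f s)) ^ q * ENNReal.ofReal (u x) := by
            refine setLIntegral_mono' measurableSet_Ioi fun x hx => ?_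
            exact mul_le_mul_left (ENNReal.rpow_le_rpow (hVin x hx) hq0.le) _
        _ ≤ _ := lintegral_mono_set fun x hx => lt_trans ht0 hx
    calc V * U ^ (1/q) = (V ^ q * U) ^ (1/q) := by
          rw [ENNReal.mul_rpow_of_nonneg _ _ (by positivity : (0:ℝ) ≤ 1/q),
            ← ENNReal.rpow_mul, mul_one_div_cancel hq0.ne', ENNReal.rpow_one]
      _ ≤ _ := ENNReal.rpow_le_rpow h2 (by positivity)
  have main : V * U ^ (1/q) ≤ ENNReal.ofReal C * V ^ (1/p) :=
    le_trans hLHS (le_trans key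
      (mul_le_mul_right (ENNReal.rpow_le_rpow hRHS (by positivity)) _))
  -- cancel V^(1/p)
  have hVsplit : V = V ^ (1/p) * V ^ (1/p') := by
    rw [← ENNReal.rpow_add _ _ hVpos.ne' hVlt.ne, hsum, ENNReal.rpow_one]
  nth_rewrite 1 [hVsplit] at main
  have hfin : V ^ (1/p) ≠ ⊤ := ENNReal.rpow_ne_top_of_nonneg (by positivity) hVlt.ne
  have hne : V ^ (1/p) ≠ 0 := by
    simp only [ne_eq, ENNReal.rpow_eq_zero_iff, not_or]
    constructor
    · rintro ⟨h, -⟩; exact hVpos.ne' h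
    · rintro ⟨h, -⟩; exact hVlt.ne h
  have : U ^ (1/q) * V ^ (1/p') ≤ ENNReal.ofReal C := by
    rw [← ENNReal.mul_le_mul_iff_right hne hfin]
    calc V ^ (1/p) * (U ^ (1/q) * V ^ (1/p'))
        = V ^ (1/p) * V ^ (1/p') * U ^ (1/q) := by ring
      _ ≤ ENNReal.ofReal C * V ^ (1/p) := main
      _ = V ^ (1/p) * ENNReal.ofReal C := mul_comm _ _
  exact this
end

section
/- Let $\alpha,\beta,s>0$ with $s\le\beta$. Let $f,g:(0,\infty)\to(0,\infty)$ be measurable with $f\in L^1((r,\infty))$ for all $r>0$ and $g\in L^1_{loc}$. Define $F(x)=\int_x^\infty f$ and $G(x)=\int_0^x g$. Then $\sup_{x>0} F(x)^\alpha G(x)^\beta \le \sup_{x>0}\left(\int_x^\infty f(y)G(y)^{(\beta-s)/\alpha}dy\right)^\alpha G(x)^s$. -/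
open MeasureTheory Set
open scoped ENNReal

theorem A1_le_A2_case_s_le_beta (α β s : ℝ) (hα : 0 < α) (hβ : 0 < β) (hs : 0 < s)
    (hsβ : s ≤ β)
    (f g : ℝ → ℝ) (hf : Measurable f) (hg : Measurable g)
    (hfpos : ∀ x ∈ Ioi (0:ℝ), 0 < f x) (hgpos : ∀ x ∈ Ioi (0:ℝ), 0 < g x)
    (hfint : ∀ r > (0:ℝ), IntegrableOn f (Ioi r))
    (hgint : ∀ r > (0:ℝ), IntegrableOn g (Ioc 0 r)) :
    (⨆ x ∈ Ioi (0:ℝ),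
        ENNReal.ofReal ((∫ y in Ioi x, f y) ^ α * (∫ y in Ioc 0 x, g y) ^ β))
      ≤ ⨆ x ∈ Ioi (0:ℝ),
        (∫⁻ y in Ioi x,
            ENNReal.ofReal (f y * (∫ t in Ioc 0 y, g t) ^ ((β - s) / α))) ^ α *
          ENNReal.ofReal ((∫ y in Ioc 0 x, g y) ^ s) := by
  set e := (β - s) / α with he
  have he0 : 0 ≤ e := div_nonneg (by linarith) hα.le
  have hGnonneg : ∀ t : ℝ, 0 ≤ ∫ y in Ioc 0 t, g y := fun t =>
    setIntegral_nonneg measurableSet_Ioc (fun y hy => (hgpos y hy.1).le)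
  refine iSup₂_le fun x hx => le_iSup₂_of_le x hx ?_
  have hx0 : (0:ℝ) < x := hx
  set F := ∫ y in Ioi x, f y with hF
  set G : ℝ → ℝ := fun t => ∫ y in Ioc 0 t, g y with hGdef
  have hFnonneg : 0 ≤ F :=
    setIntegral_nonneg measurableSet_Ioi (fun y hy => (hfpos y (hx0.trans hy)).le)
  have hGmono : ∀ y, x ≤ y → G x ≤ G y := by
    intro y hxy
    refine setIntegral_mono_set (hgint y (hx0.trans_le hxy)) ?_ ?_
    · filter_upwards [ae_restrict_mem measurableSet_Ioc] with t ht using (hgpos t ht.1).le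
    · exact HasSubset.Subset.eventuallyLE (Ioc_subset_Ioc_right hxy)
  have hGxnonneg : 0 ≤ G x := hGnonneg x
  -- key algebraic identity
  have key : F ^ α * G x ^ β = (F * G x ^ e) ^ α * G x ^ s := by
    rw [Real.mul_rpow hFnonneg (Real.rpow_nonneg hGxnonneg e),
      ← Real.rpow_mul hGxnonneg]
    have : e * α = β - s := by
      rw [he, div_mul_cancel₀ _ hα.ne']
    rw [this, mul_assoc, ← Real.rpow_add' hGxnonneg (by linarith)]
    ring_nf
  rw [key]
  have hFc : ENNReal.ofReal (F * G x ^ e)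
      ≤ ∫⁻ y in Ioi x, ENNReal.ofReal (f y * G y ^ e) := by
    have h1 : F * G x ^ e = ∫ y in Ioi x, f y * G x ^ e := by
      rw [integral_mul_const]
    have hint : IntegrableOn (fun y => f y * G x ^ e) (Ioi x) :=
      (hfint x hx0).mul_const _
    calc ENNReal.ofReal (F * G x ^ e)
        ≤ ∫⁻ y in Ioi x, ENNReal.ofReal (f y * G x ^ e) := by
          rw [h1]
          refine le_of_eq (ofReal_integral_eq_lintegral_ofReal hint ?_)
          filter_upwards [ae_restrict_mem measurableSet_Ioi] with y hy using
            mul_nonneg (hfpos y (hx0.trans hy)).le (Real.rpow_nonneg hGxnonneg e)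
      _ ≤ ∫⁻ y in Ioi x, ENNReal.ofReal (f y * G y ^ e) := by
          refine lintegral_mono_ae ?_
          filter_upwards [ae_restrict_mem measurableSet_Ioi] with y hy
          exact ENNReal.ofReal_le_ofReal
            (mul_le_mul_of_nonneg_left
              (Real.rpow_le_rpow hGxnonneg (hGmono y hy.le) he0)
              (hfpos y (hx0.trans hy)).le)
  calc ENNReal.ofReal ((F * G x ^ e) ^ α * G x ^ s)
      = ENNReal.ofReal ((F * G x ^ e) ^ α) * ENNReal.ofReal (G x ^ s) := by
        rw [ENNReal.ofReal_mul (Real.rpow_nonneg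
          (mul_nonneg hFnonneg (Real.rpow_nonneg hGxnonneg e)) α)]
    _ = ENNReal.ofReal (F * G x ^ e) ^ α * ENNReal.ofReal (G x ^ s) := by
        rw [← ENNReal.ofReal_rpow_of_nonneg
          (mul_nonneg hFnonneg (Real.rpow_nonneg hGxnonneg e)) hα.le]
    _ ≤ (∫⁻ y in Ioi x, ENNReal.ofReal (f y * G y ^ e)) ^ α
          * ENNReal.ofReal (G x ^ s) :=
        mul_le_mul_left (ENNReal.rpow_le_rpow hFc hα.le) _
end

section
/- Let $\alpha,\beta,s>0$. Let $f,g:(0,\infty)\to(0,\infty)$ be measurable with $F(x)=\int_x^\infty f$ and $G(x)=\int_0^x g$ both finite and positive for all $x>0$. Then $\sup_{x>0} F(x)^\alpha G(x)^\beta \le \left(\max(1,\tfrac{s}{\beta})\right)^\alpha \sup_{x>0}\left(\int_x^\infty f(y)G(y)^{(\beta-s)/\alpha}dy\right)^\alpha G(x)^s$ and $\sup_{x>0}\left(\int_x^\infty f(y)G(y)^{(\beta-s)/\alpha}dy\right)^\alpha G(x)^s \le \left(\max(1,\tfrac{\beta}{s})\right)^\alpha \sup_{x>0} F(x)^\alpha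 G(x)^\beta$. -/
open MeasureTheory Set
open scoped ENNReal

noncomputable def Gf (g : ℝ → ℝ) (x : ℝ) : ℝ := ∫ y in Ioc 0 x, g y

section GBasic

variable {g : ℝ → ℝ}

lemma Gf_mono (hgpos : ∀ x ∈ Ioi (0:ℝ), 0 < g x)
    (hgint : ∀ r > (0:ℝ), IntegrableOn g (Ioc 0 r)) : Monotone (Gf g) := by
  intro a b hab
  rcases le_or_gt b 0 with hb | hb
  · simp [Gf, Ioc_eq_empty_of_le (le_trans hab hb), Ioc_eq_empty_of_le hb]
  · apply setIntegral_mono_set (hgint b hb)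
    · exact (ae_restrict_iff' measurableSet_Ioc).2
        (ae_of_all _ fun x hx => (hgpos x hx.1).le)
    · exact HasSubset.Subset.eventuallyLE (Ioc_subset_Ioc_right hab)

lemma Gf_add (hgint : ∀ r > (0:ℝ), IntegrableOn g (Ioc 0 r)) {a b : ℝ}
    (ha : 0 < a) (hab : a ≤ b) : Gf g b = Gf g a + ∫ t in Ioc a b, g t := by
  have hb : 0 < b := lt_of_lt_of_le ha hab
  rw [Gf, Gf, ← setIntegral_union (Set.Ioc_disjoint_Ioc_of_le le_rfl) measurableSet_Ioc
      ((hgint b hb).mono_set (Ioc_subset_Ioc_right hab))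
      ((hgint b hb).mono_set (Ioc_subset_Ioc_left ha.le)),
    Ioc_union_Ioc_eq_Ioc ha.le hab]

lemma Gf_measurable (hgpos : ∀ x ∈ Ioi (0:ℝ), 0 < g x)
    (hgint : ∀ r > (0:ℝ), IntegrableOn g (Ioc 0 r)) : Measurable (Gf g) :=
  (Gf_mono hgpos hgint).measurable

lemma Gf_contAt (hgint : ∀ r > (0:ℝ), IntegrableOn g (Ioc 0 r)) {t : ℝ} (ht : 0 < t) :
    ContinuousAt (Gf g) t := by
  set a := t / 2 with ha_def
  have ha : 0 < a := by positivity
  have hat : a < t := by linarith [half_lt_self ht]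
  have hint : IntegrableOn g (Icc a (t + 1)) :=
    (hgint (t + 1) (by linarith)).mono_set (fun u hu => ⟨lt_of_lt_of_le ha hu.1, hu.2⟩)
  have hcont : ContinuousOn (fun x => Gf g a + ∫ u in Ioc a x, g u) (Icc a (t + 1)) :=
    (continuousOn_const.add (intervalIntegral.continuousOn_primitive hint))
  have heq : ∀ x ∈ Icc a (t + 1), Gf g x = Gf g a + ∫ u in Ioc a x, g u := fun x hx =>
    Gf_add hgint ha hx.1
  have hcont' : ContinuousOn (Gf g) (Icc a (t + 1)) := hcont.congr heq
  exact hcont'.continuousAt (Icc_mem_nhds hat (by linarith))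

lemma Gf_contOn (hgint : ∀ r > (0:ℝ), IntegrableOn g (Ioc 0 r)) {x y : ℝ} (hx : 0 < x) :
    ContinuousOn (Gf g) (Icc x y) := fun t ht =>
  (Gf_contAt hgint (lt_of_lt_of_le hx ht.1)).continuousWithinAt

end GBasic

section Tau

variable {g : ℝ → ℝ}

/-- the first point in `[x,y]` where `G` reaches value `w` -/
noncomputable def tauf (g : ℝ → ℝ) (x y w : ℝ) : ℝ :=
  sInf {c | c ∈ Icc x y ∧ w ≤ Gf g c}

lemma tauf_spec (hgpos : ∀ x ∈ Ioi (0:ℝ), 0 < g x)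
    (hgint : ∀ r > (0:ℝ), IntegrableOn g (Ioc 0 r))
    {x y w : ℝ} (hx : 0 < x) (hxy : x ≤ y) (hw : Gf g x ≤ w) (hwb : w ≤ Gf g y) :
    tauf g x y w ∈ Icc x y ∧ Gf g (tauf g x y w) = w := by
  have hGc : ContinuousOn (Gf g) (Icc x y) := Gf_contOn hgint hx
  set S : Set ℝ := {c | c ∈ Icc x y ∧ w ≤ Gf g c} with hS
  have hSc : IsClosed S := by
    have : S = Icc x y ∩ Gf g ⁻¹' (Ici w) := rfl
    rw [this]
    exact hGc.preimage_isClosed_of_isClosed isClosed_Icc isClosed_Ici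
  have hne : S.Nonempty := ⟨y, ⟨hxy, le_refl y⟩, hwb⟩
  have hbdd : BddBelow S := ⟨x, fun c hc => hc.1.1⟩
  have hmem : tauf g x y w ∈ S := hSc.csInf_mem hne hbdd
  refine ⟨hmem.1, le_antisymm ?_ hmem.2⟩
  rcases eq_or_lt_of_le hmem.1.1 with heq | hlt
  · rw [← heq]; exact hw
  · -- x < tau; on (x, tau) we have G < w, pass to the limit
    set τ := tauf g x y w
    have hlim : Filter.Tendsto (Gf g) (nhdsWithin τ (Ioo x τ)) (nhds (Gf g τ)) := by
      have h1 : ContinuousWithinAt (Gf g) (Icc x y) τ := hGc τ hmem.1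
      exact h1.tendsto.mono_left (nhdsWithin_mono τ (fun c hc =>
        ⟨hc.1.le, le_trans hc.2.le hmem.1.2⟩))
    have hne2 : (nhdsWithin τ (Ioo x τ)).NeBot := by
      rw [mem_closure_iff_nhdsWithin_neBot.symm]
      rw [closure_Ioo (ne_of_lt hlt)]
      exact ⟨hlt.le, le_refl τ⟩
    refine le_of_tendsto hlim (Filter.Eventually.mono self_mem_nhdsWithin ?_)
    intro c hc
    by_contra hcon
    push_neg at hcon
    have : c ∈ S := ⟨⟨hc.1.le, le_trans hc.2.le hmem.1.2⟩, hcon.le⟩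
    exact absurd (csInf_le hbdd this) (not_le.2 hc.2)

lemma tauf_mono {x y w w' : ℝ} (hww' : w ≤ w')
    (hS' : {c | c ∈ Icc x y ∧ w' ≤ Gf g c}.Nonempty) :
    tauf g x y w ≤ tauf g x y w' := by
  apply csInf_le_csInf ⟨x, fun c hc => hc.1.1⟩ hS'
  exact fun c hc => ⟨hc.1, le_trans hww' hc.2⟩

end Tau

section Wint

variable {g : ℝ → ℝ}

lemma Wint (hg : Measurable g) (hgpos : ∀ x ∈ Ioi (0:ℝ), 0 < g x)
    (hgint : ∀ r > (0:ℝ), IntegrableOn g (Ioc 0 r))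
    (hGpos : ∀ x > (0:ℝ), 0 < Gf g x) (e : ℝ) {x y : ℝ} (hx : 0 < x) :
    IntegrableOn (fun u => g u * Gf g u ^ e) (Ioc x y) := by
  rcases le_or_gt y x with hyx | hxy
  · rw [Ioc_eq_empty_of_le hyx]; exact integrableOn_empty
  set C : ℝ := max (Gf g x ^ e) (Gf g y ^ e) with hC
  have hmeas : Measurable fun u => g u * Gf g u ^ e :=
    hg.mul ((Gf_measurable hgpos hgint).pow_const e)
  have hgy : IntegrableOn g (Ioc x y) :=
    (hgint y (lt_trans hx hxy)).mono_set (Ioc_subset_Ioc_left hx.le)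
  refine Integrable.mono' (hgy.const_mul C) hmeas.aestronglyMeasurable ?_
  refine (ae_restrict_iff' measurableSet_Ioc).2 (ae_of_all _ fun u hu => ?_)
  have hu0 : 0 < u := lt_trans hx hu.1
  have hgu : 0 ≤ g u := (hgpos u hu0).le
  have hGu : 0 < Gf g u := hGpos u hu0
  have hGx : 0 < Gf g x := hGpos x hx
  have hbound : Gf g u ^ e ≤ C := by
    rcases le_or_gt 0 e with he | he
    · exact le_max_of_le_right
        (Real.rpow_le_rpow hGu.le (Gf_mono hgpos hgint hu.2) he)
    · exact le_max_of_le_left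
        (Real.rpow_le_rpow_of_nonpos hGx (Gf_mono hgpos hgint hu.1.le) he.le)
  rw [Real.norm_eq_abs, abs_of_nonneg (mul_nonneg hgu (Real.rpow_nonneg hGu.le e))]
  calc g u * Gf g u ^ e ≤ g u * C := mul_le_mul_of_nonneg_left hbound hgu
    _ = C * g u := mul_comm _ _

end Wint

section Facts

variable {g : ℝ → ℝ}

lemma factB_real (hg : Measurable g) (hgpos : ∀ x ∈ Ioi (0:ℝ), 0 < g x)
    (hgint : ∀ r > (0:ℝ), IntegrableOn g (Ioc 0 r))
    (hGpos : ∀ x > (0:ℝ), 0 < Gf g x) {p x y : ℝ} (hp : 0 < p)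
    (hx : 0 < x) (hxy : x ≤ y) :
    (Gf g y ^ p - Gf g x ^ p) / p ≤ ∫ u in Ioc x y, g u * Gf g u ^ (p - 1) := by
  set W : ℝ → ℝ := fun u => g u * Gf g u ^ (p - 1) with hW
  set a := Gf g x with ha_def
  set b := Gf g y with hb_def
  have ha : 0 < a := hGpos x hx
  have hab : a ≤ b := Gf_mono hgpos hgint hxy
  set I := ∫ u in Ioc x y, W u with hI
  have hWnonneg : ∀ u, 0 < u → 0 ≤ W u := fun u hu =>
    mul_nonneg (hgpos u hu).le (Real.rpow_nonneg (hGpos u hu).le _)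
  have hInn : 0 ≤ I :=
    setIntegral_nonneg measurableSet_Ioc (fun u hu => hWnonneg u (lt_trans hx hu.1))
  rcases eq_or_lt_of_le hab with heq | hab'
  · rw [← heq]; simpa using hInn
  set D : ℝ := a ^ (p - 1) + b ^ (p - 1) with hD
  have hDpos : 0 < D := by
    have := Real.rpow_pos_of_pos ha (p - 1)
    have := Real.rpow_pos_of_pos (lt_trans ha hab') (p - 1)
    positivity
  -- main claim for each n
  have hclaim : ∀ n : ℕ, (b ^ p - a ^ p) / p - ((b - a) / (n + 1)) * D ≤ I := by
    intro n
    set N : ℕ := n + 1 with hN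
    have hNpos : (0:ℝ) < N := by positivity
    set Δ : ℝ := (b - a) / N with hΔdef
    have hΔ : 0 < Δ := div_pos (by linarith) hNpos
    set v : ℕ → ℝ := fun i => a + i * Δ with hv
    have hvmono : ∀ {i j : ℕ}, i ≤ j → v i ≤ v j := by
      intro i j hij
      have : (i:ℝ) ≤ j := Nat.cast_le.2 hij
      simp only [hv]; nlinarith
    have hva : ∀ i, a ≤ v i := fun i => le_add_of_nonneg_right (by positivity)
    have hvpos : ∀ i, 0 < v i := fun i => lt_of_lt_of_le ha (hva i)
    have hvle : ∀ i, i ≤ N → v i ≤ b := by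
      intro i hi
      have h1 : (i:ℝ) * Δ ≤ N * Δ :=
        mul_le_mul_of_nonneg_right (Nat.cast_le.2 hi) hΔ.le
      have h2 : (N:ℝ) * Δ = b - a := by
        rw [hΔdef]; field_simp
      simp only [hv]; linarith
    have hv0 : v 0 = a := by simp [hv]
    have hvN : v N = b := by
      have h2 : (N:ℝ) * Δ = b - a := by rw [hΔdef]; field_simp
      simp only [hv]; linarith
    set t : ℕ → ℝ := fun i => tauf g x y (min (v i) b) with ht
    have htspec : ∀ i, t i ∈ Icc x y ∧ Gf g (t i) = min (v i) b := fun i =>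
      tauf_spec hgpos hgint hx hxy (le_min (hva i) hab) (min_le_right _ _)
    have htmono : ∀ i j, i ≤ j → t i ≤ t j := fun i j hij =>
      tauf_mono (min_le_min (hvmono hij) le_rfl)
        ⟨y, ⟨⟨hxy, le_rfl⟩, min_le_right _ _⟩⟩
    have hGt : ∀ i, i ≤ N → Gf g (t i) = v i := fun i hi => by
      rw [(htspec i).2, min_eq_left (hvle i hi)]
    have htx : ∀ i, 0 < t i := fun i => lt_of_lt_of_le hx (htspec i).1.1
    -- the measure of each piece
    have hgpiece : ∀ i, i < N → (∫ u in Ioc (t i) (t (i+1)), g u) = Δ := by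
      intro i hi
      have h1 := Gf_add hgint (htx i) (htmono i (i+1) (Nat.le_succ i))
      rw [hGt (i+1) (Nat.succ_le_of_lt hi), hGt i hi.le] at h1
      have : v (i + 1) - v i = Δ := by simp only [hv]; push_cast; ring
      linarith
    -- integrability
    have hWI : IntegrableOn W (Ioc x y) := Wint hg hgpos hgint hGpos (p-1) hx
    have hWsub : ∀ {c d : ℝ}, x ≤ c → c ≤ d → d ≤ y →
        IntervalIntegrable W volume c d := by
      intro c d hc hcd hdy
      rw [intervalIntegrable_iff_integrableOn_Ioc_of_le hcd]
      exact hWI.mono_set (Ioc_subset_Ioc hc hdy)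
    -- bounds for the power function
    obtain ⟨m, M, hmM, htel⟩ : ∃ m M : ℕ → ℝ,
        (∀ i, ∀ u ∈ Icc (v i) (v (i+1)), m i ≤ u ^ (p-1) ∧ u ^ (p-1) ≤ M i) ∧
        (∑ i ∈ Finset.range N, (M i - m i)) ≤ D := by
      rcases le_total p 1 with hp1 | hp1
      · refine ⟨fun i => v (i+1) ^ (p-1), fun i => v i ^ (p-1), ?_, ?_⟩
        · intro i u hu
          have hu0 : 0 < u := lt_of_lt_of_le (hvpos i) hu.1
          exact ⟨Real.rpow_le_rpow_of_nonpos hu0 hu.2 (by linarith),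
            Real.rpow_le_rpow_of_nonpos (hvpos i) hu.1 (by linarith)⟩
        · rw [Finset.sum_range_sub' (fun i => v i ^ (p-1))]
          rw [hv0, hvN]
          have h1 : 0 ≤ b ^ (p-1) := Real.rpow_nonneg (by linarith) _
          simp only [hD]; linarith
      · refine ⟨fun i => v i ^ (p-1), fun i => v (i+1) ^ (p-1), ?_, ?_⟩
        · intro i u hu
          exact ⟨Real.rpow_le_rpow (hvpos i).le hu.1 (by linarith),
            Real.rpow_le_rpow (lt_of_lt_of_le (hvpos i) hu.1).le hu.2 (by linarith)⟩
        · rw [Finset.sum_range_sub (fun i => v i ^ (p-1))]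
          rw [hv0, hvN]
          have h1 : 0 ≤ a ^ (p-1) := Real.rpow_nonneg ha.le _
          simp only [hD]; linarith
    -- each piece of I is bounded below
    have hpiece : ∀ i, i < N → m i * Δ ≤ ∫ u in Ioc (t i) (t (i+1)), W u := by
      intro i hi
      have hle : ∀ u ∈ Ioc (t i) (t (i+1)), m i * g u ≤ W u := by
        intro u hu
        have hu0 : 0 < u := lt_trans (htx i) hu.1
        have hGu : Gf g u ∈ Icc (v i) (v (i+1)) := by
          constructor
          · rw [← hGt i hi.le]; exact Gf_mono hgpos hgint hu.1.le
          · rw [← hGt (i+1) (Nat.succ_le_of_lt hi)]; exact Gf_mono hgpos hgint hu.2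
        have h1 := (hmM i (Gf g u) hGu).1
        have h2 : m i * g u ≤ Gf g u ^ (p-1) * g u :=
          mul_le_mul_of_nonneg_right h1 (hgpos u hu0).le
        calc m i * g u ≤ Gf g u ^ (p-1) * g u := h2
          _ = W u := by rw [hW]; ring
      have hgint' : IntegrableOn g (Ioc (t i) (t (i+1))) :=
        (hgint (max (t (i+1)) 1) (by positivity)).mono_set
          (fun u hu => ⟨lt_trans (htx i) hu.1, le_trans hu.2 (le_max_left _ _)⟩)
      calc m i * Δ = ∫ u in Ioc (t i) (t (i+1)), m i * g u := by
            rw [MeasureTheory.integral_const_mul, hgpiece i hi]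
        _ ≤ ∫ u in Ioc (t i) (t (i+1)), W u := by
            apply setIntegral_mono_on (hgint'.const_mul _) ?_ measurableSet_Ioc hle
            exact hWI.mono_set (Ioc_subset_Ioc (htspec i).1.1 (htspec (i+1)).1.2)
    -- sum of pieces is at most I
    have hIsum : (∑ i ∈ Finset.range N, ∫ u in Ioc (t i) (t (i+1)), W u) ≤ I := by
      have h1 : ∀ i, i < N → (∫ u in Ioc (t i) (t (i+1)), W u)
          = ∫ u in (t i)..(t (i+1)), W u := fun i hi =>
        (intervalIntegral.integral_of_le (htmono i (i+1) (Nat.le_succ i))).symm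
      rw [Finset.sum_congr rfl (fun i hi => h1 i (Finset.mem_range.1 hi))]
      rw [intervalIntegral.sum_integral_adjacent_intervals (fun k hk =>
        hWsub (htspec k).1.1 (htmono k (k+1) (Nat.le_succ k)) (htspec (k+1)).1.2)]
      have h2 : (∫ u in x..(t 0), W u) + ∫ u in (t 0)..(t N), W u
          = ∫ u in x..(t N), W u :=
        intervalIntegral.integral_add_adjacent_intervals
          (hWsub le_rfl (htspec 0).1.1 (htspec 0).1.2)
          (hWsub (htspec 0).1.1 (htmono 0 N (Nat.zero_le N)) (htspec N).1.2)
      have h3 : (∫ u in x..(t N), W u) + ∫ u in (t N)..y, W u = ∫ u in x..y, W u :=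
        intervalIntegral.integral_add_adjacent_intervals
          (hWsub le_rfl (htspec N).1.1 (htspec N).1.2)
          (hWsub (htspec N).1.1 (htspec N).1.2 le_rfl)
      have h4 : 0 ≤ ∫ u in x..(t 0), W u :=
        intervalIntegral.integral_nonneg (htspec 0).1.1
          (fun u hu => hWnonneg u (lt_of_lt_of_le hx hu.1))
      have h5 : 0 ≤ ∫ u in (t N)..y, W u :=
        intervalIntegral.integral_nonneg (htspec N).1.2
          (fun u hu => hWnonneg u (lt_of_lt_of_le (htx N) hu.1))
      have h6 : I = ∫ u in x..y, W u := by rw [hI, intervalIntegral.integral_of_le hxy]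
      rw [h6, ← h3, ← h2]
      linarith
    -- comparison with the integral of the power function
    have hrint : ∀ i : ℕ, IntervalIntegrable (fun u : ℝ => u ^ (p-1)) volume (v i) (v (i+1)) :=
      fun i => intervalIntegral.intervalIntegrable_rpow' (by linarith)
    have hper : ∀ i, i < N → (∫ u in (v i)..(v (i+1)), u ^ (p-1)) ≤ M i * Δ := by
      intro i hi
      have h1 := intervalIntegral.integral_mono_on (μ := volume)
          (g := fun _ : ℝ => M i) (hvmono (Nat.le_succ i)) (hrint i)
          intervalIntegrable_const (fun u hu => (hmM i u hu).2)
      rw [intervalIntegral.integral_const] at h1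
      have h2 : v (i+1) - v i = Δ := by simp only [hv]; push_cast; ring
      rw [h2] at h1
      simpa [mul_comm] using h1
    have hsum1 : (∑ i ∈ Finset.range N, ∫ u in (v i)..(v (i+1)), u ^ (p-1))
        = (b ^ p - a ^ p) / p := by
      rw [intervalIntegral.sum_integral_adjacent_intervals (fun k _ => hrint k)]
      rw [hv0, hvN]
      rw [integral_rpow (Or.inl (by linarith))]
      norm_num
    -- put everything together
    have hfinal : (b ^ p - a ^ p) / p ≤ I + D * Δ := by
      have h1 : (b ^ p - a ^ p) / p ≤ ∑ i ∈ Finset.range N, M i * Δ := by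
        rw [← hsum1]
        exact Finset.sum_le_sum (fun i hi => hper i (Finset.mem_range.1 hi))
      have h2 : (∑ i ∈ Finset.range N, M i * Δ)
          = (∑ i ∈ Finset.range N, m i * Δ) + (∑ i ∈ Finset.range N, (M i - m i)) * Δ := by
        rw [Finset.sum_mul, ← Finset.sum_add_distrib]
        exact Finset.sum_congr rfl (fun i _ => by ring)
      have h3 : (∑ i ∈ Finset.range N, m i * Δ) ≤ I :=
        le_trans (Finset.sum_le_sum (fun i hi => hpiece i (Finset.mem_range.1 hi))) hIsum
      have h4 : (∑ i ∈ Finset.range N, (M i - m i)) * Δ ≤ D * Δ :=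
        mul_le_mul_of_nonneg_right htel hΔ.le
      exact h1.trans (h2.le.trans (add_le_add h3 h4))
    have hΔD : D * Δ = ((b - a) / (N:ℝ)) * D := by rw [hΔdef]; ring
    rw [hΔD] at hfinal
    have : ((n:ℝ) + 1) = (N:ℝ) := by rw [hN]; push_cast; ring
    rw [this]
    linarith
  -- take the limit n → ∞
  have hlim : Filter.Tendsto
      (fun n : ℕ => (b ^ p - a ^ p) / p - ((b - a) / (n + 1)) * D)
      Filter.atTop (nhds ((b ^ p - a ^ p) / p)) := by
    have h1 : Filter.Tendsto (fun n : ℕ => ((b - a) / (n + 1)) * D)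
        Filter.atTop (nhds 0) := by
      have h2 : Filter.Tendsto (fun n : ℕ => (1:ℝ) / (n + 1)) Filter.atTop (nhds 0) :=
        tendsto_one_div_add_atTop_nhds_zero_nat
      have h3 := h2.const_mul ((b - a) * D)
      simp only [mul_zero] at h3
      convert h3 using 2 with n
      ring
    have h4 := Filter.Tendsto.sub (tendsto_const_nhds
      (x := (b ^ p - a ^ p) / p) (f := Filter.atTop (α := ℕ))) h1
    simpa using h4
  exact le_of_tendsto hlim (Filter.Eventually.of_forall hclaim)

end Facts

section FactA

variable {g : ℝ → ℝ}

lemma factA_real (hg : Measurable g) (hgpos : ∀ x ∈ Ioi (0:ℝ), 0 < g x)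
    (hgint : ∀ r > (0:ℝ), IntegrableOn g (Ioc 0 r))
    (hGpos : ∀ x > (0:ℝ), 0 < Gf g x) {q x y : ℝ} (hq : 0 < q)
    (hx : 0 < x) (hxy : x ≤ y) :
    (∫ u in Ioc x y, g u * Gf g u ^ (-q - 1)) ≤ Gf g x ^ (-q) / q := by
  set W : ℝ → ℝ := fun u => g u * Gf g u ^ (-q - 1) with hW
  set a := Gf g x with ha_def
  set b := Gf g y with hb_def
  have ha : 0 < a := hGpos x hx
  have hab : a ≤ b := Gf_mono hgpos hgint hxy
  set I := ∫ u in Ioc x y, W u with hI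
  have hRHS : 0 < a ^ (-q) / q := by
    have := Real.rpow_pos_of_pos ha (-q); positivity
  have hgIoc : ∀ {c d : ℝ}, 0 < c → c ≤ d → (∫ u in Ioc c d, g u) = Gf g d - Gf g c := by
    intro c d hc hcd
    have := Gf_add hgint hc hcd; linarith
  -- a piece on which Gf is constant contributes zero
  have hconst : ∀ {c d w : ℝ}, 0 < c → c ≤ d → Gf g c = w → Gf g d = w →
      (∫ u in Ioc c d, W u) = 0 := by
    intro c d w hc hcd hgc hgd
    have heq : ∀ u ∈ Ioc c d, W u = w ^ (-q-1) * g u := by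
      intro u hu
      have h1 : Gf g u = w := le_antisymm (hgd ▸ Gf_mono hgpos hgint hu.2)
        (hgc ▸ Gf_mono hgpos hgint hu.1.le)
      rw [hW]; simp only; rw [h1]; ring
    rw [setIntegral_congr_fun measurableSet_Ioc heq, MeasureTheory.integral_const_mul,
      hgIoc hc hcd, hgc, hgd, sub_self, mul_zero]
  rcases eq_or_lt_of_le hab with heq | hab'
  · have : I = 0 := hconst hx hxy rfl heq.symm
    rw [this]; exact hRHS.le
  set D : ℝ := a ^ (-q - 1) with hD
  have hDpos : 0 < D := Real.rpow_pos_of_pos ha _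
  have hclaim : ∀ n : ℕ, I ≤ a ^ (-q) / q + ((b - a) / (n + 1)) * D := by
    intro n
    set N : ℕ := n + 1 with hN
    have hNpos : (0:ℝ) < N := by positivity
    set Δ : ℝ := (b - a) / N with hΔdef
    have hΔ : 0 < Δ := div_pos (by linarith) hNpos
    set v : ℕ → ℝ := fun i => a + i * Δ with hv
    have hvmono : ∀ {i j : ℕ}, i ≤ j → v i ≤ v j := by
      intro i j hij
      have : (i:ℝ) ≤ j := Nat.cast_le.2 hij
      simp only [hv]; nlinarith
    have hva : ∀ i, a ≤ v i := fun i => le_add_of_nonneg_right (by positivity)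
    have hvpos : ∀ i, 0 < v i := fun i => lt_of_lt_of_le ha (hva i)
    have hvle : ∀ i, i ≤ N → v i ≤ b := by
      intro i hi
      have h1 : (i:ℝ) * Δ ≤ N * Δ :=
        mul_le_mul_of_nonneg_right (Nat.cast_le.2 hi) hΔ.le
      have h2 : (N:ℝ) * Δ = b - a := by rw [hΔdef]; field_simp
      simp only [hv]; linarith
    have hv0 : v 0 = a := by simp [hv]
    have hvN : v N = b := by
      have h2 : (N:ℝ) * Δ = b - a := by rw [hΔdef]; field_simp
      simp only [hv]; linarith
    set t : ℕ → ℝ := fun i => tauf g x y (min (v i) b) with ht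
    have htspec : ∀ i, t i ∈ Icc x y ∧ Gf g (t i) = min (v i) b := fun i =>
      tauf_spec hgpos hgint hx hxy (le_min (hva i) hab) (min_le_right _ _)
    have htmono : ∀ i j, i ≤ j → t i ≤ t j := fun i j hij =>
      tauf_mono (min_le_min (hvmono hij) le_rfl)
        ⟨y, ⟨⟨hxy, le_rfl⟩, min_le_right _ _⟩⟩
    have hGt : ∀ i, i ≤ N → Gf g (t i) = v i := fun i hi => by
      rw [(htspec i).2, min_eq_left (hvle i hi)]
    have htx : ∀ i, 0 < t i := fun i => lt_of_lt_of_le hx (htspec i).1.1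
    have hgpiece : ∀ i, i < N → (∫ u in Ioc (t i) (t (i+1)), g u) = Δ := by
      intro i hi
      rw [hgIoc (htx i) (htmono i (i+1) (Nat.le_succ i)),
        hGt (i+1) (Nat.succ_le_of_lt hi), hGt i hi.le]
      simp only [hv]; push_cast; ring
    have hWI : IntegrableOn W (Ioc x y) := Wint hg hgpos hgint hGpos (-q-1) hx
    have hWsub : ∀ {c d : ℝ}, x ≤ c → c ≤ d → d ≤ y →
        IntervalIntegrable W volume c d := by
      intro c d hc hcd hdy
      rw [intervalIntegrable_iff_integrableOn_Ioc_of_le hcd]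
      exact hWI.mono_set (Ioc_subset_Ioc hc hdy)
    -- each piece of I is bounded above
    have hpiece : ∀ i, i < N → (∫ u in Ioc (t i) (t (i+1)), W u) ≤ v i ^ (-q-1) * Δ := by
      intro i hi
      have hle : ∀ u ∈ Ioc (t i) (t (i+1)), W u ≤ v i ^ (-q-1) * g u := by
        intro u hu
        have hu0 : 0 < u := lt_trans (htx i) hu.1
        have hGu : v i ≤ Gf g u := by
          rw [← hGt i hi.le]; exact Gf_mono hgpos hgint hu.1.le
        have h1 : Gf g u ^ (-q-1) ≤ v i ^ (-q-1) :=
          Real.rpow_le_rpow_of_nonpos (hvpos i) hGu (by linarith)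
        calc W u = Gf g u ^ (-q-1) * g u := by rw [hW]; ring
          _ ≤ v i ^ (-q-1) * g u := mul_le_mul_of_nonneg_right h1 (hgpos u hu0).le
      have hgint' : IntegrableOn g (Ioc (t i) (t (i+1))) :=
        (hgint (max (t (i+1)) 1) (by positivity)).mono_set
          (fun u hu => ⟨lt_trans (htx i) hu.1, le_trans hu.2 (le_max_left _ _)⟩)
      calc (∫ u in Ioc (t i) (t (i+1)), W u)
          ≤ ∫ u in Ioc (t i) (t (i+1)), v i ^ (-q-1) * g u := by
            apply setIntegral_mono_on ?_ (hgint'.const_mul _) measurableSet_Ioc hle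
            exact hWI.mono_set (Ioc_subset_Ioc (htspec i).1.1 (htspec (i+1)).1.2)
        _ = v i ^ (-q-1) * Δ := by rw [MeasureTheory.integral_const_mul, hgpiece i hi]
    -- I equals the sum of the pieces plus two vanishing ends
    have hIsum : I ≤ ∑ i ∈ Finset.range N, ∫ u in Ioc (t i) (t (i+1)), W u := by
      have h1 : ∀ i, i < N → (∫ u in Ioc (t i) (t (i+1)), W u)
          = ∫ u in (t i)..(t (i+1)), W u := fun i hi =>
        (intervalIntegral.integral_of_le (htmono i (i+1) (Nat.le_succ i))).symm
      rw [Finset.sum_congr rfl (fun i hi => h1 i (Finset.mem_range.1 hi))]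
      rw [intervalIntegral.sum_integral_adjacent_intervals (fun k hk =>
        hWsub (htspec k).1.1 (htmono k (k+1) (Nat.le_succ k)) (htspec (k+1)).1.2)]
      have h2 : (∫ u in x..(t 0), W u) + ∫ u in (t 0)..(t N), W u
          = ∫ u in x..(t N), W u :=
        intervalIntegral.integral_add_adjacent_intervals
          (hWsub le_rfl (htspec 0).1.1 (htspec 0).1.2)
          (hWsub (htspec 0).1.1 (htmono 0 N (Nat.zero_le N)) (htspec N).1.2)
      have h3 : (∫ u in x..(t N), W u) + ∫ u in (t N)..y, W u = ∫ u in x..y, W u :=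
        intervalIntegral.integral_add_adjacent_intervals
          (hWsub le_rfl (htspec N).1.1 (htspec N).1.2)
          (hWsub (htspec N).1.1 (htspec N).1.2 le_rfl)
      have h4 : (∫ u in x..(t 0), W u) = 0 := by
        rw [intervalIntegral.integral_of_le (htspec 0).1.1]
        exact hconst hx (htspec 0).1.1 rfl (by rw [hGt 0 (Nat.zero_le N), hv0])
      have h5 : (∫ u in (t N)..y, W u) = 0 := by
        rw [intervalIntegral.integral_of_le (htspec N).1.2]
        exact hconst (htx N) (htspec N).1.2 (by rw [hGt N le_rfl, hvN]) rfl
      have h6 : I = ∫ u in x..y, W u := by rw [hI, intervalIntegral.integral_of_le hxy]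
      rw [h6, ← h3, ← h2, h4, h5]
      linarith
    -- comparison with the integral of the power function
    have hrint : ∀ i : ℕ, IntervalIntegrable (fun u : ℝ => u ^ (-q-1)) volume (v i) (v (i+1)) := by
      intro i
      apply intervalIntegral.intervalIntegrable_rpow (Or.inr ?_)
      rw [Set.uIcc_of_le (hvmono (Nat.le_succ i))]
      intro hc
      exact absurd hc.1 (not_le.2 (hvpos i))
    have hper : ∀ i, i < N → v i ^ (-q-1) * Δ
        ≤ (∫ u in (v i)..(v (i+1)), u ^ (-q-1)) + (v i ^ (-q-1) - v (i+1) ^ (-q-1)) * Δ := by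
      intro i hi
      have h1 := intervalIntegral.integral_mono_on (μ := volume)
          (f := fun _ : ℝ => v (i+1) ^ (-q-1)) (hvmono (Nat.le_succ i))
          intervalIntegrable_const (hrint i)
          (fun u hu => Real.rpow_le_rpow_of_nonpos
            (lt_of_lt_of_le (hvpos i) hu.1) hu.2 (by linarith))
      rw [intervalIntegral.integral_const] at h1
      have h2 : v (i+1) - v i = Δ := by simp only [hv]; push_cast; ring
      rw [h2] at h1
      have h3 : Δ • (v (i+1) ^ (-q-1)) = v (i+1) ^ (-q-1) * Δ := by
        rw [smul_eq_mul]; ring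
      rw [h3] at h1
      linarith
    have hsum1 : (∑ i ∈ Finset.range N, ∫ u in (v i)..(v (i+1)), u ^ (-q-1))
        = (a ^ (-q) - b ^ (-q)) / q := by
      rw [intervalIntegral.sum_integral_adjacent_intervals (fun k _ => hrint k)]
      rw [hv0, hvN]
      rw [integral_rpow (Or.inr ⟨by intro hc; exact absurd (by linarith : q = 0) hq.ne',
        by rw [Set.uIcc_of_le hab]; intro hc; exact absurd hc.1 (not_le.2 ha)⟩)]
      have hq1 : -q - 1 + 1 = -q := by ring
      rw [hq1]
      rw [div_eq_div_iff (by simpa using hq.ne' : -q ≠ 0) hq.ne']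
      ring
    have hsum2 : (∑ i ∈ Finset.range N, (v i ^ (-q-1) - v (i+1) ^ (-q-1)) * Δ)
        ≤ D * Δ := by
      rw [← Finset.sum_mul]
      apply mul_le_mul_of_nonneg_right ?_ hΔ.le
      rw [Finset.sum_range_sub' (fun i => v i ^ (-q-1))]
      rw [hv0]
      have h1 : 0 ≤ v N ^ (-q-1) := Real.rpow_nonneg (hvpos N).le _
      simp only [hD]; linarith
    have hfinal : I ≤ (a ^ (-q) - b ^ (-q)) / q + D * Δ := by
      calc I ≤ ∑ i ∈ Finset.range N, ∫ u in Ioc (t i) (t (i+1)), W u := hIsum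
        _ ≤ ∑ i ∈ Finset.range N, v i ^ (-q-1) * Δ :=
            Finset.sum_le_sum (fun i hi => hpiece i (Finset.mem_range.1 hi))
        _ ≤ ∑ i ∈ Finset.range N, ((∫ u in (v i)..(v (i+1)), u ^ (-q-1))
              + (v i ^ (-q-1) - v (i+1) ^ (-q-1)) * Δ) :=
            Finset.sum_le_sum (fun i hi => hper i (Finset.mem_range.1 hi))
        _ = (∑ i ∈ Finset.range N, ∫ u in (v i)..(v (i+1)), u ^ (-q-1))
              + ∑ i ∈ Finset.range N, (v i ^ (-q-1) - v (i+1) ^ (-q-1)) * Δ :=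
            Finset.sum_add_distrib
        _ ≤ (a ^ (-q) - b ^ (-q)) / q + D * Δ := by rw [hsum1]; linarith
    have hbq : 0 ≤ b ^ (-q) := Real.rpow_nonneg (by linarith) _
    have hΔD : D * Δ = ((b - a) / (N:ℝ)) * D := by rw [hΔdef]; ring
    have hcast : ((n:ℝ) + 1) = (N:ℝ) := by rw [hN]; push_cast; ring
    rw [hcast]
    have h7 : (a ^ (-q) - b ^ (-q)) / q ≤ a ^ (-q) / q :=
      (div_le_div_iff_of_pos_right hq).2 (by linarith)
    linarith
  have hlim : Filter.Tendsto
      (fun n : ℕ => a ^ (-q) / q + ((b - a) / (n + 1)) * D)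
      Filter.atTop (nhds (a ^ (-q) / q)) := by
    have h2 : Filter.Tendsto (fun n : ℕ => (1:ℝ) / (n + 1)) Filter.atTop (nhds 0) :=
      tendsto_one_div_add_atTop_nhds_zero_nat
    have h3 := h2.const_mul ((b - a) * D)
    simp only [mul_zero] at h3
    have h4 := Filter.Tendsto.add (tendsto_const_nhds
      (x := a ^ (-q) / q) (f := Filter.atTop (α := ℕ))) h3
    simp only [add_zero] at h4
    convert h4 using 2 with n
    ring
  exact ge_of_tendsto hlim (Filter.Eventually.of_forall hclaim)

end FactA

section ENNFacts

variable {g : ℝ → ℝ}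

lemma Wnonneg_ae (hgpos : ∀ x ∈ Ioi (0:ℝ), 0 < g x) (hGpos : ∀ x > (0:ℝ), 0 < Gf g x)
    {e x y : ℝ} (hx : 0 < x) :
    0 ≤ᵐ[volume.restrict (Ioc x y)] fun u => g u * Gf g u ^ e := by
  refine (ae_restrict_iff' measurableSet_Ioc).2 (ae_of_all _ fun u hu => ?_)
  have hu0 : 0 < u := lt_trans hx hu.1
  exact mul_nonneg (hgpos u hu0).le (Real.rpow_nonneg (hGpos u hu0).le _)

lemma lint_Ioc_s7 (hg : Measurable g) (hgpos : ∀ x ∈ Ioi (0:ℝ), 0 < g x)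
    (hgint : ∀ r > (0:ℝ), IntegrableOn g (Ioc 0 r))
    (hGpos : ∀ x > (0:ℝ), 0 < Gf g x) {e x y : ℝ} (hx : 0 < x) :
    (∫⁻ u in Ioc x y, ENNReal.ofReal (g u * Gf g u ^ e))
      = ENNReal.ofReal (∫ u in Ioc x y, g u * Gf g u ^ e) :=
  (ofReal_integral_eq_lintegral_ofReal (Wint hg hgpos hgint hGpos e hx)
    (Wnonneg_ae hgpos hGpos hx)).symm

lemma factA (hg : Measurable g) (hgpos : ∀ x ∈ Ioi (0:ℝ), 0 < g x)
    (hgint : ∀ r > (0:ℝ), IntegrableOn g (Ioc 0 r))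
    (hGpos : ∀ x > (0:ℝ), 0 < Gf g x) {q x : ℝ} (hq : 0 < q) (hx : 0 < x) :
    (∫⁻ u in Ioi x, ENNReal.ofReal (g u * Gf g u ^ (-q - 1)))
      ≤ ENNReal.ofReal (Gf g x ^ (-q) / q) := by
  set F : ℝ → ℝ≥0∞ := fun u => ENNReal.ofReal (g u * Gf g u ^ (-q - 1)) with hF
  have hFmeas : Measurable F :=
    ENNReal.measurable_ofReal.comp
      (hg.mul ((Gf_measurable hgpos hgint).pow_const _))
  have hkey : ∀ n : ℕ, (∫⁻ u in Ioc x (x + (n+1)), F u)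
      ≤ ENNReal.ofReal (Gf g x ^ (-q) / q) := by
    intro n
    rw [hF, lint_Ioc_s7 hg hgpos hgint hGpos hx]
    exact ENNReal.ofReal_le_ofReal
      (factA_real hg hgpos hgint hGpos hq hx (le_add_of_nonneg_right (by positivity)))
  have hpt : ∀ u, (Ioi x).indicator F u
      = ⨆ n : ℕ, (Ioc x (x + (n+1))).indicator F u := by
    intro u
    rcases le_or_gt u x with h | h
    · rw [indicator_of_notMem (by simpa using not_lt.2 h)]
      symm
      simp only [ENNReal.iSup_eq_zero]
      intro n
      exact indicator_of_notMem (fun hc => absurd hc.1 (not_lt.2 h)) F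
    · rw [Set.indicator_of_mem (show u ∈ Ioi x from h) F]
      obtain ⟨n, hn⟩ := exists_nat_ge (u - x)
      apply le_antisymm
      · exact le_iSup_of_le n (le_of_eq (Set.indicator_of_mem (show u ∈ Ioc x (x+(n+1)) from ⟨h, by push_cast; linarith⟩) F).symm)
      · refine iSup_le fun n => ?_
        rw [Set.indicator_apply]
        split_ifs
        · exact le_rfl
        · exact zero_le
  have hmono : Monotone fun n : ℕ => (Ioc x (x + (n+1))).indicator F := by
    intro n m hnm
    have hc : ((n:ℝ)) ≤ m := Nat.cast_le.2 hnm
    apply Set.indicator_le_indicator_of_subset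
      (Ioc_subset_Ioc_right (by linarith))
    intro u; exact zero_le
  calc (∫⁻ u in Ioi x, F u) = ∫⁻ u, (Ioi x).indicator F u := by
        rw [lintegral_indicator measurableSet_Ioi]
    _ = ∫⁻ u, ⨆ n : ℕ, (Ioc x (x + (n+1))).indicator F u := by
        apply lintegral_congr hpt
    _ = ⨆ n : ℕ, ∫⁻ u, (Ioc x (x + (n+1))).indicator F u :=
        lintegral_iSup (fun n => hFmeas.indicator measurableSet_Ioc) hmono
    _ ≤ ENNReal.ofReal (Gf g x ^ (-q) / q) := by
        refine iSup_le fun n => ?_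
        rw [lintegral_indicator measurableSet_Ioc]
        exact hkey n

lemma factB (hg : Measurable g) (hgpos : ∀ x ∈ Ioi (0:ℝ), 0 < g x)
    (hgint : ∀ r > (0:ℝ), IntegrableOn g (Ioc 0 r))
    (hGpos : ∀ x > (0:ℝ), 0 < Gf g x) {p x y : ℝ} (hp : 0 < p)
    (hx : 0 < x) (hxy : x ≤ y) :
    ENNReal.ofReal (Gf g y ^ p) ≤ ENNReal.ofReal (Gf g x ^ p)
      + ∫⁻ u in Ioc x y, ENNReal.ofReal (p * (g u * Gf g u ^ (p - 1))) := by
  have h1 : (∫⁻ u in Ioc x y, ENNReal.ofReal (p * (g u * Gf g u ^ (p - 1))))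
      = ENNReal.ofReal (p * ∫ u in Ioc x y, g u * Gf g u ^ (p - 1)) := by
    rw [← MeasureTheory.integral_const_mul]
    exact (ofReal_integral_eq_lintegral_ofReal
      ((Wint hg hgpos hgint hGpos (p-1) hx).const_mul p)
      (((Wnonneg_ae hgpos hGpos hx).mono) (fun u hu => mul_nonneg hp.le hu))).symm
  rw [h1]
  have h2 : Gf g y ^ p - Gf g x ^ p ≤ p * ∫ u in Ioc x y, g u * Gf g u ^ (p - 1) := by
    have := factB_real hg hgpos hgint hGpos hp hx hxy
    rw [div_le_iff₀ hp] at this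
    linarith [this]
  calc ENNReal.ofReal (Gf g y ^ p)
      = ENNReal.ofReal (Gf g x ^ p + (Gf g y ^ p - Gf g x ^ p)) := by ring_nf
    _ ≤ ENNReal.ofReal (Gf g x ^ p) + ENNReal.ofReal (Gf g y ^ p - Gf g x ^ p) :=
        ENNReal.ofReal_add_le
    _ ≤ ENNReal.ofReal (Gf g x ^ p)
        + ENNReal.ofReal (p * ∫ u in Ioc x y, g u * Gf g u ^ (p - 1)) :=
        add_le_add_right (ENNReal.ofReal_le_ofReal h2) _

end ENNFacts

section Master

variable {g : ℝ → ℝ}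

lemma master (hg : Measurable g) (hgpos : ∀ x ∈ Ioi (0:ℝ), 0 < g x)
    (hgint : ∀ r > (0:ℝ), IntegrableOn g (Ioc 0 r))
    (hGpos : ∀ x > (0:ℝ), 0 < Gf g x) {p r x : ℝ} (hp : 0 < p) (hpr : p < r)
    (hx : 0 < x) {φ : ℝ → ℝ≥0∞} (hφ : Measurable φ) {B : ℝ≥0∞}
    (hbound : ∀ t, 0 < t → (∫⁻ y in Ioi t, φ y) ≤ B * ENNReal.ofReal (Gf g t ^ (-r))) :
    (∫⁻ y in Ioi x, φ y * ENNReal.ofReal (Gf g y ^ p))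
      ≤ B * ENNReal.ofReal (r / (r - p) * Gf g x ^ (p - r)) := by
  have hGx : 0 < Gf g x := hGpos x hx
  set ψ : ℝ → ℝ≥0∞ := fun t => ENNReal.ofReal (p * (g t * Gf g t ^ (p - 1))) with hψ
  have hψmeas : Measurable ψ :=
    ENNReal.measurable_ofReal.comp
      ((measurable_const.mul (hg.mul ((Gf_measurable hgpos hgint).pow_const _))))
  set c : ℝ≥0∞ := ENNReal.ofReal (Gf g x ^ p) with hc
  set Iin : ℝ → ℝ≥0∞ := fun y => ∫⁻ t in Ioc x y, ψ t with hIin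
  have hIinmono : Monotone Iin := by
    intro y y' hyy'
    exact lintegral_mono' (Measure.restrict_mono (Ioc_subset_Ioc_right hyy') le_rfl) le_rfl
  have hIinmeas : Measurable Iin := hIinmono.measurable
  -- step 1 : pointwise application of factB
  have step1 : (∫⁻ y in Ioi x, φ y * ENNReal.ofReal (Gf g y ^ p))
      ≤ (∫⁻ y in Ioi x, φ y * c) + ∫⁻ y in Ioi x, φ y * Iin y := by
    rw [← lintegral_add_left (hφ.mul_const c)]
    refine setLIntegral_mono ((hφ.mul_const c).add (hφ.mul hIinmeas)) ?_
    intro y hy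
    rw [← mul_add]
    exact mul_le_mul_right (factB hg hgpos hgint hGpos hp hx (le_of_lt hy)) _
  -- term 1
  have hterm1 : (∫⁻ y in Ioi x, φ y * c) ≤ B * ENNReal.ofReal (Gf g x ^ (p - r)) := by
    have h1 : (∫⁻ y in Ioi x, φ y * c) = c * ∫⁻ y in Ioi x, φ y := by
      rw [← lintegral_const_mul c hφ]
      exact lintegral_congr fun y => mul_comm _ _
    rw [h1]
    calc c * ∫⁻ y in Ioi x, φ y ≤ c * (B * ENNReal.ofReal (Gf g x ^ (-r))) :=
          mul_le_mul_right (hbound x hx) _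
      _ = B * (ENNReal.ofReal (Gf g x ^ p) * ENNReal.ofReal (Gf g x ^ (-r))) := by
          rw [hc]; ring
      _ = B * ENNReal.ofReal (Gf g x ^ (p - r)) := by
          rw [← ENNReal.ofReal_mul (Real.rpow_nonneg hGx.le _), ← Real.rpow_add hGx,
            sub_eq_add_neg]
  -- term 2 : Tonelli
  set K : ℝ × ℝ → ℝ≥0∞ := fun z => if x < z.2 ∧ z.2 ≤ z.1 then φ z.1 * ψ z.2 else 0
    with hK
  have hKmeas : Measurable K := by
    apply Measurable.ite ?_ ((hφ.comp measurable_fst).mul (hψmeas.comp measurable_snd))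
      measurable_const
    exact (measurableSet_lt measurable_const measurable_snd).inter
      (measurableSet_le measurable_snd measurable_fst)
  have h2a : ∀ y : ℝ, (∫⁻ t in Ioi x, K (y, t)) = φ y * Iin y := by
    intro y
    have hpt : ∀ t : ℝ, K (y, t) = (Ioc x y).indicator (fun t => φ y * ψ t) t := by
      intro t
      rw [Set.indicator_apply]
      simp only [hK, Set.mem_Ioc]
    calc (∫⁻ t in Ioi x, K (y, t))
        = ∫⁻ t in Ioi x, (Ioc x y).indicator (fun t => φ y * ψ t) t :=
          lintegral_congr hpt
      _ = ∫⁻ t in Ioc x y ∩ Ioi x, φ y * ψ t := by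
          rw [lintegral_indicator measurableSet_Ioc, Measure.restrict_restrict measurableSet_Ioc]
      _ = ∫⁻ t in Ioc x y, φ y * ψ t := by
          rw [Set.inter_eq_left.2 (fun u hu => hu.1)]
      _ = φ y * Iin y := lintegral_const_mul _ hψmeas
  have h2b : ∀ t ∈ Ioi x, (∫⁻ y in Ioi x, K (y, t)) = ψ t * ∫⁻ y in Ioi t, φ y := by
    intro t ht
    have hpt : ∀ y : ℝ, K (y, t) = (Ici t).indicator (fun y => φ y * ψ t) y := by
      intro y
      by_cases hty : t ≤ y
      · rw [Set.indicator_of_mem (show y ∈ Ici t from hty)]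
        simp only [hK]
        rw [if_pos ⟨ht, hty⟩]
      · rw [Set.indicator_of_notMem (show y ∉ Ici t from hty)]
        simp only [hK]
        rw [if_neg (fun hc => hty hc.2)]
    calc (∫⁻ y in Ioi x, K (y, t))
        = ∫⁻ y in Ioi x, (Ici t).indicator (fun y => φ y * ψ t) y := lintegral_congr hpt
      _ = ∫⁻ y in Ici t ∩ Ioi x, φ y * ψ t := by
          rw [lintegral_indicator measurableSet_Ici, Measure.restrict_restrict measurableSet_Ici]
      _ = ∫⁻ y in Ici t, φ y * ψ t := by
          have hss : Ici t ∩ Ioi x = Ici t :=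
            Set.inter_eq_left.2 (fun u hu => mem_Ioi.2 (lt_of_lt_of_le ht hu))
          rw [hss]
      _ = ∫⁻ y in Ioi t, φ y * ψ t := by
          rw [Measure.restrict_congr_set Ioi_ae_eq_Ici.symm]
      _ = ψ t * ∫⁻ y in Ioi t, φ y := by
          rw [lintegral_mul_const _ hφ, mul_comm]
  have hswap : (∫⁻ y in Ioi x, φ y * Iin y)
      = ∫⁻ t in Ioi x, ψ t * ∫⁻ y in Ioi t, φ y := by
    calc (∫⁻ y in Ioi x, φ y * Iin y)
        = ∫⁻ y in Ioi x, ∫⁻ t in Ioi x, K (y, t) := (lintegral_congr h2a).symm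
      _ = ∫⁻ t in Ioi x, ∫⁻ y in Ioi x, K (y, t) := by
          apply lintegral_lintegral_swap
          exact hKmeas.aemeasurable
      _ = ∫⁻ t in Ioi x, ψ t * ∫⁻ y in Ioi t, φ y :=
          setLIntegral_congr_fun measurableSet_Ioi h2b
  have hterm2 : (∫⁻ y in Ioi x, φ y * Iin y)
      ≤ B * ENNReal.ofReal (p * (Gf g x ^ (-(r - p)) / (r - p))) := by
    rw [hswap]
    have hmeas2 : Measurable fun t => ENNReal.ofReal (g t * Gf g t ^ (-(r - p) - 1)) :=
      ENNReal.measurable_ofReal.comp (hg.mul ((Gf_measurable hgpos hgint).pow_const _))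
    have hstep : ∀ t ∈ Ioi x, ψ t * (∫⁻ y in Ioi t, φ y)
        ≤ B * (ENNReal.ofReal p * ENNReal.ofReal (g t * Gf g t ^ (-(r - p) - 1))) := by
      intro t ht
      have ht0 : 0 < t := lt_trans hx ht
      calc ψ t * (∫⁻ y in Ioi t, φ y)
          ≤ ψ t * (B * ENNReal.ofReal (Gf g t ^ (-r))) :=
            mul_le_mul_right (hbound t ht0) _
        _ = B * (ψ t * ENNReal.ofReal (Gf g t ^ (-r))) := by ring
        _ = B * (ENNReal.ofReal p * ENNReal.ofReal (g t * Gf g t ^ (-(r - p) - 1))) := by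
            congr 1
            have hre : p * (g t * Gf g t ^ (p - 1)) * Gf g t ^ (-r)
                = p * (g t * Gf g t ^ (-(r - p) - 1)) := by
              rw [show -(r - p) - 1 = (p - 1) + -r by ring, Real.rpow_add (hGpos t ht0)]
              ring
            rw [hψ]
            simp only
            rw [← ENNReal.ofReal_mul (mul_nonneg hp.le (mul_nonneg (hgpos t ht0).le
              (Real.rpow_nonneg (hGpos t ht0).le _))), hre, ENNReal.ofReal_mul hp.le]
    calc (∫⁻ t in Ioi x, ψ t * ∫⁻ y in Ioi t, φ y)
        ≤ ∫⁻ t in Ioi x,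
            B * (ENNReal.ofReal p * ENNReal.ofReal (g t * Gf g t ^ (-(r - p) - 1))) :=
          setLIntegral_mono ((hmeas2.const_mul (ENNReal.ofReal p)).const_mul B) hstep
      _ = B * ENNReal.ofReal p
            * ∫⁻ t in Ioi x, ENNReal.ofReal (g t * Gf g t ^ (-(r - p) - 1)) := by
          rw [← lintegral_const_mul _ hmeas2]
          apply lintegral_congr
          intro t
          ring
      _ ≤ B * ENNReal.ofReal p * ENNReal.ofReal (Gf g x ^ (-(r - p)) / (r - p)) :=
          mul_le_mul_right (factA hg hgpos hgint hGpos (by linarith) hx) _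
      _ = B * ENNReal.ofReal (p * (Gf g x ^ (-(r - p)) / (r - p))) := by
          rw [mul_assoc, ← ENNReal.ofReal_mul hp.le]
  -- put the two terms together
  calc (∫⁻ y in Ioi x, φ y * ENNReal.ofReal (Gf g y ^ p))
      ≤ (∫⁻ y in Ioi x, φ y * c) + ∫⁻ y in Ioi x, φ y * Iin y := step1
    _ ≤ B * ENNReal.ofReal (Gf g x ^ (p - r))
        + B * ENNReal.ofReal (p * (Gf g x ^ (-(r - p)) / (r - p))) :=
        add_le_add hterm1 hterm2
    _ = B * ENNReal.ofReal (Gf g x ^ (p - r) + p * (Gf g x ^ (-(r - p)) / (r - p))) := by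
        rw [← mul_add, ← ENNReal.ofReal_add (Real.rpow_nonneg hGx.le _) (mul_nonneg hp.le (div_nonneg (Real.rpow_nonneg hGx.le _) (by linarith)))]
    _ = B * ENNReal.ofReal (r / (r - p) * Gf g x ^ (p - r)) := by
        congr 1
        apply congrArg
        have hexp : -(r - p) = p - r := by ring
        rw [hexp]
        have hrp : r - p ≠ 0 := by intro h; linarith
        field_simp
        ring
end Master

section Helpers

/-- extract a bound on `T` from a bound on `T ^ α * ofReal (G ^ e)` -/
lemma extract_bound {α : ℝ} (hα : 0 < α) {T A : ℝ≥0∞} {G e : ℝ} (hG : 0 < G)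
    (h : T ^ α * ENNReal.ofReal (G ^ e) ≤ A) :
    T ≤ A ^ (1/α) * ENNReal.ofReal (G ^ (-(e/α))) := by
  have hGe : 0 < G ^ e := Real.rpow_pos_of_pos hG e
  have h2 : T ^ α ≤ A / ENNReal.ofReal (G ^ e) :=
    (ENNReal.le_div_iff_mul_le (Or.inl (by simp [ENNReal.ofReal_eq_zero, not_le, hGe]))
      (Or.inl ENNReal.ofReal_ne_top)).2 h
  rw [div_eq_mul_inv, ← ENNReal.ofReal_inv_of_pos hGe] at h2
  have h3 : (G ^ e)⁻¹ = G ^ (-e) := by rw [← Real.rpow_neg_one, ← Real.rpow_mul hG.le]; ring_nf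
  rw [h3] at h2
  calc T = (T ^ α) ^ (1/α) := by
        rw [← ENNReal.rpow_mul, mul_one_div_cancel hα.ne', ENNReal.rpow_one]
    _ ≤ (A * ENNReal.ofReal (G ^ (-e))) ^ (1/α) :=
        ENNReal.rpow_le_rpow h2 (by positivity)
    _ = A ^ (1/α) * ENNReal.ofReal (G ^ (-(e/α))) := by
        rw [ENNReal.mul_rpow_of_nonneg _ _ (by positivity : (0:ℝ) ≤ 1/α)]
        congr 1
        rw [ENNReal.ofReal_rpow_of_nonneg (Real.rpow_nonneg hG.le _) (by positivity),
          ← Real.rpow_mul hG.le]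
        congr 1
        ring

/-- combine the conclusion of `master` into the final bound -/
lemma final_combine {α : ℝ} (hα : 0 < α) {A T : ℝ≥0∞} {c G e : ℝ} (hc : 0 ≤ c) (hG : 0 < G)
    (h : T ≤ A ^ (1/α) * ENNReal.ofReal (c * G ^ (-(e/α)))) :
    T ^ α * ENNReal.ofReal (G ^ e) ≤ ENNReal.ofReal (c ^ α) * A := by
  have hX : (0:ℝ) ≤ c * G ^ (-(e/α)) := mul_nonneg hc (Real.rpow_nonneg hG.le _)
  calc T ^ α * ENNReal.ofReal (G ^ e)
      ≤ (A ^ (1/α) * ENNReal.ofReal (c * G ^ (-(e/α)))) ^ α * ENNReal.ofReal (G ^ e) :=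
        mul_le_mul_left (ENNReal.rpow_le_rpow h hα.le) _
    _ = A * (ENNReal.ofReal ((c * G ^ (-(e/α))) ^ α) * ENNReal.ofReal (G ^ e)) := by
        rw [ENNReal.mul_rpow_of_nonneg _ _ hα.le, ← ENNReal.rpow_mul,
          one_div_mul_cancel hα.ne', ENNReal.rpow_one,
          ENNReal.ofReal_rpow_of_nonneg hX hα.le, mul_assoc]
    _ = ENNReal.ofReal (c ^ α) * A := by
        rw [← ENNReal.ofReal_mul (Real.rpow_nonneg hX _)]
        rw [Real.mul_rpow hc (Real.rpow_nonneg hG.le _), ← Real.rpow_mul hG.le]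
        have he : -(e/α) * α = -e := by field_simp
        rw [he, mul_assoc, ← Real.rpow_add hG, neg_add_cancel, Real.rpow_zero, mul_one,
          mul_comm]

end Helpers

section Main

variable {α β s : ℝ} {f g : ℝ → ℝ}

lemma goal1 (hα : 0 < α) (hβ : 0 < β) (hs : 0 < s)
    (hf : Measurable f) (hg : Measurable g)
    (hfpos : ∀ x ∈ Ioi (0:ℝ), 0 < f x) (hgpos : ∀ x ∈ Ioi (0:ℝ), 0 < g x)
    (hfint : ∀ r > (0:ℝ), IntegrableOn f (Ioi r))
    (hgint : ∀ r > (0:ℝ), IntegrableOn g (Ioc 0 r))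
    (hFpos : ∀ x > (0:ℝ), 0 < ∫ y in Ioi x, f y)
    (hGpos : ∀ x > (0:ℝ), 0 < Gf g x) :
    (⨆ x ∈ Ioi (0:ℝ), ENNReal.ofReal ((∫ y in Ioi x, f y) ^ α * Gf g x ^ β))
      ≤ ENNReal.ofReal ((max 1 (s / β)) ^ α) *
        ⨆ x ∈ Ioi (0:ℝ),
          (∫⁻ y in Ioi x, ENNReal.ofReal (f y * Gf g y ^ ((β - s) / α))) ^ α *
            ENNReal.ofReal (Gf g x ^ s) := by
  have hGmono := Gf_mono hgpos hgint
  have hGmeas := Gf_measurable hgpos hgint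
  have hfnn : ∀ x : ℝ, 0 < x → 0 ≤ f x := fun x hx => (hfpos x hx).le
  set H : ℝ → ℝ≥0∞ :=
    fun x => ∫⁻ y in Ioi x, ENNReal.ofReal (f y * Gf g y ^ ((β - s) / α)) with hH
  set A2 : ℝ≥0∞ := ⨆ x ∈ Ioi (0:ℝ), H x ^ α * ENNReal.ofReal (Gf g x ^ s) with hA2
  have hC1 : 1 ≤ ENNReal.ofReal ((max 1 (s/β))^α) := by
    rw [← ENNReal.ofReal_one]
    exact ENNReal.ofReal_le_ofReal (Real.one_le_rpow (le_max_left _ _) hα.le)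
  have hterm : ∀ z, z ∈ Ioi (0:ℝ) → H z ^ α * ENNReal.ofReal (Gf g z ^ s) ≤ A2 :=
    fun z hz => le_iSup₂ (f := fun z (_ : z ∈ Ioi (0:ℝ)) =>
      H z ^ α * ENNReal.ofReal (Gf g z ^ s)) z hz
  have hφmeas : Measurable fun y => ENNReal.ofReal (f y * Gf g y ^ ((β - s)/α)) :=
    ENNReal.measurable_ofReal.comp (hf.mul (hGmeas.pow_const _))
  have hofF : ∀ t : ℝ, 0 < t →
      ENNReal.ofReal (∫ y in Ioi t, f y) = ∫⁻ y in Ioi t, ENNReal.ofReal (f y) :=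
    fun t ht => ofReal_integral_eq_lintegral_ofReal (hfint t ht)
      ((ae_restrict_iff' measurableSet_Ioi).2
        (ae_of_all _ fun y hy => (hfpos y (lt_trans ht hy)).le))
  apply iSup₂_le
  intro x hx
  have hx0 : 0 < x := hx
  have hGx : 0 < Gf g x := hGpos x hx0
  have hFx : 0 < ∫ y in Ioi x, f y := hFpos x hx0
  rcases le_or_gt s β with hsβ | hβs
  · -- easy case : s ≤ β
    have he : 0 ≤ (β - s)/α := div_nonneg (by linarith) hα.le
    have h1 : ENNReal.ofReal (Gf g x ^ ((β - s)/α)) * ENNReal.ofReal (∫ y in Ioi x, f y)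
        ≤ H x := by
      rw [hofF x hx0, ← lintegral_const_mul _ hf.ennreal_ofReal]
      refine setLIntegral_mono hφmeas ?_
      intro y hy
      have hy0 : 0 < y := lt_trans hx0 hy
      rw [← ENNReal.ofReal_mul (Real.rpow_nonneg hGx.le _)]
      apply ENNReal.ofReal_le_ofReal
      calc Gf g x ^ ((β-s)/α) * f y
          ≤ Gf g y ^ ((β-s)/α) * f y :=
            mul_le_mul_of_nonneg_right
              (Real.rpow_le_rpow hGx.le (hGmono (le_of_lt hy)) he) (hfnn y hy0)
        _ = f y * Gf g y ^ ((β-s)/α) := mul_comm _ _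
    have h2 := ENNReal.rpow_le_rpow h1 hα.le
    rw [ENNReal.mul_rpow_of_nonneg _ _ hα.le,
      ENNReal.ofReal_rpow_of_nonneg (Real.rpow_nonneg hGx.le _) hα.le,
      ENNReal.ofReal_rpow_of_nonneg hFx.le hα.le,
      ← Real.rpow_mul hGx.le, div_mul_cancel₀ _ hα.ne'] at h2
    have key : ENNReal.ofReal ((∫ y in Ioi x, f y) ^ α * Gf g x ^ β)
        ≤ H x ^ α * ENNReal.ofReal (Gf g x ^ s) := by
      calc ENNReal.ofReal ((∫ y in Ioi x, f y) ^ α * Gf g x ^ β)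
          = ENNReal.ofReal (Gf g x ^ (β - s)) * ENNReal.ofReal ((∫ y in Ioi x, f y) ^ α)
              * ENNReal.ofReal (Gf g x ^ s) := by
            rw [← ENNReal.ofReal_mul (Real.rpow_nonneg hGx.le _),
              ← ENNReal.ofReal_mul (mul_nonneg (Real.rpow_nonneg hGx.le _)
                (Real.rpow_nonneg hFx.le _))]
            congr 1
            rw [show (β:ℝ) = (β - s) + s by ring, Real.rpow_add hGx]
            ring
        _ ≤ H x ^ α * ENNReal.ofReal (Gf g x ^ s) := mul_le_mul_left h2 _
    calc ENNReal.ofReal ((∫ y in Ioi x, f y) ^ α * Gf g x ^ β)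
        ≤ H x ^ α * ENNReal.ofReal (Gf g x ^ s) := key
      _ ≤ A2 := hterm x hx
      _ = 1 * A2 := (one_mul A2).symm
      _ ≤ ENNReal.ofReal ((max 1 (s/β))^α) * A2 := mul_le_mul_left hC1 A2
  · -- hard case : β < s
    have hp : 0 < (s - β)/α := div_pos (by linarith) hα
    have hpr : (s - β)/α < s/α := (div_lt_div_iff_of_pos_right hα).2 (by linarith)
    have hbound : ∀ t, 0 < t →
        (∫⁻ y in Ioi t, ENNReal.ofReal (f y * Gf g y ^ ((β - s)/α)))
          ≤ A2 ^ (1/α) * ENNReal.ofReal (Gf g t ^ (-(s/α))) := by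
      intro t ht
      exact extract_bound hα (hGpos t ht) (hterm t ht)
    have hmaster := master hg hgpos hgint hGpos hp hpr hx0 hφmeas hbound
    have hLHS : (∫⁻ y in Ioi x,
        ENNReal.ofReal (f y * Gf g y ^ ((β - s)/α))
          * ENNReal.ofReal (Gf g y ^ ((s - β)/α)))
        = ENNReal.ofReal (∫ y in Ioi x, f y) := by
      rw [hofF x hx0]
      refine setLIntegral_congr_fun measurableSet_Ioi ?_
      intro y hy
      dsimp only
      have hy0 : 0 < y := lt_trans hx0 hy
      have hGy : 0 < Gf g y := hGpos y hy0
      rw [← ENNReal.ofReal_mul (mul_nonneg (hfnn y hy0) (Real.rpow_nonneg hGy.le _))]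
      congr 1
      rw [mul_assoc, ← Real.rpow_add hGy,
        show (β - s)/α + (s - β)/α = 0 by ring, Real.rpow_zero, mul_one]
    rw [hLHS] at hmaster
    have hre : s/α / (s/α - (s - β)/α) * Gf g x ^ ((s - β)/α - s/α)
        = (s/β) * Gf g x ^ (-(β/α)) := by
      have h1 : s/α - (s - β)/α = β/α := by ring
      have h2 : (s - β)/α - s/α = -(β/α) := by ring
      rw [h1, h2]
      congr 1
      field_simp
    rw [hre] at hmaster
    have hmax : max 1 (s/β) = s/β := max_eq_right (le_of_lt ((one_lt_div hβ).2 hβs))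
    calc ENNReal.ofReal ((∫ y in Ioi x, f y) ^ α * Gf g x ^ β)
        = (ENNReal.ofReal (∫ y in Ioi x, f y)) ^ α * ENNReal.ofReal (Gf g x ^ β) := by
          rw [ENNReal.ofReal_rpow_of_nonneg hFx.le hα.le,
            ← ENNReal.ofReal_mul (Real.rpow_nonneg hFx.le _)]
      _ ≤ ENNReal.ofReal ((s/β) ^ α) * A2 :=
          final_combine hα (by positivity) hGx hmaster
      _ = ENNReal.ofReal ((max 1 (s/β)) ^ α) * A2 := by rw [hmax]

end Main

section Main2

variable {α β s : ℝ} {f g : ℝ → ℝ}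

lemma goal2 (hα : 0 < α) (hβ : 0 < β) (hs : 0 < s)
    (hf : Measurable f) (hg : Measurable g)
    (hfpos : ∀ x ∈ Ioi (0:ℝ), 0 < f x) (hgpos : ∀ x ∈ Ioi (0:ℝ), 0 < g x)
    (hfint : ∀ r > (0:ℝ), IntegrableOn f (Ioi r))
    (hgint : ∀ r > (0:ℝ), IntegrableOn g (Ioc 0 r))
    (hFpos : ∀ x > (0:ℝ), 0 < ∫ y in Ioi x, f y)
    (hGpos : ∀ x > (0:ℝ), 0 < Gf g x) :
    (⨆ x ∈ Ioi (0:ℝ),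
        (∫⁻ y in Ioi x, ENNReal.ofReal (f y * Gf g y ^ ((β - s) / α))) ^ α *
          ENNReal.ofReal (Gf g x ^ s))
      ≤ ENNReal.ofReal ((max 1 (β / s)) ^ α) *
        ⨆ x ∈ Ioi (0:ℝ), ENNReal.ofReal ((∫ y in Ioi x, f y) ^ α * Gf g x ^ β) := by
  have hGmono := Gf_mono hgpos hgint
  have hGmeas := Gf_measurable hgpos hgint
  have hfnn : ∀ x : ℝ, 0 < x → 0 ≤ f x := fun x hx => (hfpos x hx).le
  set H : ℝ → ℝ≥0∞ :=
    fun x => ∫⁻ y in Ioi x, ENNReal.ofReal (f y * Gf g y ^ ((β - s) / α)) with hH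
  set A1 : ℝ≥0∞ := ⨆ x ∈ Ioi (0:ℝ),
    ENNReal.ofReal ((∫ y in Ioi x, f y) ^ α * Gf g x ^ β) with hA1
  have hC1 : 1 ≤ ENNReal.ofReal ((max 1 (β/s))^α) := by
    rw [← ENNReal.ofReal_one]
    exact ENNReal.ofReal_le_ofReal (Real.one_le_rpow (le_max_left _ _) hα.le)
  have hterm : ∀ z, z ∈ Ioi (0:ℝ) →
      ENNReal.ofReal ((∫ y in Ioi z, f y) ^ α * Gf g z ^ β) ≤ A1 :=
    fun z hz => le_iSup₂ (f := fun z (_ : z ∈ Ioi (0:ℝ)) =>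
      ENNReal.ofReal ((∫ y in Ioi z, f y) ^ α * Gf g z ^ β)) z hz
  have hφmeas : Measurable fun y => ENNReal.ofReal (f y * Gf g y ^ ((β - s)/α)) :=
    ENNReal.measurable_ofReal.comp (hf.mul (hGmeas.pow_const _))
  have hofF : ∀ t : ℝ, 0 < t →
      ENNReal.ofReal (∫ y in Ioi t, f y) = ∫⁻ y in Ioi t, ENNReal.ofReal (f y) :=
    fun t ht => ofReal_integral_eq_lintegral_ofReal (hfint t ht)
      ((ae_restrict_iff' measurableSet_Ioi).2
        (ae_of_all _ fun y hy => (hfpos y (lt_trans ht hy)).le))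
  have hsplit : ∀ t : ℝ, 0 < t →
      ENNReal.ofReal ((∫ y in Ioi t, f y) ^ α * Gf g t ^ β)
        = (ENNReal.ofReal (∫ y in Ioi t, f y)) ^ α * ENNReal.ofReal (Gf g t ^ β) := by
    intro t ht
    rw [ENNReal.ofReal_rpow_of_nonneg (hFpos t ht).le hα.le,
      ← ENNReal.ofReal_mul (Real.rpow_nonneg (hFpos t ht).le _)]
  apply iSup₂_le
  intro x hx
  have hx0 : 0 < x := hx
  have hGx : 0 < Gf g x := hGpos x hx0
  have hFx : 0 < ∫ y in Ioi x, f y := hFpos x hx0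
  rcases le_or_gt β s with hβs | hsβ
  · -- easy case : β ≤ s
    have he : (β - s)/α ≤ 0 := div_nonpos_of_nonpos_of_nonneg (by linarith) hα.le
    have h1 : H x ≤ ENNReal.ofReal (Gf g x ^ ((β - s)/α))
        * ENNReal.ofReal (∫ y in Ioi x, f y) := by
      rw [hofF x hx0, ← lintegral_const_mul _ hf.ennreal_ofReal]
      refine setLIntegral_mono (hf.ennreal_ofReal.const_mul _) ?_
      intro y hy
      have hy0 : 0 < y := lt_trans hx0 hy
      rw [← ENNReal.ofReal_mul (Real.rpow_nonneg hGx.le _)]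
      apply ENNReal.ofReal_le_ofReal
      calc f y * Gf g y ^ ((β-s)/α)
          ≤ f y * Gf g x ^ ((β-s)/α) :=
            mul_le_mul_of_nonneg_left
              (Real.rpow_le_rpow_of_nonpos hGx (hGmono (le_of_lt hy)) he) (hfnn y hy0)
        _ = Gf g x ^ ((β-s)/α) * f y := mul_comm _ _
    have h2 := ENNReal.rpow_le_rpow h1 hα.le
    rw [ENNReal.mul_rpow_of_nonneg _ _ hα.le,
      ENNReal.ofReal_rpow_of_nonneg (Real.rpow_nonneg hGx.le _) hα.le,
      ENNReal.ofReal_rpow_of_nonneg hFx.le hα.le,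
      ← Real.rpow_mul hGx.le, div_mul_cancel₀ _ hα.ne'] at h2
    have key : H x ^ α * ENNReal.ofReal (Gf g x ^ s)
        ≤ ENNReal.ofReal ((∫ y in Ioi x, f y) ^ α * Gf g x ^ β) := by
      calc H x ^ α * ENNReal.ofReal (Gf g x ^ s)
          ≤ ENNReal.ofReal (Gf g x ^ (β - s)) * ENNReal.ofReal ((∫ y in Ioi x, f y) ^ α)
              * ENNReal.ofReal (Gf g x ^ s) := mul_le_mul_left h2 _
        _ = ENNReal.ofReal ((∫ y in Ioi x, f y) ^ α * Gf g x ^ β) := by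
            rw [← ENNReal.ofReal_mul (Real.rpow_nonneg hGx.le _),
              ← ENNReal.ofReal_mul (mul_nonneg (Real.rpow_nonneg hGx.le _)
                (Real.rpow_nonneg hFx.le _))]
            congr 1
            rw [show (β:ℝ) = (β - s) + s by ring, Real.rpow_add hGx]
            ring
    calc H x ^ α * ENNReal.ofReal (Gf g x ^ s)
        ≤ ENNReal.ofReal ((∫ y in Ioi x, f y) ^ α * Gf g x ^ β) := key
      _ ≤ A1 := hterm x hx
      _ = 1 * A1 := (one_mul A1).symm
      _ ≤ ENNReal.ofReal ((max 1 (β/s))^α) * A1 := mul_le_mul_left hC1 A1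
  · -- hard case : s < β
    have hp : 0 < (β - s)/α := div_pos (by linarith) hα
    have hpr : (β - s)/α < β/α := (div_lt_div_iff_of_pos_right hα).2 (by linarith)
    have hbound : ∀ t, 0 < t →
        (∫⁻ y in Ioi t, ENNReal.ofReal (f y))
          ≤ A1 ^ (1/α) * ENNReal.ofReal (Gf g t ^ (-(β/α))) := by
      intro t ht
      rw [← hofF t ht]
      have h := hterm t ht
      rw [hsplit t ht] at h
      exact extract_bound hα (hGpos t ht) h
    have hmaster := master hg hgpos hgint hGpos hp hpr hx0 hf.ennreal_ofReal hbound
    have hLHS : (∫⁻ y in Ioi x,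
        ENNReal.ofReal (f y) * ENNReal.ofReal (Gf g y ^ ((β - s)/α))) = H x := by
      refine setLIntegral_congr_fun measurableSet_Ioi ?_
      intro y hy
      dsimp only
      have hy0 : 0 < y := lt_trans hx0 hy
      rw [← ENNReal.ofReal_mul (hfnn y hy0)]
    rw [hLHS] at hmaster
    have hre : β/α / (β/α - (β - s)/α) * Gf g x ^ ((β - s)/α - β/α)
        = (β/s) * Gf g x ^ (-(s/α)) := by
      have h1 : β/α - (β - s)/α = s/α := by ring
      have h2 : (β - s)/α - β/α = -(s/α) := by ring
      rw [h1, h2]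
      congr 1
      field_simp
    rw [hre] at hmaster
    have hmax : max 1 (β/s) = β/s := max_eq_right (le_of_lt ((one_lt_div hs).2 hsβ))
    calc H x ^ α * ENNReal.ofReal (Gf g x ^ s)
        ≤ ENNReal.ofReal ((β/s) ^ α) * A1 :=
          final_combine hα (by positivity) hGx hmaster
      _ = ENNReal.ofReal ((max 1 (β/s)) ^ α) * A1 := by rw [hmax]

end Main2

theorem A1_equiv_A2 (α β s : ℝ) (hα : 0 < α) (hβ : 0 < β) (hs : 0 < s)
    (f g : ℝ → ℝ) (hf : Measurable f) (hg : Measurable g)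
    (hfpos : ∀ x ∈ Ioi (0:ℝ), 0 < f x) (hgpos : ∀ x ∈ Ioi (0:ℝ), 0 < g x)
    (hfint : ∀ r > (0:ℝ), IntegrableOn f (Ioi r))
    (hgint : ∀ r > (0:ℝ), IntegrableOn g (Ioc 0 r))
    (hFpos : ∀ x > (0:ℝ), 0 < ∫ y in Ioi x, f y)
    (hGpos : ∀ x > (0:ℝ), 0 < ∫ y in Ioc 0 x, g y) :
    ((⨆ x ∈ Ioi (0:ℝ),
        ENNReal.ofReal ((∫ y in Ioi x, f y) ^ α * (∫ y in Ioc 0 x, g y) ^ β))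
      ≤ ENNReal.ofReal ((max 1 (s / β)) ^ α) *
        ⨆ x ∈ Ioi (0:ℝ),
          (∫⁻ y in Ioi x,
              ENNReal.ofReal (f y * (∫ t in Ioc 0 y, g t) ^ ((β - s) / α))) ^ α *
            ENNReal.ofReal ((∫ y in Ioc 0 x, g y) ^ s))
    ∧
    ((⨆ x ∈ Ioi (0:ℝ),
        (∫⁻ y in Ioi x,
            ENNReal.ofReal (f y * (∫ t in Ioc 0 y, g t) ^ ((β - s) / α))) ^ α *
          ENNReal.ofReal ((∫ y in Ioc 0 x, g y) ^ s))
      ≤ ENNReal.ofReal ((max 1 (β / s)) ^ α) *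
        ⨆ x ∈ Ioi (0:ℝ),
          ENNReal.ofReal ((∫ y in Ioi x, f y) ^ α * (∫ y in Ioc 0 x, g y) ^ β)) := by
  constructor
  · exact goal1 hα hβ hs hf hg hfpos hgpos hfint hgint hFpos hGpos
  · exact goal2 hα hβ hs hf hg hfpos hgpos hfint hgint hFpos hGpos
end

section
/- Let $n\ge 2$, $1<p\le q<\infty$, $p'=p/(p-1)$, and $\alpha,\beta\in\mathbb{R}$ with $\alpha+n\ge 0$. Then $\sup_{t>0}\left(\int_t^\infty (\sinh\rho)^{\alpha+n-1}d\rho\right)^{1/q}\left(\int_0^t (\sinh\rho)^{\beta(1-p')+n-1}d\rho\right)^{1/p'}<\infty$ if and only if $\alpha+n<1$, $\beta(1-p')+n>0$, and $\frac{\alpha+n-1}{q}+\frac{\beta(1-p')+n-1}{p'}\le 0$. -/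
open MeasureTheory Set
open scoped ENNReal

namespace MuckAux

/-- integral of exp (c x) over (t, ∞) for c < 0 -/
lemma lint_exp_Ioi {c : ℝ} (hc : c < 0) (t : ℝ) :
    ∫⁻ x in Ioi t, ENNReal.ofReal (Real.exp (c * x))
      = ENNReal.ofReal (Real.exp (c * t) / (-c)) := by
  have hc' : 0 < -c := neg_pos.2 hc
  have hint : IntegrableOn (fun x => Real.exp (c * x)) (Ioi t) := by
    have := exp_neg_integrableOn_Ioi t hc'
    simpa [neg_mul, neg_neg] using this
  have hderiv : ∀ x ∈ Ici t, HasDerivAt (fun y => Real.exp (c * y) / c) (Real.exp (c * x)) x := by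
    intro x _
    have hcne : c ≠ 0 := ne_of_lt hc
    have h1 : HasDerivAt (fun y : ℝ => c * y) (c * 1) x := (hasDerivAt_id x).const_mul c
    have h2 : HasDerivAt (fun y => Real.exp (c * y)) (Real.exp (c * x) * (c * 1)) x :=
      (Real.hasDerivAt_exp (c * x)).comp x h1
    have h3 := h2.div_const c
    convert h3 using 1
    · rfl
    · rfl
    field_simp
  have htend : Filter.Tendsto (fun y => Real.exp (c * y) / c) Filter.atTop (nhds (0 / c)) := by
    apply Filter.Tendsto.div_const
    have : Filter.Tendsto (fun y : ℝ => -c * y) Filter.atTop Filter.atTop :=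
      Filter.Tendsto.const_mul_atTop hc' Filter.tendsto_id
    have h4 := Real.tendsto_exp_neg_atTop_nhds_zero.comp this
    have h5 : (fun y : ℝ => Real.exp (c * y)) = (fun x => Real.exp (-x)) ∘ fun y : ℝ => -c * y := by
      funext y; simp [neg_mul]
    rw [h5]; exact h4
  have hval : ∫ x in Ioi t, Real.exp (c * x) = Real.exp (c * t) / (-c) := by
    rw [MeasureTheory.integral_Ioi_of_hasDerivAt_of_tendsto' hderiv hint htend]
    rw [zero_div, zero_sub, div_neg]
  rw [← MeasureTheory.ofReal_integral_eq_lintegral_ofReal hint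
    (Filter.Eventually.of_forall fun x => (Real.exp_pos _).le), hval]

/-- integral of x^b over (0, t] for b > -1 -/
lemma lint_rpow_Ioc {b : ℝ} (hb : -1 < b) {t : ℝ} (ht : 0 < t) :
    ∫⁻ x in Ioc 0 t, ENNReal.ofReal (x ^ b)
      = ENNReal.ofReal (t ^ (b + 1) / (b + 1)) := by
  have hint : IntegrableOn (fun x : ℝ => x ^ b) (Ioc 0 t) := by
    have := intervalIntegral.intervalIntegrable_rpow' (a := 0) (b := t) hb
    rw [intervalIntegrable_iff] at this
    simpa [uIoc_of_le ht.le] using this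
  have hnn : 0 ≤ᵐ[volume.restrict (Ioc (0:ℝ) t)] fun x : ℝ => x ^ b :=
    (ae_restrict_mem measurableSet_Ioc).mono fun x hx => Real.rpow_nonneg hx.1.le b
  have hval : ∫ x in Ioc (0:ℝ) t, x ^ b = t ^ (b + 1) / (b + 1) := by
    rw [← intervalIntegral.integral_of_le ht.le, integral_rpow (Or.inl hb)]
    rw [Real.zero_rpow (by linarith : b + 1 ≠ 0)]
    ring
  rw [← MeasureTheory.ofReal_integral_eq_lintegral_ofReal hint hnn, hval]

/-- divergence of x^b near zero for b ≤ -1 -/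
lemma lint_rpow_top {b : ℝ} (hb : b ≤ -1) :
    ∫⁻ x in Ioc (0:ℝ) 1, ENNReal.ofReal (x ^ b) = ⊤ := by
  by_contra h
  have hlt : ∫⁻ x in Ioc (0:ℝ) 1, ENNReal.ofReal (x ^ b) < ⊤ := lt_top_iff_ne_top.2 h
  have hmeas : AEStronglyMeasurable (fun x : ℝ => x ^ b) (volume.restrict (Ioc (0:ℝ) 1)) := by
    apply Measurable.aestronglyMeasurable; fun_prop
  have hnn : 0 ≤ᵐ[volume.restrict (Ioc (0:ℝ) 1)] fun x : ℝ => x ^ b :=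
    (ae_restrict_mem measurableSet_Ioc).mono fun x hx => Real.rpow_nonneg hx.1.le b
  have hint : IntegrableOn (fun x : ℝ => x ^ b) (Ioc 0 1) :=
    ⟨hmeas, (hasFiniteIntegral_iff_ofReal hnn).2 hlt⟩
  have h2 := hint.mono Ioo_subset_Ioc_self le_rfl
  rw [intervalIntegral.integrableOn_Ioo_rpow_iff zero_lt_one] at h2
  linarith

/-- integral of x^b over (t,1] for b < -1, upper bound -/
lemma lint_rpow_Ioc_one {b : ℝ} (hb : b < -1) {t : ℝ} (ht : 0 < t) (ht1 : t ≤ 1) :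
    ∫⁻ x in Ioc t 1, ENNReal.ofReal (x ^ b)
      ≤ ENNReal.ofReal (t ^ (b + 1) / (-(b + 1))) := by
  have h0 : (0:ℝ) ∉ uIcc t 1 := by
    rw [uIcc_of_le ht1]
    intro h0
    exact absurd h0.1 (not_le.2 ht)
  have hint : IntegrableOn (fun x : ℝ => x ^ b) (Ioc t 1) := by
    have := intervalIntegral.intervalIntegrable_rpow (μ := volume) (a := t) (b := 1) (r := b) (Or.inr h0)
    rw [intervalIntegrable_iff] at this
    simpa [uIoc_of_le ht1] using this
  have hnn : 0 ≤ᵐ[volume.restrict (Ioc t 1)] fun x : ℝ => x ^ b :=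
    (ae_restrict_mem measurableSet_Ioc).mono fun x hx =>
      Real.rpow_nonneg (le_of_lt (lt_of_lt_of_le ht hx.1.le)) b
  have hval : ∫ x in Ioc t 1, x ^ b = (1 - t ^ (b + 1)) / (b + 1) := by
    rw [← intervalIntegral.integral_of_le ht1, integral_rpow (Or.inr ⟨by linarith, h0⟩)]
    rw [Real.one_rpow]
  rw [← MeasureTheory.ofReal_integral_eq_lintegral_ofReal hint hnn, hval]
  apply ENNReal.ofReal_le_ofReal
  have hb1 : (0:ℝ) < -(b + 1) := by linarith
  have heq : (1 - t ^ (b + 1)) / (b + 1) = (t ^ (b + 1) - 1) / (-(b + 1)) := by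
    rw [div_neg, ← neg_div, neg_sub]
  rw [heq]
  gcongr
  linarith

/-- integral of exp(c x) over (0,t] for c > 0, upper bound -/
lemma lint_exp_Ioc {c : ℝ} (hc : 0 < c) {t : ℝ} (ht : 0 < t) :
    ∫⁻ x in Ioc 0 t, ENNReal.ofReal (Real.exp (c * x))
      ≤ ENNReal.ofReal (Real.exp (c * t) / c) := by
  have hcont : Continuous fun x : ℝ => Real.exp (c * x) :=
    Real.continuous_exp.comp (continuous_const.mul continuous_id)
  have hint : IntegrableOn (fun x : ℝ => Real.exp (c * x)) (Ioc (0:ℝ) t) volume :=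
    hcont.integrableOn_Ioc
  have hnn : 0 ≤ᵐ[volume.restrict (Ioc (0:ℝ) t)] fun x : ℝ => Real.exp (c * x) :=
    Filter.Eventually.of_forall fun x => (Real.exp_pos _).le
  have hval : ∫ x in Ioc (0:ℝ) t, Real.exp (c * x) = (Real.exp (c * t) - 1) / c := by
    rw [← intervalIntegral.integral_of_le ht.le]
    have := intervalIntegral.integral_comp_mul_left (a := 0) (b := t)
      (fun x => Real.exp x) (ne_of_gt hc)
    rw [this]
    rw [integral_exp]
    rw [mul_zero, Real.exp_zero, smul_eq_mul]
    ring
  rw [← MeasureTheory.ofReal_integral_eq_lintegral_ofReal hint hnn, hval]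
  apply ENNReal.ofReal_le_ofReal
  gcongr
  linarith [Real.exp_pos (c * t)]


lemma self_le_sinh {x : ℝ} (hx : 0 ≤ x) : x ≤ Real.sinh x := by
  rcases eq_or_lt_of_le hx with h | h
  · simp [← h]
  · exact (Real.self_lt_sinh_iff.2 h).le

lemma sinh_le_exp {x : ℝ} (hx : 0 ≤ x) : Real.sinh x ≤ Real.exp x := by
  rw [Real.sinh_eq]
  have h1 := Real.exp_pos (-x)
  have h2 := Real.exp_pos x
  linarith

lemma exp_quarter_le_sinh {x : ℝ} (hx : 1 ≤ x) : Real.exp x / 4 ≤ Real.sinh x := by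
  rw [Real.sinh_eq]
  have h1 : Real.exp (-x) ≤ Real.exp (-1) := Real.exp_le_exp.2 (by linarith)
  have h2 : Real.exp (-1) ≤ 1 := Real.exp_le_one_iff.2 (by norm_num)
  have h3 : (2:ℝ) ≤ Real.exp 1 := by
    have := Real.exp_one_gt_d9
    linarith
  have h4 : Real.exp 1 ≤ Real.exp x := Real.exp_le_exp.2 hx
  linarith

lemma sinh_le_three_mul {x : ℝ} (h0 : 0 < x) (h1 : x ≤ 1) : Real.sinh x ≤ 3 * x := by
  rcases le_or_gt x (1/2) with hx | hx
  · rw [Real.sinh_eq]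
    have ha : 1 - x ≤ Real.exp (-x) := by
      have := Real.add_one_le_exp (-x)
      linarith
    have hb : Real.exp x * Real.exp (-x) = 1 := by
      rw [← Real.exp_add]; simp
    have hc : 0 < Real.exp (-x) := Real.exp_pos _
    have h1x : 0 < 1 - x := by linarith
    have hd : Real.exp x ≤ (1 - x)⁻¹ := by
      have h5 : (Real.exp (-x))⁻¹ ≤ (1 - x)⁻¹ := by
        apply inv_anti₀ h1x ha
      rwa [Real.exp_neg, inv_inv] at h5
    have he : (1 - x)⁻¹ * (1 - x) = 1 := inv_mul_cancel₀ h1x.ne'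
    have hf : 0 ≤ (1 - x)⁻¹ := by positivity
    nlinarith [ha, hd, he, h1x, hc]
  · have hs1 : Real.sinh x ≤ Real.sinh 1 := Real.sinh_le_sinh.2 h1
    have hs2 : Real.sinh 1 ≤ Real.exp 1 / 2 := by
      rw [Real.sinh_eq]
      have := Real.exp_pos (-1)
      linarith
    have h3 : Real.exp 1 < 2.7182818286 := Real.exp_one_lt_d9
    nlinarith


lemma sinh_pos' {x : ℝ} (hx : 0 < x) : 0 < Real.sinh x :=
  lt_of_lt_of_le hx (self_le_sinh hx.le)

lemma sinh_le_half_exp (x : ℝ) : Real.sinh x ≤ Real.exp x / 2 := by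
  rw [Real.sinh_eq]
  have := Real.exp_pos (-x)
  linarith

lemma one_lt_sinh_one : 1 < Real.sinh 1 := by
  rw [Real.sinh_eq]
  have h1 := Real.exp_one_gt_d9
  have h2 : Real.exp (-1) ≤ 1 / 2 := by
    rw [Real.exp_neg]
    rw [inv_le_comm₀ (Real.exp_pos 1) (by norm_num)]
    linarith
  linarith

lemma sinh_two_le_four : Real.sinh 2 ≤ 4 := by
  have h1 : Real.sinh 2 ≤ Real.exp 2 / 2 := sinh_le_half_exp 2
  have h2 : Real.exp 2 = Real.exp 1 * Real.exp 1 := by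
    rw [← Real.exp_add]; norm_num
  have h3 := Real.exp_one_lt_d9
  have h4 := Real.exp_pos 1
  nlinarith

lemma sinh_one_le_two : Real.sinh 1 ≤ 2 := by
  have h1 : Real.sinh 1 ≤ Real.exp 1 / 2 := sinh_le_half_exp 1
  have h3 := Real.exp_one_lt_d9
  linarith

lemma min_rpow_le {y a c : ℝ} (ha : 0 < a) (h1 : a ≤ y) (h2 : y ≤ c) (A : ℝ) :
    min (a ^ A) (c ^ A) ≤ y ^ A := by
  rcases le_or_gt 0 A with hA | hA
  · exact le_trans (min_le_left _ _) (Real.rpow_le_rpow ha.le h1 hA)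
  · exact le_trans (min_le_right _ _)
      (Real.rpow_le_rpow_of_nonpos (lt_of_lt_of_le ha h1) h2 hA.le)

lemma prod_rpow_le {F G : ℝ≥0∞} {a b r s : ℝ} (hF : F ≤ ENNReal.ofReal a)
    (hG : G ≤ ENNReal.ofReal b) (hr : 0 ≤ r) (hs : 0 ≤ s) (ha : 0 ≤ a) (hb : 0 ≤ b) :
    F ^ r * G ^ s ≤ ENNReal.ofReal (a ^ r * b ^ s) := by
  calc F ^ r * G ^ s ≤ (ENNReal.ofReal a) ^ r * (ENNReal.ofReal b) ^ s :=
        mul_le_mul' (ENNReal.rpow_le_rpow hF hr) (ENNReal.rpow_le_rpow hG hs)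
    _ = ENNReal.ofReal (a ^ r * b ^ s) := by
        rw [ENNReal.ofReal_rpow_of_nonneg ha hr, ENNReal.ofReal_rpow_of_nonneg hb hs,
          ← ENNReal.ofReal_mul (Real.rpow_nonneg ha r)]

lemma le_prod_rpow {F G : ℝ≥0∞} {a b r s : ℝ} (hF : ENNReal.ofReal a ≤ F)
    (hG : ENNReal.ofReal b ≤ G) (hr : 0 ≤ r) (hs : 0 ≤ s) (ha : 0 ≤ a) (hb : 0 ≤ b) :
    ENNReal.ofReal (a ^ r * b ^ s) ≤ F ^ r * G ^ s := by
  calc ENNReal.ofReal (a ^ r * b ^ s)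
      = (ENNReal.ofReal a) ^ r * (ENNReal.ofReal b) ^ s := by
        rw [ENNReal.ofReal_rpow_of_nonneg ha hr, ENNReal.ofReal_rpow_of_nonneg hb hs,
          ← ENNReal.ofReal_mul (Real.rpow_nonneg ha r)]
    _ ≤ F ^ r * G ^ s :=
        mul_le_mul' (ENNReal.rpow_le_rpow hF hr) (ENNReal.rpow_le_rpow hG hs)

/-- tail bound for the sinh power integral, for negative exponent -/
lemma sinh_tail_bound {c : ℝ} (hc : c < 0) {t : ℝ} (ht : 1 ≤ t) :
    (∫⁻ ρ in Ioi t, ENNReal.ofReal (Real.sinh ρ ^ c))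
      ≤ ENNReal.ofReal ((4:ℝ) ^ (-c) / (-c) * Real.exp (c * t)) := by
  calc (∫⁻ ρ in Ioi t, ENNReal.ofReal (Real.sinh ρ ^ c))
      ≤ ∫⁻ ρ in Ioi t, ENNReal.ofReal ((4:ℝ) ^ (-c)) * ENNReal.ofReal (Real.exp (c * ρ)) := by
        apply setLIntegral_mono' measurableSet_Ioi
        intro ρ hρ
        rw [← ENNReal.ofReal_mul (Real.rpow_nonneg (by norm_num) _)]
        apply ENNReal.ofReal_le_ofReal
        have hρ1 : 1 ≤ ρ := le_trans ht (le_of_lt hρ)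
        have h1 : Real.exp ρ / 4 ≤ Real.sinh ρ := exp_quarter_le_sinh hρ1
        have h2 : Real.sinh ρ ^ c ≤ (Real.exp ρ / 4) ^ c :=
          Real.rpow_le_rpow_of_nonpos (by positivity) h1 hc.le
        calc Real.sinh ρ ^ c ≤ (Real.exp ρ / 4) ^ c := h2
          _ = (4:ℝ) ^ (-c) * Real.exp (c * ρ) := by
              rw [Real.div_rpow (Real.exp_nonneg _) (by norm_num),
                Real.rpow_neg (by norm_num : (0:ℝ) ≤ 4), ← Real.exp_mul, mul_comm ρ c,
                div_eq_mul_inv, mul_comm]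
    _ = ENNReal.ofReal ((4:ℝ) ^ (-c)) * ∫⁻ ρ in Ioi t, ENNReal.ofReal (Real.exp (c * ρ)) :=
        lintegral_const_mul' _ _ ENNReal.ofReal_ne_top
    _ = ENNReal.ofReal ((4:ℝ) ^ (-c)) * ENNReal.ofReal (Real.exp (c * t) / (-c)) := by
        rw [lint_exp_Ioi hc t]
    _ = ENNReal.ofReal ((4:ℝ) ^ (-c) / (-c) * Real.exp (c * t)) := by
        rw [← ENNReal.ofReal_mul (Real.rpow_nonneg (by norm_num) _)]
        congr 1
        ring

end MuckAux

set_option maxHeartbeats 1200000 in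
theorem muckenhoupt_hyperbolic_caseA (n : ℕ) (hn : 2 ≤ n) (p q p' α β : ℝ)
    (hp : 1 < p) (hpq : p ≤ q) (hp' : p' = p / (p - 1))
    (hα : 0 ≤ α + n) :
    (⨆ t ∈ Ioi (0:ℝ),
        (∫⁻ ρ in Ioi t, ENNReal.ofReal (Real.sinh ρ ^ (α + n - 1))) ^ (1/q) *
        (∫⁻ ρ in Ioc 0 t, ENNReal.ofReal (Real.sinh ρ ^ (β * (1 - p') + n - 1))) ^ (1/p')) < ⊤
      ↔ (α + n < 1 ∧ 0 < β * (1 - p') + n ∧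
          (α + n - 1) / q + (β * (1 - p') + n - 1) / p' ≤ 0) := by
  have hq1 : 1 < q := lt_of_lt_of_le hp hpq
  have hq0 : 0 < q := by linarith
  have hp'1 : 1 < p' := by
    rw [hp', lt_div_iff₀ (by linarith : (0:ℝ) < p - 1)]
    linarith
  have hp'0 : 0 < p' := by linarith
  have hiq : (0:ℝ) < 1 / q := by positivity
  have hip' : (0:ℝ) < 1 / p' := by positivity
  set A := α + (n:ℝ) - 1 with hA_def
  set B := β * (1 - p') + (n:ℝ) - 1 with hB_def
  have hA1 : -1 ≤ A := by rw [hA_def]; linarith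
  set F : ℝ → ℝ≥0∞ := fun t => ∫⁻ ρ in Ioi t, ENNReal.ofReal (Real.sinh ρ ^ A) with hF_def
  set G : ℝ → ℝ≥0∞ := fun t => ∫⁻ ρ in Ioc 0 t, ENNReal.ofReal (Real.sinh ρ ^ B) with hG_def
  have hmain : (⨆ t ∈ Ioi (0:ℝ), F t ^ (1/q) * G t ^ (1/p')) < ⊤
      ↔ (A < 0 ∧ -1 < B ∧ A / q + B / p' ≤ 0) := by
    constructor
    · intro hS
      have hterm : ∀ t : ℝ, 0 < t →
          F t ^ (1/q) * G t ^ (1/p') ≤ ⨆ t ∈ Ioi (0:ℝ), F t ^ (1/q) * G t ^ (1/p') :=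
        fun t ht => le_iSup₂ (f := fun t _ => F t ^ (1/q) * G t ^ (1/p')) t ht
      -- positivity of F 1 and G 1
      have hG1pos : G 1 ≠ 0 := by
        set c : ℝ := min ((1/2:ℝ) ^ B) ((2:ℝ) ^ B) with hc_def
        have hc : (0:ℝ) < c :=
          lt_min (Real.rpow_pos_of_pos (by norm_num) _) (Real.rpow_pos_of_pos (by norm_num) _)
        have hlow : ENNReal.ofReal c * ENNReal.ofReal (1/2) ≤ G 1 := by
          calc ENNReal.ofReal c * ENNReal.ofReal (1/2)
              = ∫⁻ _ρ in Ioc (1/2:ℝ) 1, ENNReal.ofReal c := by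
                rw [setLIntegral_const, Real.volume_Ioc]
                norm_num
            _ ≤ ∫⁻ ρ in Ioc (1/2:ℝ) 1, ENNReal.ofReal (Real.sinh ρ ^ B) := by
                apply setLIntegral_mono' measurableSet_Ioc
                intro ρ hρ
                apply ENNReal.ofReal_le_ofReal
                apply MuckAux.min_rpow_le (by norm_num : (0:ℝ) < 1/2)
                · exact le_trans hρ.1.le (MuckAux.self_le_sinh (by linarith [hρ.1]))
                · exact le_trans (Real.sinh_le_sinh.2 hρ.2) MuckAux.sinh_one_le_two
            _ ≤ G 1 := lintegral_mono_set (Ioc_subset_Ioc_left (by norm_num))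
        have hpos : (0:ℝ≥0∞) < ENNReal.ofReal c * ENNReal.ofReal (1/2) :=
          ENNReal.mul_pos (ne_of_gt (ENNReal.ofReal_pos.2 hc))
            (ne_of_gt (ENNReal.ofReal_pos.2 (by norm_num)))
        exact (lt_of_lt_of_le hpos hlow).ne'
      have hF1pos : F 1 ≠ 0 := by
        set c : ℝ := min ((1:ℝ) ^ A) ((4:ℝ) ^ A) with hc_def
        have hc : (0:ℝ) < c :=
          lt_min (Real.rpow_pos_of_pos (by norm_num) _) (Real.rpow_pos_of_pos (by norm_num) _)
        have hlow : ENNReal.ofReal c * ENNReal.ofReal 1 ≤ F 1 := by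
          calc ENNReal.ofReal c * ENNReal.ofReal 1
              = ∫⁻ _ρ in Ioc (1:ℝ) 2, ENNReal.ofReal c := by
                rw [setLIntegral_const, Real.volume_Ioc]
                norm_num
            _ ≤ ∫⁻ ρ in Ioc (1:ℝ) 2, ENNReal.ofReal (Real.sinh ρ ^ A) := by
                apply setLIntegral_mono' measurableSet_Ioc
                intro ρ hρ
                apply ENNReal.ofReal_le_ofReal
                apply MuckAux.min_rpow_le (by norm_num : (0:ℝ) < 1)
                · exact le_trans MuckAux.one_lt_sinh_one.le (Real.sinh_le_sinh.2 hρ.1.le)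
                · exact le_trans (Real.sinh_le_sinh.2 hρ.2) MuckAux.sinh_two_le_four
            _ ≤ F 1 := lintegral_mono_set Ioc_subset_Ioi_self
        have hpos : (0:ℝ≥0∞) < ENNReal.ofReal c * ENNReal.ofReal 1 :=
          ENNReal.mul_pos (ne_of_gt (ENNReal.ofReal_pos.2 hc))
            (ne_of_gt (ENNReal.ofReal_pos.2 (by norm_num)))
        exact (lt_of_lt_of_le hpos hlow).ne'
      have h1 : A < 0 := by
        by_contra hA0
        push_neg at hA0
        have hFtop : F 1 = ⊤ := by
          have hle : ∫⁻ _ρ in Ioi (1:ℝ), (1:ℝ≥0∞) ≤ F 1 := by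
            apply setLIntegral_mono' measurableSet_Ioi
            intro ρ hρ
            have hs : 1 ≤ Real.sinh ρ :=
              le_trans MuckAux.one_lt_sinh_one.le (Real.sinh_le_sinh.2 hρ.le)
            have hx : (1:ℝ) ≤ Real.sinh ρ ^ A := by
              calc (1:ℝ) = 1 ^ A := (Real.one_rpow A).symm
                _ ≤ Real.sinh ρ ^ A := Real.rpow_le_rpow zero_le_one hs hA0
            calc (1:ℝ≥0∞) = ENNReal.ofReal 1 := by simp
              _ ≤ ENNReal.ofReal (Real.sinh ρ ^ A) := ENNReal.ofReal_le_ofReal hx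
          rw [setLIntegral_one, Real.volume_Ioi] at hle
          exact top_le_iff.1 hle
        have hteq : F 1 ^ (1/q) * G 1 ^ (1/p') = ⊤ := by
          rw [hFtop, ENNReal.top_rpow_of_pos hiq]
          apply ENNReal.top_mul
          rw [Ne, ENNReal.rpow_eq_zero_iff]
          rintro (⟨hz, _⟩ | ⟨_, hz⟩)
          · exact hG1pos hz
          · linarith
        have := hterm 1 one_pos
        rw [hteq] at this
        exact hS.ne (top_le_iff.1 this)
      have h2 : -1 < B := by
        by_contra hB0
        push_neg at hB0
        have hBneg : B < 0 := lt_of_le_of_lt hB0 (by norm_num)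
        have hGtop : G 1 = ⊤ := by
          by_contra hG1
          have hcomp : ∫⁻ x in Ioc (0:ℝ) 1, ENNReal.ofReal (x ^ B)
              ≤ ENNReal.ofReal ((3:ℝ) ^ (-B)) * G 1 := by
            rw [hG_def]
            simp only
            rw [← lintegral_const_mul' _ _ ENNReal.ofReal_ne_top]
            apply setLIntegral_mono' measurableSet_Ioc
            intro x hx
            rw [← ENNReal.ofReal_mul (Real.rpow_nonneg (by norm_num) _)]
            apply ENNReal.ofReal_le_ofReal
            have hs3 : Real.sinh x ≤ 3 * x := MuckAux.sinh_le_three_mul hx.1 hx.2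
            have hsp : 0 < Real.sinh x := MuckAux.sinh_pos' hx.1
            have hr1 : (3 * x) ^ B ≤ Real.sinh x ^ B :=
              Real.rpow_le_rpow_of_nonpos hsp hs3 hBneg.le
            have hr2 : ((3:ℝ) * x) ^ B = 3 ^ B * x ^ B :=
              Real.mul_rpow (by norm_num) hx.1.le
            have hr3 : (3:ℝ) ^ (-B) * (3:ℝ) ^ B = 1 := by
              rw [← Real.rpow_add (by norm_num : (0:ℝ) < 3)]
              simp
            calc x ^ B = (3:ℝ) ^ (-B) * ((3:ℝ) ^ B * x ^ B) := by
                  rw [← mul_assoc, hr3, one_mul]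
              _ ≤ (3:ℝ) ^ (-B) * Real.sinh x ^ B := by
                  apply mul_le_mul_of_nonneg_left _ (Real.rpow_nonneg (by norm_num) _)
                  rw [← hr2]
                  exact hr1
          rw [MuckAux.lint_rpow_top hB0] at hcomp
          have hfin : ENNReal.ofReal ((3:ℝ) ^ (-B)) * G 1 < ⊤ :=
            ENNReal.mul_lt_top ENNReal.ofReal_lt_top (lt_top_iff_ne_top.2 hG1)
          exact absurd hcomp (not_le.2 hfin)
        have hteq : F 1 ^ (1/q) * G 1 ^ (1/p') = ⊤ := by
          rw [hGtop, ENNReal.top_rpow_of_pos hip']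
          apply ENNReal.mul_top
          rw [Ne, ENNReal.rpow_eq_zero_iff]
          rintro (⟨hz, _⟩ | ⟨_, hz⟩)
          · exact hF1pos hz
          · linarith
        have := hterm 1 one_pos
        rw [hteq] at this
        exact hS.ne (top_le_iff.1 this)
      have h3 : A / q + B / p' ≤ 0 := by
        by_contra hc
        push_neg at hc
        set ε := A / q + B / p' with hε_def
        have hεpos : 0 < ε := hc
        have hεpos' : 0 < A / q + B / p' := hεpos
        have hBp' : 0 < B / p' := by
          have h6 : A / q < 0 := div_neg_of_neg_of_pos h1 hq0
          linarith
        have hBpos : 0 < B := by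
          have h7 := mul_pos hBp' hp'0
          rwa [div_mul_cancel₀ _ (ne_of_gt hp'0)] at h7
        set c₀ : ℝ := Real.exp (A * (1/q) - B * (1/p')) / (4:ℝ) ^ (B * (1/p')) with hc₀_def
        have hc₀pos : 0 < c₀ :=
          div_pos (Real.exp_pos _) (Real.rpow_pos_of_pos (by norm_num) _)
        have hlow : ∀ t : ℝ, 2 ≤ t →
            ENNReal.ofReal (c₀ * Real.exp (ε * t)) ≤
              ⨆ t ∈ Ioi (0:ℝ), F t ^ (1/q) * G t ^ (1/p') := by
          intro t ht
          have ht0 : (0:ℝ) < t := by linarith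
          -- lower bound for F t
          have hFt : ENNReal.ofReal (Real.exp (A * (t+1))) ≤ F t := by
            calc ENNReal.ofReal (Real.exp (A * (t+1)))
                = ∫⁻ _ρ in Ioc t (t+1), ENNReal.ofReal (Real.exp (A * (t+1))) := by
                  rw [setLIntegral_const, Real.volume_Ioc]
                  norm_num
              _ ≤ ∫⁻ ρ in Ioc t (t+1), ENNReal.ofReal (Real.sinh ρ ^ A) := by
                  apply setLIntegral_mono' measurableSet_Ioc
                  intro ρ hρ
                  apply ENNReal.ofReal_le_ofReal
                  have hρ0 : 0 < ρ := lt_trans ht0 hρ.1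
                  have hs1 : Real.exp (A * (t+1)) ≤ Real.exp (A * ρ) := by
                    apply Real.exp_le_exp.2
                    exact mul_le_mul_of_nonpos_left hρ.2 h1.le
                  have hs2 : Real.exp (A * ρ) ≤ Real.sinh ρ ^ A := by
                    rw [mul_comm A ρ, Real.exp_mul]
                    exact Real.rpow_le_rpow_of_nonpos (MuckAux.sinh_pos' hρ0)
                      (MuckAux.sinh_le_exp hρ0.le) h1.le
                  linarith
              _ ≤ F t := lintegral_mono_set Ioc_subset_Ioi_self
          -- lower bound for G t
          have hGt : ENNReal.ofReal ((Real.exp (t-1) / 4) ^ B) ≤ G t := by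
            calc ENNReal.ofReal ((Real.exp (t-1) / 4) ^ B)
                = ∫⁻ _ρ in Ioc (t-1) t, ENNReal.ofReal ((Real.exp (t-1) / 4) ^ B) := by
                  rw [setLIntegral_const, Real.volume_Ioc]
                  norm_num
              _ ≤ ∫⁻ ρ in Ioc (t-1) t, ENNReal.ofReal (Real.sinh ρ ^ B) := by
                  apply setLIntegral_mono' measurableSet_Ioc
                  intro ρ hρ
                  apply ENNReal.ofReal_le_ofReal
                  have ht1 : (1:ℝ) ≤ t - 1 := by linarith
                  have hs1 : Real.exp (t-1) / 4 ≤ Real.sinh (t-1) :=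
                    MuckAux.exp_quarter_le_sinh ht1
                  have hs2 : Real.sinh (t-1) ≤ Real.sinh ρ := Real.sinh_le_sinh.2 hρ.1.le
                  exact Real.rpow_le_rpow (by positivity) (le_trans hs1 hs2) hBpos.le
              _ ≤ G t := lintegral_mono_set (Ioc_subset_Ioc_left (by linarith))
          have hstep := MuckAux.le_prod_rpow hFt hGt hiq.le hip'.le
            (Real.exp_nonneg _) (Real.rpow_nonneg (by positivity) _)
          have hreal : (Real.exp (A * (t+1))) ^ (1/q) * ((Real.exp (t-1) / 4) ^ B) ^ (1/p')
              = c₀ * Real.exp (ε * t) := by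
            rw [← Real.exp_mul, ← Real.rpow_mul (by positivity),
              Real.div_rpow (Real.exp_nonneg _) (by norm_num), ← Real.exp_mul,
              hc₀_def, hε_def]
            rw [div_mul_eq_mul_div, ← mul_div_assoc, ← Real.exp_add, ← Real.exp_add]
            congr 2
            ring
          rw [hreal] at hstep
          exact le_trans hstep (hterm t ht0)
        -- derive the contradiction
        set M := (⨆ t ∈ Ioi (0:ℝ), F t ^ (1/q) * G t ^ (1/p')).toReal with hM_def
        have hM0 : 0 ≤ M := ENNReal.toReal_nonneg
        have hMle : ∀ t : ℝ, 2 ≤ t → c₀ * Real.exp (ε * t) ≤ M := by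
          intro t ht
          exact (ENNReal.ofReal_le_iff_le_toReal hS.ne).1 (hlow t ht)
        set t₀ : ℝ := max 2 ((Real.log (M+1) - Real.log c₀) / ε + 1) with ht₀_def
        have ht₀2 : 2 ≤ t₀ := le_max_left _ _
        have ht₀' : (Real.log (M+1) - Real.log c₀) / ε + 1 ≤ t₀ := le_max_right _ _
        have hεt₀ : Real.log (M+1) - Real.log c₀ < ε * t₀ := by
          rw [← div_lt_iff₀' hεpos]
          calc (Real.log (M+1) - Real.log c₀) / ε
              < (Real.log (M+1) - Real.log c₀) / ε + 1 := by linarith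
            _ ≤ t₀ := ht₀'
        have hgt : M + 1 < c₀ * Real.exp (ε * t₀) := by
          have hexp : Real.exp (Real.log (M+1)) < Real.exp (Real.log c₀ + ε * t₀) := by
            apply Real.exp_lt_exp.2
            linarith
          rw [Real.exp_log (by linarith : (0:ℝ) < M + 1), Real.exp_add,
            Real.exp_log hc₀pos] at hexp
          exact hexp
        have := hMle t₀ ht₀2
        linarith
      exact ⟨h1, h2, h3⟩
    · rintro ⟨h1, h2, h3⟩
      have hnA : (0:ℝ) < -A := by linarith
      have hB1 : (0:ℝ) < B + 1 := by linarith
      have h3Bpos : (0:ℝ) < (3:ℝ) ^ B := Real.rpow_pos_of_pos (by norm_num) _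
      have hbase : (0:ℝ) ≤ (4:ℝ) ^ (-A) / (-A) :=
        le_of_lt (div_pos (Real.rpow_pos_of_pos (by norm_num) _) hnA)
      have hGc : (0:ℝ) ≤ (1 + 3 ^ B) / (B + 1) := le_of_lt (div_pos (by linarith) hB1)
      set δ : ℝ := q * (B + 1) / (2 * p') with hδ_def
      have hδpos : 0 < δ := div_pos (mul_pos hq0 hB1) (by linarith)
      set K1 : ℝ := (4:ℝ) ^ (-A) / (-A) * Real.exp (A * 1) with hK1_def
      have hK1pos : 0 < K1 :=
        mul_pos (div_pos (Real.rpow_pos_of_pos (by norm_num) _) hnA) (Real.exp_pos _)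
      have hδK : (0:ℝ) < 1 / δ + K1 := by
        have : (0:ℝ) < 1 / δ := by positivity
        linarith
      set η : ℝ := (-A) * p' / (2 * q) with hη_def
      have hηpos : 0 < η := div_pos (mul_pos hnA hp'0) (by linarith)
      set C1 : ℝ := (1 / δ + K1) ^ (1/q) * ((1 + 3 ^ B) / (B + 1)) ^ (1/p') with hC1_def
      set C2 : ℝ := ((4:ℝ) ^ (-A) / (-A)) ^ (1/q) * (1 / B) ^ (1/p') with hC2_def
      set C3 : ℝ := ((4:ℝ) ^ (-A) / (-A)) ^ (1/q) * (1 / η) ^ (1/p') with hC3_def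
      set C4 : ℝ := (1 + 3 ^ B) / (B + 1) + (4:ℝ) ^ (-B) / (-B) * Real.exp (B * 1) with hC4_def
      set C5 : ℝ := ((4:ℝ) ^ (-A) / (-A)) ^ (1/q) * C4 ^ (1/p') with hC5_def
      set Cmax : ℝ := max C1 (max C2 (max C3 C5)) with hCmax_def
      -- small-t bound for G
      have hGsmall : ∀ t : ℝ, 0 < t → t ≤ 1 →
          G t ≤ ENNReal.ofReal ((1 + 3 ^ B) / (B + 1) * t ^ (B + 1)) := by
        intro t ht ht1
        calc G t ≤ ∫⁻ ρ in Ioc 0 t, ENNReal.ofReal (1 + 3 ^ B) * ENNReal.ofReal (ρ ^ B) := by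
              rw [hG_def]
              simp only
              apply setLIntegral_mono' measurableSet_Ioc
              intro ρ hρ
              rw [← ENNReal.ofReal_mul (by linarith)]
              apply ENNReal.ofReal_le_ofReal
              have hρ1 : ρ ≤ 1 := le_trans hρ.2 ht1
              have hρB : (0:ℝ) ≤ ρ ^ B := Real.rpow_nonneg hρ.1.le _
              rcases le_or_gt 0 B with hB0 | hB0
              · have hs : Real.sinh ρ ^ B ≤ (3 * ρ) ^ B :=
                  Real.rpow_le_rpow (MuckAux.sinh_pos' hρ.1).le
                    (MuckAux.sinh_le_three_mul hρ.1 hρ1) hB0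
                have hs2 : ((3:ℝ) * ρ) ^ B = 3 ^ B * ρ ^ B :=
                  Real.mul_rpow (by norm_num) hρ.1.le
                calc Real.sinh ρ ^ B ≤ 3 ^ B * ρ ^ B := by rw [← hs2]; exact hs
                  _ ≤ (1 + 3 ^ B) * ρ ^ B :=
                    mul_le_mul_of_nonneg_right (by linarith) hρB
              · have hs : Real.sinh ρ ^ B ≤ ρ ^ B :=
                  Real.rpow_le_rpow_of_nonpos hρ.1 (MuckAux.self_le_sinh hρ.1.le) hB0.le
                calc Real.sinh ρ ^ B ≤ ρ ^ B := hs
                  _ = 1 * ρ ^ B := (one_mul _).symm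
                  _ ≤ (1 + 3 ^ B) * ρ ^ B :=
                    mul_le_mul_of_nonneg_right (by linarith) hρB
          _ = ENNReal.ofReal (1 + 3 ^ B) * ENNReal.ofReal (t ^ (B + 1) / (B + 1)) := by
              rw [lintegral_const_mul' _ _ ENNReal.ofReal_ne_top, MuckAux.lint_rpow_Ioc h2 ht]
          _ = ENNReal.ofReal ((1 + 3 ^ B) / (B + 1) * t ^ (B + 1)) := by
              rw [← ENNReal.ofReal_mul (by linarith)]
              congr 1
              ring
      -- small-t bound for F
      have hFsmall : ∀ t : ℝ, 0 < t → t ≤ 1 →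
          F t ≤ ENNReal.ofReal ((1 / δ + K1) * t ^ (-δ)) := by
        intro t ht ht1
        have hsplit : F t ≤ (∫⁻ ρ in Ioc t 1, ENNReal.ofReal (Real.sinh ρ ^ A))
            + ∫⁻ ρ in Ioi 1, ENNReal.ofReal (Real.sinh ρ ^ A) := by
          rw [hF_def]
          simp only
          refine le_trans (lintegral_mono_set ?_) (lintegral_union_le _ _ _)
          intro x hx
          rcases le_or_gt x 1 with h | h
          · exact Or.inl ⟨hx, h⟩
          · exact Or.inr h
        have hpart1 : (∫⁻ ρ in Ioc t 1, ENNReal.ofReal (Real.sinh ρ ^ A))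
            ≤ ENNReal.ofReal (t ^ (-δ) / δ) := by
          calc (∫⁻ ρ in Ioc t 1, ENNReal.ofReal (Real.sinh ρ ^ A))
              ≤ ∫⁻ ρ in Ioc t 1, ENNReal.ofReal (ρ ^ (-1 - δ)) := by
                apply setLIntegral_mono' measurableSet_Ioc
                intro ρ hρ
                have hρ0 : 0 < ρ := lt_trans ht hρ.1
                apply ENNReal.ofReal_le_ofReal
                calc Real.sinh ρ ^ A ≤ ρ ^ A :=
                      Real.rpow_le_rpow_of_nonpos hρ0 (MuckAux.self_le_sinh hρ0.le) h1.le
                  _ ≤ ρ ^ (-1 - δ) :=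
                      Real.rpow_le_rpow_of_exponent_ge hρ0 hρ.2 (by linarith)
            _ ≤ ENNReal.ofReal (t ^ (-1 - δ + 1) / (-(-1 - δ + 1))) :=
                MuckAux.lint_rpow_Ioc_one (by linarith) ht ht1
            _ = ENNReal.ofReal (t ^ (-δ) / δ) := by
                have he : (-1 - δ + 1) = -δ := by ring
                rw [he, neg_neg]
        have hpart2 : (∫⁻ ρ in Ioi (1:ℝ), ENNReal.ofReal (Real.sinh ρ ^ A))
            ≤ ENNReal.ofReal K1 := MuckAux.sinh_tail_bound h1 le_rfl
        have hone : (1:ℝ) ≤ t ^ (-δ) := by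
          have h5 := Real.rpow_le_rpow_of_exponent_ge ht ht1 (by linarith : -δ ≤ (0:ℝ))
          rwa [Real.rpow_zero] at h5
        calc F t ≤ ENNReal.ofReal (t ^ (-δ) / δ) + ENNReal.ofReal K1 :=
              le_trans hsplit (add_le_add hpart1 hpart2)
          _ = ENNReal.ofReal (t ^ (-δ) / δ + K1) :=
              (ENNReal.ofReal_add (by positivity) hK1pos.le).symm
          _ ≤ ENNReal.ofReal ((1 / δ + K1) * t ^ (-δ)) := by
              apply ENNReal.ofReal_le_ofReal
              have e1 : t ^ (-δ) / δ = t ^ (-δ) * (1 / δ) := by ring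
              nlinarith [mul_le_mul_of_nonneg_left hone hK1pos.le]
      -- the global bound
      have hbd : ∀ t : ℝ, t ∈ Ioi (0:ℝ) →
          F t ^ (1/q) * G t ^ (1/p') ≤ ENNReal.ofReal Cmax := by
        intro t ht
        rw [mem_Ioi] at ht
        rcases le_or_gt t 1 with ht1 | ht1
        · -- small t
          have hstep := MuckAux.prod_rpow_le (hFsmall t ht ht1) (hGsmall t ht ht1)
            hiq.le hip'.le (by positivity) (by positivity)
          refine le_trans hstep (ENNReal.ofReal_le_ofReal ?_)
          have e1 : ((1 / δ + K1) * t ^ (-δ)) ^ (1/q)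
              = (1 / δ + K1) ^ (1/q) * (t ^ (-δ)) ^ (1/q) :=
            Real.mul_rpow hδK.le (by positivity)
          have e2 : (t ^ (-δ)) ^ (1/q) = t ^ (-δ * (1/q)) := (Real.rpow_mul ht.le _ _).symm
          have e3 : ((1 + 3 ^ B) / (B + 1) * t ^ (B + 1)) ^ (1/p')
              = ((1 + 3 ^ B) / (B + 1)) ^ (1/p') * (t ^ (B + 1)) ^ (1/p') :=
            Real.mul_rpow hGc (by positivity)
          have e4 : (t ^ (B + 1)) ^ (1/p') = t ^ ((B + 1) * (1/p')) :=
            (Real.rpow_mul ht.le _ _).symm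
          have eexp : -δ * (1/q) + (B + 1) * (1/p') = (B + 1) / (2 * p') := by
            rw [hδ_def]
            field_simp
            ring
          have hC1nn : 0 ≤ C1 :=
            mul_nonneg (Real.rpow_nonneg hδK.le _) (Real.rpow_nonneg hGc _)
          calc ((1 / δ + K1) * t ^ (-δ)) ^ (1/q)
                * ((1 + 3 ^ B) / (B + 1) * t ^ (B + 1)) ^ (1/p')
              = C1 * (t ^ (-δ * (1/q)) * t ^ ((B + 1) * (1/p'))) := by
                rw [e1, e2, e3, e4, hC1_def]
                ring
            _ = C1 * t ^ (-δ * (1/q) + (B + 1) * (1/p')) := by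
                rw [Real.rpow_add ht]
            _ ≤ C1 * 1 := by
                apply mul_le_mul_of_nonneg_left _ hC1nn
                apply Real.rpow_le_one ht.le ht1
                rw [eexp]
                positivity
            _ = C1 := mul_one _
            _ ≤ Cmax := le_max_left _ _
        · -- large t
          have ht1' : (1:ℝ) ≤ t := ht1.le
          have hFt : F t ≤ ENNReal.ofReal ((4:ℝ) ^ (-A) / (-A) * Real.exp (A * t)) :=
            MuckAux.sinh_tail_bound h1 ht1'
          have hAt : A * t * (1/q) ≤ 0 := by
            have h5 : A * t ≤ 0 := by nlinarith
            have h6 : (0:ℝ) ≤ 1/q := hiq.le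
            exact mul_nonpos_of_nonpos_of_nonneg h5 h6
          have hbase' : (0:ℝ) ≤ (4:ℝ) ^ (-A) / (-A) * Real.exp (A * t) :=
            mul_nonneg hbase (Real.exp_nonneg _)
          have efac : ((4:ℝ) ^ (-A) / (-A) * Real.exp (A * t)) ^ (1/q)
              = ((4:ℝ) ^ (-A) / (-A)) ^ (1/q) * Real.exp (A * t * (1/q)) := by
            rw [Real.mul_rpow hbase (Real.exp_nonneg _), ← Real.exp_mul]
          rcases lt_trichotomy B 0 with hB0 | hB0 | hB0
          · -- B < 0
            have hGt : G t ≤ ENNReal.ofReal C4 := by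
              have hsplit : G t ≤ (∫⁻ ρ in Ioc 0 1, ENNReal.ofReal (Real.sinh ρ ^ B))
                  + ∫⁻ ρ in Ioi 1, ENNReal.ofReal (Real.sinh ρ ^ B) := by
                rw [hG_def]
                simp only
                refine le_trans (lintegral_mono_set ?_) (lintegral_union_le _ _ _)
                intro x hx
                rcases le_or_gt x 1 with h | h
                · exact Or.inl ⟨hx.1, h⟩
                · exact Or.inr h
              have hfirst : (∫⁻ ρ in Ioc (0:ℝ) 1, ENNReal.ofReal (Real.sinh ρ ^ B))
                  ≤ ENNReal.ofReal ((1 + 3 ^ B) / (B + 1)) := by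
                have h5 := hGsmall 1 one_pos le_rfl
                rw [Real.one_rpow, mul_one] at h5
                exact h5
              have hsecond : (∫⁻ ρ in Ioi (1:ℝ), ENNReal.ofReal (Real.sinh ρ ^ B))
                  ≤ ENNReal.ofReal ((4:ℝ) ^ (-B) / (-B) * Real.exp (B * 1)) :=
                MuckAux.sinh_tail_bound hB0 le_rfl
              calc G t ≤ _ + _ := hsplit
                _ ≤ ENNReal.ofReal ((1 + 3 ^ B) / (B + 1))
                    + ENNReal.ofReal ((4:ℝ) ^ (-B) / (-B) * Real.exp (B * 1)) :=
                  add_le_add hfirst hsecond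
                _ = ENNReal.ofReal C4 := by
                  rw [← ENNReal.ofReal_add hGc
                    (mul_nonneg (le_of_lt (div_pos (Real.rpow_pos_of_pos (by norm_num) _)
                      (by linarith))) (Real.exp_nonneg _))]
            have hC4nn : (0:ℝ) ≤ C4 := by
              have h5 : (0:ℝ) ≤ (4:ℝ) ^ (-B) / (-B) * Real.exp (B * 1) :=
                mul_nonneg (le_of_lt (div_pos (Real.rpow_pos_of_pos (by norm_num) _)
                  (by linarith))) (Real.exp_nonneg _)
              rw [hC4_def]
              linarith
            have hstep := MuckAux.prod_rpow_le hFt hGt hiq.le hip'.le hbase' hC4nn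
            refine le_trans hstep (ENNReal.ofReal_le_ofReal ?_)
            calc ((4:ℝ) ^ (-A) / (-A) * Real.exp (A * t)) ^ (1/q) * C4 ^ (1/p')
                = ((4:ℝ) ^ (-A) / (-A)) ^ (1/q) * Real.exp (A * t * (1/q)) * C4 ^ (1/p') := by
                  rw [efac]
              _ ≤ ((4:ℝ) ^ (-A) / (-A)) ^ (1/q) * 1 * C4 ^ (1/p') := by
                  apply mul_le_mul_of_nonneg_right _ (Real.rpow_nonneg hC4nn _)
                  exact mul_le_mul_of_nonneg_left (Real.exp_le_one_iff.2 hAt)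
                    (Real.rpow_nonneg hbase _)
              _ = C5 := by rw [mul_one, hC5_def]
              _ ≤ Cmax := le_trans (le_max_right _ _)
                  (le_trans (le_max_right _ _) (le_max_right _ _))
          · -- B = 0
            have hGt : G t ≤ ENNReal.ofReal t := by
              rw [hG_def]
              simp only [hB0, Real.rpow_zero, ENNReal.ofReal_one, setLIntegral_one,
                Real.volume_Ioc, sub_zero]
              exact le_rfl
            have hstep := MuckAux.prod_rpow_le hFt hGt hiq.le hip'.le hbase' ht.le
            refine le_trans hstep (ENNReal.ofReal_le_ofReal ?_)
            have htexp : t ≤ Real.exp (η * t) / η := by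
              rw [le_div_iff₀ hηpos]
              have h5 := Real.add_one_le_exp (η * t)
              nlinarith
            have ht5 : t ^ (1/p') ≤ (Real.exp (η * t) / η) ^ (1/p') :=
              Real.rpow_le_rpow ht.le htexp hip'.le
            have eexp2 : A * t * (1/q) + η * t * (1/p') = A * t / (2 * q) := by
              rw [hη_def]
              field_simp
              ring
            have hC3nn : (0:ℝ) ≤ ((4:ℝ) ^ (-A) / (-A)) ^ (1/q) * (1 / η) ^ (1/p') :=
              mul_nonneg (Real.rpow_nonneg hbase _) (Real.rpow_nonneg (by positivity) _)
            have hAt2 : A * t / (2 * q) ≤ 0 := by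
              apply div_nonpos_of_nonpos_of_nonneg (by nlinarith) (by linarith)
            calc ((4:ℝ) ^ (-A) / (-A) * Real.exp (A * t)) ^ (1/q) * t ^ (1/p')
                ≤ ((4:ℝ) ^ (-A) / (-A) * Real.exp (A * t)) ^ (1/q)
                    * (Real.exp (η * t) / η) ^ (1/p') := by
                  apply mul_le_mul_of_nonneg_left ht5 (Real.rpow_nonneg hbase' _)
              _ = (((4:ℝ) ^ (-A) / (-A)) ^ (1/q) * (1 / η) ^ (1/p'))
                    * (Real.exp (A * t * (1/q)) * Real.exp (η * t * (1/p'))) := by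
                  rw [efac, show Real.exp (η * t) / η = Real.exp (η * t) * (1 / η) by ring,
                    Real.mul_rpow (Real.exp_nonneg _) (by positivity), ← Real.exp_mul]
                  ring
              _ = C3 * Real.exp (A * t / (2 * q)) := by
                  rw [← Real.exp_add, eexp2, hC3_def]
              _ ≤ C3 * 1 := by
                  apply mul_le_mul_of_nonneg_left (Real.exp_le_one_iff.2 hAt2)
                  rw [hC3_def]
                  exact hC3nn
              _ = C3 := mul_one _
              _ ≤ Cmax := le_trans (le_max_left _ _)
                  (le_trans (le_max_right _ _) (le_max_right _ _))
          · -- B > 0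
            have hGt : G t ≤ ENNReal.ofReal (Real.exp (B * t) / B) := by
              calc G t ≤ ∫⁻ ρ in Ioc 0 t, ENNReal.ofReal (Real.exp (B * ρ)) := by
                    rw [hG_def]
                    simp only
                    apply setLIntegral_mono' measurableSet_Ioc
                    intro ρ hρ
                    apply ENNReal.ofReal_le_ofReal
                    have h5 : Real.sinh ρ ^ B ≤ (Real.exp ρ) ^ B :=
                      Real.rpow_le_rpow (MuckAux.sinh_pos' hρ.1).le
                        (MuckAux.sinh_le_exp hρ.1.le) hB0.le
                    rwa [← Real.exp_mul, mul_comm ρ B] at h5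
                _ ≤ ENNReal.ofReal (Real.exp (B * t) / B) :=
                    MuckAux.lint_exp_Ioc hB0 ht
            have hstep := MuckAux.prod_rpow_le hFt hGt hiq.le hip'.le hbase'
              (div_nonneg (Real.exp_nonneg _) hB0.le)
            refine le_trans hstep (ENNReal.ofReal_le_ofReal ?_)
            have eexp3 : A * t * (1/q) + B * t * (1/p') = t * (A / q + B / p') := by
              ring
            have hC2nn : (0:ℝ) ≤ ((4:ℝ) ^ (-A) / (-A)) ^ (1/q) * (1 / B) ^ (1/p') :=
              mul_nonneg (Real.rpow_nonneg hbase _) (Real.rpow_nonneg (by positivity) _)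
            have hnonpos : t * (A / q + B / p') ≤ 0 :=
              mul_nonpos_of_nonneg_of_nonpos ht.le h3
            calc ((4:ℝ) ^ (-A) / (-A) * Real.exp (A * t)) ^ (1/q)
                  * (Real.exp (B * t) / B) ^ (1/p')
                = (((4:ℝ) ^ (-A) / (-A)) ^ (1/q) * (1 / B) ^ (1/p'))
                    * (Real.exp (A * t * (1/q)) * Real.exp (B * t * (1/p'))) := by
                  rw [efac, show Real.exp (B * t) / B = Real.exp (B * t) * (1 / B) by ring,
                    Real.mul_rpow (Real.exp_nonneg _) (by positivity), ← Real.exp_mul]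
                  ring
              _ = C2 * Real.exp (t * (A / q + B / p')) := by
                  rw [← Real.exp_add, eexp3, hC2_def]
              _ ≤ C2 * 1 := by
                  apply mul_le_mul_of_nonneg_left (Real.exp_le_one_iff.2 hnonpos)
                  rw [hC2_def]
                  exact hC2nn
              _ = C2 := mul_one _
              _ ≤ Cmax := le_trans (le_max_left _ _) (le_max_right _ _)
      exact lt_of_le_of_lt (iSup₂_le hbd) ENNReal.ofReal_lt_top
  constructor
  · intro hS
    obtain ⟨c1, c2, c3⟩ := hmain.1 hS
    refine ⟨by rw [hA_def] at c1; linarith, by rw [hB_def] at c2; linarith, c3⟩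
  · rintro ⟨c1, c2, c3⟩
    exact hmain.2 ⟨by rw [hA_def]; linarith, by rw [hB_def]; linarith, c3⟩
end
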